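/- arXiv:2507.00562 — 4 statements merged into one kernel-verified Lean document; each statement's English description precedes it below -/
import Mathlib

section
/- For any trap configuration, the embedded walk (ξ_l) on the trap locations is a Markov chain with (sub-)transition probabilities: for i ≥ 1, ℙ(ξ_{l+1} = x_{i−1} | ξ_l = x_i) = (2/3)·(1/(2|I_i|)); for i ≥ 0, ℙ(ξ_{l+1} = x_{i+1} | ξ_l = x_i) = (2/3)·(2^{𝟙(i=0)}/(2|I_{i+1}|)); for i ≥ 0, ℙ(ξ_{l+1} = x_i | ξ_l = x_i) = (2/3)·(1 − 1/(2|I_{i+𝟙(i=0)}|) − 1/(2|I_{i+1}|)); and ℙ(ξ_{l+1} = x_j | ξ_l = x_i) = 0 for all other trap locations x_j. In particular the transition probabilities to trap locations sum to 2/3, the survival probability at each visited trap. -/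
open MeasureTheory ENNReal Set

noncomputable section

/-- A trap configuration: a trap at the origin and infinitely many traps. -/
def IsTrapConfig (ω : ℕ → Bool) : Prop :=
  ω 0 = true ∧ {x : ℕ | ω x = true}.Infinite

/-- The location `x_i` of the `i`-th trap (traps enumerated in increasing order, `x_0 = 0`). -/
def trapLoc (ω : ℕ → Bool) (i : ℕ) : ℕ :=
  Nat.nth (fun x => ω x = true) i

/-- The length `|I_i| = x_i - x_{i-1}` of the `i`-th interval between traps, for `i ≥ 1`. -/
def gapLen (ω : ℕ → Bool) (i : ℕ) : ℕ :=
  trapLoc ω i - trapLoc ω (i - 1)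

/-- The landscape satisfies the quadratic recursion `|I_{j+1}| = c * |I_j|^2` for all `j ≥ 1`. -/
def QuadRec (ω : ℕ → Bool) (c : ℝ) : Prop :=
  ∀ j : ℕ, 1 ≤ j → (gapLen ω (j + 1) : ℝ) = c * (gapLen ω j : ℝ) ^ 2

/-- One-step transition probabilities of the trapped random walk on `ℕ ∪ {*}`,
where `none` plays the role of the absorbing cemetery state `*`. -/
def transProb (ω : ℕ → Bool) : Option ℕ → Option ℕ → ℝ
  | none, none => 1
  | none, some _ => 0
  | some x, none => if ω x = true then 1 / 3 else 0
  | some x, some y =>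
    if x = 0 then (if y = 1 then 2 / 3 else 0)
    else if ω x = true then (if y = x - 1 ∨ y = x + 1 then 1 / 3 else 0)
    else (if y = x - 1 ∨ y = x + 1 then 1 / 2 else 0)

/-- `S` is (a version of) the trapped random walk in the landscape `ω` under the probability
measure `P`: it starts at `0` and is a Markov chain with transition probabilities `transProb ω`. -/
def IsTrappedRW (ω : ℕ → Bool) {Ω : Type*} [MeasurableSpace Ω]
    (P : Measure Ω) (S : ℕ → Ω → Option ℕ) : Prop :=
  IsProbabilityMeasure P ∧
  (∀ (n : ℕ) (y : Option ℕ), MeasurableSet {a | S n a = y}) ∧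
  P {a | S 0 a = some 0} = 1 ∧
  ∀ (n : ℕ) (path : ℕ → Option ℕ) (y : Option ℕ),
    P {a | (∀ i ≤ n, S i a = path i) ∧ S (n + 1) a = y}
      = ENNReal.ofReal (transProb ω (path n) y) * P {a | ∀ i ≤ n, S i a = path i}

/-- The survival time `τ = inf {k : S k = *}`, valued in `ℕ∞`. -/
def survivalTime {Ω : Type*} (S : ℕ → Ω → Option ℕ) (a : Ω) : ℕ∞ :=
  sInf {t : ℕ∞ | ∃ k : ℕ, (k : ℕ∞) = t ∧ S k a = none}

/-- The expected survival time `𝔼(τ)`, valued in `ℝ≥0∞`. -/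
def expSurvival {Ω : Type*} [MeasurableSpace Ω] (P : Measure Ω)
    (S : ℕ → Ω → Option ℕ) : ℝ≥0∞ :=
  ∫⁻ a, ((survivalTime S a : ℕ∞) : ℝ≥0∞) ∂P

/-- Two landscapes are similar in the tail. -/
def SimilarInTail (ω₁ ω₂ : ℕ → Bool) : Prop :=
  ∃ p₁ p₂ : ℕ, ∀ x : ℕ, ω₁ (p₁ + x) = ω₂ (p₂ + x)

/-- Indicator that a state is a trap site. -/
def trapInd (ω : ℕ → Bool) : Option ℕ → Bool
  | none => false
  | some x => ω x

/-- Number of visits to the trap set at times `1, …, k`. -/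
def visitCount {Ω : Type*} (ω : ℕ → Bool) (S : ℕ → Ω → Option ℕ) (a : Ω) (k : ℕ) : ℕ :=
  ((Finset.Icc 1 k).filter fun j => trapInd ω (S j a) = true).card

/-- `N`, the total number of visits to the trap set at times `≥ 1` (before absorption). -/
def numVisits {Ω : Type*} (ω : ℕ → Bool) (S : ℕ → Ω → Option ℕ) (a : Ω) : ℕ∞ :=
  ⨆ k : ℕ, (visitCount ω S a k : ℕ∞)

/-- The hitting times `𝒯_i`: `𝒯_0 = 0` and `𝒯_i = inf {k ≥ 1 : #visits to D in [1,k] = i}`. -/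
def hitTime {Ω : Type*} (ω : ℕ → Bool) (S : ℕ → Ω → Option ℕ) (i : ℕ) (a : Ω) : ℕ∞ :=
  if i = 0 then 0
  else sInf {t : ℕ∞ | ∃ k : ℕ, (k : ℕ∞) = t ∧ 1 ≤ k ∧ visitCount ω S a k = i}

/-- The inter-arrival times `Y_i = 𝒯_i - 𝒯_{i-1}` for `1 ≤ i ≤ N`, and `Y_i = 0` for `i > N`. -/
def interArrival {Ω : Type*} (ω : ℕ → Bool) (S : ℕ → Ω → Option ℕ) (i : ℕ) (a : Ω) : ℕ∞ :=
  if 1 ≤ i ∧ (i : ℕ∞) ≤ numVisits ω S a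
  then hitTime ω S i a - hitTime ω S (i - 1) a else 0

/-- `Y_i` viewed as an `ℝ≥0∞`-valued random variable. -/
def Yfun {Ω : Type*} (ω : ℕ → Bool) (S : ℕ → Ω → Option ℕ) (i : ℕ) (a : Ω) : ℝ≥0∞ :=
  ((interArrival ω S i a : ℕ∞) : ℝ≥0∞)

/-- The embedded walk `ξ_j = S_{𝒯_j}` for `j ≤ N`, and `ξ_j = *` for `j > N`. -/
def embWalk {Ω : Type*} (ω : ℕ → Bool) (S : ℕ → Ω → Option ℕ) (j : ℕ) (a : Ω) : Option ℕ :=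
  if (j : ℕ∞) ≤ numVisits ω S a then S (hitTime ω S j a).toNat a else none

/-- Sign of the increment of the embedded walk (an arbitrary junk value `2` is produced
if one of the two states is the cemetery state). -/
def stepSign : Option ℕ → Option ℕ → ℤ
  | some x, some y => Int.sign ((y : ℤ) - (x : ℤ))
  | _, _ => 2

/-- `κ` belongs to `𝒦`: entries `κ_1, …, κ_{i-1}` lie in `{-1,0,1}` and all partial sums
are nonnegative. -/
def InKappaSet (i : ℕ) (κ : ℕ → ℤ) : Prop :=
  (∀ j : ℕ, 1 ≤ j → j ≤ i - 1 → κ j = -1 ∨ κ j = 0 ∨ κ j = 1) ∧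
  ∀ m : ℕ, 1 ≤ m → m ≤ i - 1 → 0 ≤ ∑ n ∈ Finset.Icc 1 m, κ n

/-- The event `A_κ`: the walk visits at least `i-1` traps and the embedded walk moves
according to `κ` (for `i = 1` this is the whole sample space). -/
def eventA {Ω : Type*} (ω : ℕ → Bool) (S : ℕ → Ω → Option ℕ) (i : ℕ) (κ : ℕ → ℤ) : Set Ω :=
  {a | ((i - 1 : ℕ) : ℕ∞) ≤ numVisits ω S a ∧
    ∀ j : ℕ, 1 ≤ j → j ≤ i - 1 →
      stepSign (embWalk ω S (j - 1) a) (embWalk ω S j a) = κ j}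

/-- The event `A_κ⁺ = A_κ ∩ {S_{𝒯_{i-1}+1} = S_{𝒯_{i-1}} + 1}` (the whole sample space
for `i = 1`). -/
def eventAplus {Ω : Type*} (ω : ℕ → Bool) (S : ℕ → Ω → Option ℕ) (i : ℕ) (κ : ℕ → ℤ) :
    Set Ω :=
  if i = 1 then Set.univ
  else eventA ω S i κ ∩
    {a | ∃ x : ℕ, S (hitTime ω S (i - 1) a).toNat a = some x ∧
      S ((hitTime ω S (i - 1) a).toNat + 1) a = some (x + 1)}

/-- Conditional expectation `𝔼(f | A)` of an `ℝ≥0∞`-valued function given an event `A`. -/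
def condExpOn {Ω : Type*} [MeasurableSpace Ω] (P : Measure Ω) (A : Set Ω)
    (f : Ω → ℝ≥0∞) : ℝ≥0∞ :=
  (∫⁻ a in A, f a ∂P) / P A

/-- Conditional probability `ℙ(A | B)`. -/
def condProb {Ω : Type*} [MeasurableSpace Ω] (P : Measure Ω) (A B : Set Ω) : ℝ≥0∞ :=
  P (A ∩ B) / P B

/-- Crossing times between `b` and `b+1`, shifted by one: `crossTime S b 0 = l_{-1} = 0`,
`crossTime S b (n+1) = l_n` where `l_0 = inf {t : S t = b}` and `l_i` alternately hits
`b+1` and `b`. -/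
def crossTime {Ω : Type*} (S : ℕ → Ω → Option ℕ) (b : ℕ) : ℕ → Ω → ℕ∞
  | 0, _ => 0
  | 1, a => sInf {t : ℕ∞ | ∃ k : ℕ, (k : ℕ∞) = t ∧ S k a = some b}
  | n + 2, a =>
    if crossTime S b (n + 1) a = ⊤ then ⊤
    else
      sInf {t : ℕ∞ | ∃ k : ℕ, (k : ℕ∞) = t ∧ crossTime S b (n + 1) a ≤ (k : ℕ∞) ∧
        S k a = some (if S (crossTime S b (n + 1) a).toNat a = some b then b + 1 else b)}

/-- `T_n = τ ∧ l_n - τ ∧ l_{n-1}` (with the index shift `l_n = crossTime S b (n+1)`). -/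
def crossDur {Ω : Type*} (S : ℕ → Ω → Option ℕ) (b : ℕ) (n : ℕ) (a : Ω) : ℕ∞ :=
  min (survivalTime S a) (crossTime S b (n + 1) a)
    - min (survivalTime S a) (crossTime S b n a)

/-- `ℰ_0 = 𝔼[T_0]`. -/
def cE0 {Ω : Type*} [MeasurableSpace Ω] (P : Measure Ω) (S : ℕ → Ω → Option ℕ)
    (b : ℕ) : ℝ≥0∞ :=
  ∫⁻ a, ((crossDur S b 0 a : ℕ∞) : ℝ≥0∞) ∂P

/-- `𝒫_0 = ℙ(l_0 < ∞)`. -/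
def cP0 {Ω : Type*} [MeasurableSpace Ω] (P : Measure Ω) (S : ℕ → Ω → Option ℕ)
    (b : ℕ) : ℝ≥0∞ :=
  P {a | crossTime S b 1 a ≠ ⊤}

/-- `ℰ₊ = 𝔼[T_2 | l_1 < ∞]`. -/
def cEplus {Ω : Type*} [MeasurableSpace Ω] (P : Measure Ω) (S : ℕ → Ω → Option ℕ)
    (b : ℕ) : ℝ≥0∞ :=
  condExpOn P {a | crossTime S b 2 a ≠ ⊤} (fun a => ((crossDur S b 2 a : ℕ∞) : ℝ≥0∞))

/-- `ℰ₋ = 𝔼[T_3 | l_2 < ∞]`. -/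
def cEminus {Ω : Type*} [MeasurableSpace Ω] (P : Measure Ω) (S : ℕ → Ω → Option ℕ)
    (b : ℕ) : ℝ≥0∞ :=
  condExpOn P {a | crossTime S b 3 a ≠ ⊤} (fun a => ((crossDur S b 3 a : ℕ∞) : ℝ≥0∞))

/-- `𝒫₊ = ℙ(l_2 < ∞ | l_1 < ∞)`. -/
def cPplus {Ω : Type*} [MeasurableSpace Ω] (P : Measure Ω) (S : ℕ → Ω → Option ℕ)
    (b : ℕ) : ℝ≥0∞ :=
  P {a | crossTime S b 3 a ≠ ⊤} / P {a | crossTime S b 2 a ≠ ⊤}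

/-- `𝒫₋ = ℙ(l_3 < ∞ | l_2 < ∞)`. -/
def cPminus {Ω : Type*} [MeasurableSpace Ω] (P : Measure Ω) (S : ℕ → Ω → Option ℕ)
    (b : ℕ) : ℝ≥0∞ :=
  P {a | crossTime S b 4 a ≠ ⊤} / P {a | crossTime S b 3 a ≠ ⊤}

/-- `ω₂` is obtained from `ω₁` by lengthening the `k`-th interval by one site. -/
def IsLengthened (ω₁ ω₂ : ℕ → Bool) (k : ℕ) : Prop :=
  (∀ x : ℕ, x ≤ trapLoc ω₁ (k - 1) → ω₂ x = ω₁ x) ∧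
  ω₂ (trapLoc ω₁ (k - 1) + 1) = false ∧
  ∀ x : ℕ, trapLoc ω₁ (k - 1) + 1 < x → ω₂ x = ω₁ (x - 1)

end


namespace Emb
open scoped Classical
open ENNReal

noncomputable def wt (ω : ℕ → Bool) (x y : Option ℕ) : ℝ≥0∞ := ENNReal.ofReal (transProb ω x y)

lemma wt_none_some (ω : ℕ → Bool) (y : ℕ) : wt ω none (some y) = 0 := by
  simp [wt, transProb]

lemma wt_nontrap (ω : ℕ → Bool) {y : ℕ} (hy : ω y = false) (hy0 : y ≠ 0) (u : ℕ) :
    wt ω (some y) (some u) = if u = y - 1 ∨ u = y + 1 then ENNReal.ofReal (1/2) else 0 := by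
  simp only [wt, transProb, hy0, if_neg, hy]
  split_ifs <;> simp_all

lemma wt_trap (ω : ℕ → Bool) {y : ℕ} (hy : ω y = true) (hy0 : y ≠ 0) (u : ℕ) :
    wt ω (some y) (some u) = if u = y - 1 ∨ u = y + 1 then ENNReal.ofReal (1/3) else 0 := by
  simp only [wt, transProb, hy0, if_neg, hy]
  split_ifs <;> simp_all

lemma wt_zero (ω : ℕ → Bool) (u : ℕ) :
    wt ω (some 0) (some u) = if u = 1 then ENNReal.ofReal (2/3) else 0 := by
  simp only [wt, transProb, if_pos rfl]
  split_ifs <;> simp_all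

noncomputable def extN (m : ℕ) (v : Fin (m+1) → ℕ) : ℕ → ℕ :=
  fun n => if h : n < m+1 then v ⟨n, h⟩ else 0

noncomputable def pw (ω : ℕ → Bool) (m : ℕ) (u : ℕ → ℕ) : ℝ≥0∞ :=
  ∏ t ∈ Finset.range m, wt ω (some (u t)) (some (u (t+1)))

noncomputable def Hsum (ω : ℕ → Bool) (z : ℕ) (d : ℕ) (y : ℕ) : ℝ≥0∞ :=
  ∑' v : Fin (d+1) → ℕ,
    if extN d v 0 = y ∧ extN d v d = z ∧ (∀ t < d, ω (extN d v t) = false)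
    then pw ω d (extN d v) else 0

lemma extN_eq {m : ℕ} (v : Fin (m+1) → ℕ) {n : ℕ} (h : n < m + 1) :
    extN m v n = v ⟨n, h⟩ := dif_pos h

lemma extN_cons_zero {d : ℕ} (y : ℕ) (v : Fin (d+1) → ℕ) :
    extN (d+1) (Fin.cons y v) 0 = y := by
  rw [extN_eq _ (by omega)]
  exact Fin.cons_zero _ _

lemma extN_cons_succ {d : ℕ} (y : ℕ) (v : Fin (d+1) → ℕ) (t : ℕ) :
    extN (d+1) (Fin.cons y v) (t+1) = extN d v t := by
  unfold extN
  by_cases h : t < d + 1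
  · rw [dif_pos (by omega : t + 1 < d + 2), dif_pos h]
    exact Fin.cons_succ (α := fun _ => ℕ) y v ⟨t, h⟩
  · rw [dif_neg (by omega), dif_neg h]

lemma pw_cons (ω : ℕ → Bool) {d : ℕ} (y : ℕ) (v : Fin (d+1) → ℕ) :
    pw ω (d+1) (extN (d+1) (Fin.cons y v))
      = wt ω (some y) (some (extN d v 0)) * pw ω d (extN d v) := by
  unfold pw
  rw [Finset.prod_range_succ']
  rw [extN_cons_zero, mul_comm]
  congr 1
  · congr 1
    funext t
    rw [extN_cons_succ, extN_cons_succ]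

lemma Hsum_zero (ω : ℕ → Bool) (z y : ℕ) :
    Hsum ω z 0 y = if y = z then 1 else 0 := by
  unfold Hsum
  rw [← (Equiv.funUnique (Fin 1) ℕ).symm.tsum_eq]
  have key : ∀ n : ℕ,
      (if extN 0 ((Equiv.funUnique (Fin 1) ℕ).symm n) 0 = y ∧
          extN 0 ((Equiv.funUnique (Fin 1) ℕ).symm n) 0 = z ∧
          (∀ t < 0, ω (extN 0 ((Equiv.funUnique (Fin 1) ℕ).symm n) t) = false)
        then pw ω 0 (extN 0 ((Equiv.funUnique (Fin 1) ℕ).symm n)) else 0)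
      = if n = y ∧ n = z then 1 else 0 := by
    intro n
    have hv : ∀ k, k < 1 → extN 0 ((Equiv.funUnique (Fin 1) ℕ).symm n) k = n := by
      intro k hk; rw [extN_eq _ hk]; rfl
    simp only [pw, Finset.prod_range_zero]
    rw [hv 0 Nat.one_pos, if_congr (iff_of_eq rfl) rfl rfl]
    simp [hv 0 Nat.one_pos]
  rw [tsum_congr key]
  by_cases hyz : y = z
  · subst hyz
    rw [if_pos rfl]
    have : ∀ n : ℕ, (if n = y ∧ n = y then (1:ℝ≥0∞) else 0) = if n = y then 1 else 0 := by
      intro n; by_cases h : n = y <;> simp [h]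
    rw [tsum_congr this, tsum_ite_eq]
  · rw [if_neg hyz]
    apply ENNReal.tsum_eq_zero.2
    intro n
    by_cases h : n = y
    · subst h; simp [hyz]
    · simp [h]

end Emb
namespace Emb
open scoped Classical
open ENNReal

example (d : ℕ) (p : ℕ × (Fin (d+1) → ℕ)) :
    (Fin.consEquiv (fun _ : Fin (d+2) => ℕ)) p = Fin.cons p.1 p.2 := rfl

lemma collapse_sum (ω : ℕ → Bool) (z : ℕ) (d : ℕ) (x : ℕ) :
    (∑' y' : ℕ, wt ω (some x) (some y') * Hsum ω z d y')
        = ∑' v : Fin (d+1) → ℕ,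
            (if extN d v d = z ∧ (∀ t < d, ω (extN d v t) = false)
             then wt ω (some x) (some (extN d v 0)) * pw ω d (extN d v) else 0) := by
      unfold Hsum
      have step1 : ∀ (a : ℝ≥0∞) (g : (Fin (d+1) → ℕ) → ℝ≥0∞),
          a * (∑' v, g v) = ∑' v, a * g v := fun a g => (ENNReal.tsum_mul_left).symm
      rw [tsum_congr (fun y' => step1 _ _), ENNReal.tsum_comm]
      apply tsum_congr; intro v
      have key : ∀ y' : ℕ, wt ω (some x) (some y') *
            (if extN d v 0 = y' ∧ extN d v d = z ∧ (∀ t < d, ω (extN d v t) = false)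
             then pw ω d (extN d v) else 0)
          = if y' = extN d v 0 then
              (if extN d v d = z ∧ (∀ t < d, ω (extN d v t) = false)
               then wt ω (some x) (some (extN d v 0)) * pw ω d (extN d v) else 0) else 0 := by
        intro y'
        by_cases h1 : y' = extN d v 0
        · subst h1
          rw [if_pos rfl]
          by_cases h2 : extN d v d = z ∧ (∀ t < d, ω (extN d v t) = false)
          · rw [if_pos ⟨rfl, h2⟩, if_pos h2]
          · rw [if_neg (fun hh => h2 hh.2), if_neg h2, mul_zero]
        · rw [if_neg h1, if_neg (fun hh => h1 hh.1.symm), mul_zero]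
      rw [tsum_congr key, tsum_ite_eq]

lemma Hsum_succ (ω : ℕ → Bool) (z : ℕ) (d y : ℕ) :
    Hsum ω z (d+1) y = if ω y = true then 0
      else ∑' y' : ℕ, wt ω (some y) (some y') * Hsum ω z d y' := by
  by_cases hy : ω y = true
  · rw [if_pos hy]
    apply ENNReal.tsum_eq_zero.2
    intro v
    split_ifs with h
    · exfalso
      obtain ⟨h0, _, hall⟩ := h
      have h1 := hall 0 (by omega)
      rw [h0, hy] at h1
      exact Bool.true_eq_false.mp h1
    · rfl
  · rw [if_neg hy]
    rw [eq_comm]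
    rw [collapse_sum]
    unfold Hsum
    rw [← Equiv.tsum_eq (Fin.consEquiv (fun _ : Fin (d+2) => ℕ))]
    have hce : ∀ c : ℕ × (Fin (d+1) → ℕ), (Fin.consEquiv (fun _ : Fin (d+2) => ℕ)) c
        = Fin.cons c.1 c.2 := fun _ => rfl
    simp only [hce]
    rw [ENNReal.tsum_prod']
    rw [tsum_eq_single y (by
      intro y₀ hy₀
      apply ENNReal.tsum_eq_zero.2
      intro v
      rw [if_neg]
      rintro ⟨h0, -, -⟩
      rw [extN_cons_zero] at h0
      exact hy₀ h0)]
    apply tsum_congr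
    intro v
    by_cases h2 : extN d v d = z ∧ (∀ t < d, ω (extN d v t) = false)
    · rw [if_pos h2, if_pos, pw_cons]
      refine ⟨extN_cons_zero y v, ?_, ?_⟩
      · rw [extN_cons_succ]; exact h2.1
      · intro t ht
        match t with
        | 0 => rw [extN_cons_zero]; exact Bool.not_eq_true _ |>.mp hy
        | (t'+1) => rw [extN_cons_succ]; exact h2.2 t' (by omega)
    · rw [if_neg h2, if_neg]
      rintro ⟨-, hz2, hall⟩
      apply h2
      constructor
      · rw [extN_cons_succ] at hz2; exact hz2
      · intro t ht
        have := hall (t+1) (by omega)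
        rw [extN_cons_succ] at this; exact this

end Emb
namespace Emb
open scoped Classical
open ENNReal

noncomputable def Rser (ω : ℕ → Bool) (z y : ℕ) : ℝ≥0∞ := ∑' d : ℕ, Hsum ω z (d+1) y

noncomputable def Rhat (ω : ℕ → Bool) (z u : ℕ) : ℝ≥0∞ :=
  (if u = z then 1 else 0) + Rser ω z u

lemma Rser_trap (ω : ℕ → Bool) (z : ℕ) {y : ℕ} (hy : ω y = true) : Rser ω z y = 0 := by
  apply ENNReal.tsum_eq_zero.2
  intro d
  rw [Hsum_succ, if_pos hy]

lemma Rhat_trap (ω : ℕ → Bool) (z : ℕ) {y : ℕ} (hy : ω y = true) :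
    Rhat ω z y = if y = z then 1 else 0 := by
  rw [Rhat, Rser_trap ω z hy, add_zero]

lemma tsum_Hsum (ω : ℕ → Bool) (z y : ℕ) : (∑' d : ℕ, Hsum ω z d y) = Rhat ω z y := by
  rw [tsum_eq_zero_add' ENNReal.summable, Hsum_zero, Rhat, Rser]

lemma Rser_rec (ω : ℕ → Bool) (z : ℕ) {y : ℕ} (hy : ω y = false) :
    Rser ω z y = ∑' y' : ℕ, wt ω (some y) (some y') * Rhat ω z y' := by
  unfold Rser
  have h1 : ∀ d : ℕ, Hsum ω z (d+1) y = ∑' y' : ℕ, wt ω (some y) (some y') * Hsum ω z d y' := by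
    intro d
    rw [Hsum_succ, if_neg (by simp [hy])]
  rw [tsum_congr h1, ENNReal.tsum_comm]
  apply tsum_congr
  intro y'
  rw [ENNReal.tsum_mul_left, tsum_Hsum]

lemma tsum_pair (f : ℕ → ℝ≥0∞) (a b : ℕ) (hab : a ≠ b)
    (h : ∀ c, c ≠ a → c ≠ b → f c = 0) : ∑' c, f c = f a + f b := by
  rw [tsum_eq_sum (s := {a, b}) (by intro c hc; simp at hc; exact h c hc.1 hc.2)]
  exact Finset.sum_pair hab

lemma nontrap_ne_zero {ω : ℕ → Bool} (hω0 : ω 0 = true) {y : ℕ} (hy : ω y = false) : y ≠ 0 := by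
  intro h; rw [h, hω0] at hy; exact Bool.true_eq_false.mp hy

lemma Rser_rec' {ω : ℕ → Bool} (hω0 : ω 0 = true) (z : ℕ) {y : ℕ} (hy : ω y = false) :
    Rser ω z y = ENNReal.ofReal (1/2) * Rhat ω z (y-1)
      + ENNReal.ofReal (1/2) * Rhat ω z (y+1) := by
  have hy0 := nontrap_ne_zero hω0 hy
  rw [Rser_rec ω z hy]
  rw [tsum_pair _ (y-1) (y+1) (by omega)]
  · rw [wt_nontrap ω hy hy0, wt_nontrap ω hy hy0, if_pos (Or.inl rfl), if_pos (Or.inr rfl)]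
  · intro c hc1 hc2
    rw [wt_nontrap ω hy hy0, if_neg (by tauto), zero_mul]

lemma wt_total {ω : ℕ → Bool} (hω0 : ω 0 = true) {y : ℕ} (hy : ω y = false) :
    (∑' y' : ℕ, wt ω (some y) (some y')) = 1 := by
  have hy0 := nontrap_ne_zero hω0 hy
  rw [tsum_pair _ (y-1) (y+1) (by omega)]
  · rw [wt_nontrap ω hy hy0, wt_nontrap ω hy hy0, if_pos (Or.inl rfl), if_pos (Or.inr rfl)]
    rw [← ENNReal.ofReal_add (by norm_num) (by norm_num)]
    norm_num
  · intro c hc1 hc2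
    rw [wt_nontrap ω hy hy0, if_neg (by tauto)]

lemma Hsum_partial_le {ω : ℕ → Bool} (hω0 : ω 0 = true) {z : ℕ} (hz : ω z = true) :
    ∀ (D : ℕ) (y : ℕ), (∑ d ∈ Finset.range (D+1), Hsum ω z d y) ≤ 1 := by
  intro D
  induction D with
  | zero =>
    intro y
    rw [Finset.sum_range_one, Hsum_zero]
    split_ifs <;> simp
  | succ D ih =>
    intro y
    rw [Finset.sum_range_succ']
    by_cases hy : ω y = true
    · have h0 : ∀ d ∈ Finset.range (D+1), Hsum ω z (d+1) y = 0 := by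
        intro d _; rw [Hsum_succ, if_pos hy]
      rw [Finset.sum_congr rfl h0, Finset.sum_const, smul_zero, zero_add, Hsum_zero]
      split_ifs <;> simp
    · have hyz : y ≠ z := fun h => hy (h ▸ hz)
      rw [Hsum_zero, if_neg hyz, add_zero]
      have h1 : ∀ d ∈ Finset.range (D+1), Hsum ω z (d+1) y
          = ∑' y' : ℕ, wt ω (some y) (some y') * Hsum ω z d y' := by
        intro d _; rw [Hsum_succ, if_neg hy]
      rw [Finset.sum_congr rfl h1, ← Summable.tsum_finsetSum (fun _ _ => ENNReal.summable)]
      calc (∑' y' : ℕ, ∑ d ∈ Finset.range (D+1), wt ω (some y) (some y') * Hsum ω z d y')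
          = ∑' y' : ℕ, wt ω (some y) (some y') * ∑ d ∈ Finset.range (D+1), Hsum ω z d y' := by
            apply tsum_congr; intro y'; rw [Finset.mul_sum]
        _ ≤ ∑' y' : ℕ, wt ω (some y) (some y') * 1 :=
            ENNReal.tsum_le_tsum fun y' => mul_le_mul_right (ih y') _
        _ = 1 := by simp only [mul_one]; exact wt_total hω0 (by simpa using hy)

lemma Rser_le_one {ω : ℕ → Bool} (hω0 : ω 0 = true) {z : ℕ} (hz : ω z = true) (y : ℕ) :
    Rser ω z y ≤ 1 := by
  apply ENNReal.tsum_le_of_sum_range_le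
  intro n
  calc (∑ d ∈ Finset.range n, Hsum ω z (d+1) y)
      ≤ ∑ d ∈ Finset.range (n+1), Hsum ω z d y := by
        rw [Finset.sum_range_succ']
        exact le_add_right le_rfl
    _ ≤ 1 := Hsum_partial_le hω0 hz n y

lemma Rhat_ne_top {ω : ℕ → Bool} (hω0 : ω 0 = true) {z : ℕ} (hz : ω z = true) (y : ℕ) :
    Rhat ω z y ≠ ⊤ := by
  have : Rhat ω z y ≤ 1 + 1 := by
    apply add_le_add
    · split_ifs <;> simp
    · exact Rser_le_one hω0 hz y
  exact ne_top_of_le_ne_top (by norm_num) this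

end Emb
namespace Emb
open scoped Classical
open ENNReal

section Interval
variable {ω : ℕ → Bool} {u v z : ℕ}

lemma interval_rec (hω0 : ω 0 = true) (hv : ω v = true)
    (huv : u < v) (hmid : ∀ w, u < w → w < v → ω w = false) (hz : ω z = true)
    {y : ℕ} (h1 : 1 ≤ y) (h2 : y ≤ v - u - 1) :
    (Rhat ω z (u+(y+1))).toReal + (Rhat ω z (u+(y-1))).toReal
      = 2 * (Rhat ω z (u+y)).toReal := by
  have hw : ω (u+y) = false := hmid _ (by omega) (by omega)
  have hwz : u + y ≠ z := by intro h; rw [← h, hw] at hz; simp at hz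
  have hrec := Rser_rec' hω0 z hw
  have hRhat : Rhat ω z (u+y) = Rser ω z (u+y) := by
    rw [Rhat, if_neg hwz, zero_add]
  have e1 : u + y - 1 = u + (y-1) := by omega
  have e2 : u + y + 1 = u + (y+1) := by omega
  rw [hRhat, hrec, e1, e2]
  have hne1 : ENNReal.ofReal (1/2) * Rhat ω z (u+(y-1)) ≠ ⊤ :=
    ENNReal.mul_ne_top ENNReal.ofReal_ne_top (Rhat_ne_top hω0 hz _)
  have hne2 : ENNReal.ofReal (1/2) * Rhat ω z (u+(y+1)) ≠ ⊤ :=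
    ENNReal.mul_ne_top ENNReal.ofReal_ne_top (Rhat_ne_top hω0 hz _)
  rw [ENNReal.toReal_add hne1 hne2, ENNReal.toReal_mul, ENNReal.toReal_mul,
    ENNReal.toReal_ofReal (by norm_num)]
  ring

lemma interval_affine (hω0 : ω 0 = true) (hu : ω u = true) (hv : ω v = true)
    (huv : u < v) (hmid : ∀ w, u < w → w < v → ω w = false) (hz : ω z = true) :
    ∀ y : ℕ, y ≤ v - u →
      (Rhat ω z (u+y)).toReal
        = (Rhat ω z u).toReal
          + (y : ℝ) * ((Rhat ω z (u+1)).toReal - (Rhat ω z u).toReal) := by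
  intro y
  induction y using Nat.strong_induction_on with
  | _ y ih =>
    match y with
    | 0 => intro _; simp
    | 1 => intro _; push_cast; ring
    | (y'+2) =>
      intro hy
      have s1 := ih y' (by omega) (by omega)
      have s2 := ih (y'+1) (by omega) (by omega)
      have hrec := interval_rec hω0 hv huv hmid hz (y := y'+1) (by omega) (by omega)
      have e3 : y' + 1 - 1 = y' := by omega
      rw [e3] at hrec
      have e4 : y' + 1 + 1 = y' + 2 := by omega
      rw [e4] at hrec
      push_cast
      push_cast at s1 s2
      linarith

lemma interval_value (hω0 : ω 0 = true) (hu : ω u = true) (hv : ω v = true)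
    (huv : u < v) (hmid : ∀ w, u < w → w < v → ω w = false) (hz : ω z = true) :
    ∀ y : ℕ, y ≤ v - u →
      Rhat ω z (u+y) = ENNReal.ofReal
        ((if u = z then (1:ℝ) else 0)
          + (y : ℝ) / ((v - u : ℕ) : ℝ)
            * ((if v = z then (1:ℝ) else 0) - (if u = z then (1:ℝ) else 0))) := by
  have hL : 0 < v - u := by omega
  have hLr : ((v - u : ℕ) : ℝ) ≠ 0 := by positivity
  have e0 : (Rhat ω z u).toReal = if u = z then (1:ℝ) else 0 := by
    rw [Rhat_trap ω z hu]
    split_ifs <;> simp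
  have eL : (Rhat ω z (u + (v-u))).toReal = if v = z then (1:ℝ) else 0 := by
    have : u + (v - u) = v := by omega
    rw [this, Rhat_trap ω z hv]
    split_ifs <;> simp
  have aff := interval_affine hω0 hu hv huv hmid hz
  intro y hy
  have hyv := aff y hy
  have hLv := aff (v-u) le_rfl
  rw [eL, e0] at hLv
  rw [← ENNReal.ofReal_toReal (Rhat_ne_top hω0 hz (u+y)), hyv, e0]
  congr 1
  have hD : (Rhat ω z (u+1)).toReal - (if u = z then (1:ℝ) else 0)
      = ((if v = z then (1:ℝ) else 0) - (if u = z then (1:ℝ) else 0)) / ((v-u:ℕ):ℝ) := by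
    rw [eq_div_iff hLr]
    nlinarith [hLv]
  rw [hD]
  ring

end Interval
end Emb
namespace Emb
open scoped Classical
open ENNReal

noncomputable def extO (m : ℕ) (w : Fin (m+1) → Option ℕ) : ℕ → Option ℕ :=
  fun n => if h : n < m+1 then w ⟨n, h⟩ else none

noncomputable def pwO (ω : ℕ → Bool) (m : ℕ) (u : ℕ → Option ℕ) : ℝ≥0∞ :=
  ∏ t ∈ Finset.range m, wt ω (u t) (u (t+1))

noncomputable def eoser (ω : ℕ → Bool) (x z : ℕ) (m : ℕ) : ℝ≥0∞ :=
  ∑' w : Fin (m+1) → Option ℕ,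
    if extO m w 0 = some x ∧ extO m w m = some z ∧
        (∀ t, 0 < t → t < m → trapInd ω (extO m w t) = false)
    then pwO ω m (extO m w) else 0

noncomputable def qser (ω : ℕ → Bool) (x z : ℕ) : ℝ≥0∞ := ∑' m : ℕ, eoser ω x z (m+1)

lemma extO_eq {m : ℕ} (w : Fin (m+1) → Option ℕ) {n : ℕ} (h : n < m + 1) :
    extO m w n = w ⟨n, h⟩ := dif_pos h

lemma extO_cons_zero {d : ℕ} (a : Option ℕ) (w : Fin (d+1) → Option ℕ) :
    extO (d+1) (Fin.cons a w) 0 = a := by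
  rw [extO_eq _ (by omega)]
  exact Fin.cons_zero _ _

lemma extO_cons_succ {d : ℕ} (a : Option ℕ) (w : Fin (d+1) → Option ℕ) (t : ℕ) :
    extO (d+1) (Fin.cons a w) (t+1) = extO d w t := by
  unfold extO
  by_cases h : t < d + 1
  · rw [dif_pos (by omega : t + 1 < d + 2), dif_pos h]
    exact Fin.cons_succ (α := fun _ => Option ℕ) a w ⟨t, h⟩
  · rw [dif_neg (by omega), dif_neg h]

lemma extO_some {m : ℕ} (v : Fin (m+1) → ℕ) {n : ℕ} (h : n ≤ m) :
    extO m (fun t => some (v t)) n = some (extN m v n) := by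
  rw [extO_eq _ (by omega), extN_eq _ (by omega)]

lemma pwO_cons (ω : ℕ → Bool) {d : ℕ} (a : Option ℕ) (w : Fin (d+1) → Option ℕ) :
    pwO ω (d+1) (extO (d+1) (Fin.cons a w))
      = wt ω a (extO d w 0) * pwO ω d (extO d w) := by
  unfold pwO
  rw [Finset.prod_range_succ']
  rw [extO_cons_zero, mul_comm]
  congr 1
  · congr 1
    funext t
    rw [extO_cons_succ, extO_cons_succ]

lemma pwO_all_some {ω : ℕ → Bool} {m : ℕ} (u : ℕ → Option ℕ)
    (hlast : u m ≠ none) (hprod : pwO ω m u ≠ 0) : ∀ t ≤ m, u t ≠ none := by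
  have key : ∀ j, j ≤ m → u (m - j) ≠ none := by
    intro j
    induction j with
    | zero => intro _; simpa using hlast
    | succ j ih =>
      intro hj
      have hprev : u (m - j) ≠ none := ih (by omega)
      obtain ⟨n, hn⟩ := Option.ne_none_iff_exists'.mp hprev
      intro hnone
      have hmj : m - j = (m - (j+1)) + 1 := by omega
      have hfac : wt ω (u (m - (j+1))) (u (m - (j+1) + 1)) = 0 := by
        rw [← hmj, hnone, hn]
        exact wt_none_some ω n
      have : pwO ω m u = 0 := by
        apply Finset.prod_eq_zero (i := m - (j+1)) (by simp; omega) hfac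
      exact hprod this
  intro t ht
  have := key (m - t) (by omega)
  rwa [show m - (m - t) = t by omega] at this

lemma fg_eq (ω : ℕ → Bool) (x z : ℕ) (m : ℕ) (v : Fin (m+1) → ℕ) :
    (if extO (m+1) (Fin.cons (some x) (fun t => some (v t))) 0 = some x ∧
        extO (m+1) (Fin.cons (some x) (fun t => some (v t))) (m+1) = some z ∧
        (∀ t, 0 < t → t < m+1 →
          trapInd ω (extO (m+1) (Fin.cons (some x) (fun t => some (v t))) t) = false)
     then pwO ω (m+1) (extO (m+1) (Fin.cons (some x) (fun t => some (v t)))) else 0)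
    = (if extN m v m = z ∧ (∀ t < m, ω (extN m v t) = false)
       then wt ω (some x) (some (extN m v 0)) * pw ω m (extN m v) else 0) := by
  have hcond : (extO (m+1) (Fin.cons (some x) (fun t => some (v t))) 0 = some x ∧
        extO (m+1) (Fin.cons (some x) (fun t => some (v t))) (m+1) = some z ∧
        (∀ t, 0 < t → t < m+1 →
          trapInd ω (extO (m+1) (Fin.cons (some x) (fun t => some (v t))) t) = false))
      ↔ (extN m v m = z ∧ (∀ t < m, ω (extN m v t) = false)) := by
    constructor
    · rintro ⟨-, h2, h3⟩
      constructor
      · rw [extO_cons_succ, extO_some v le_rfl] at h2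
        exact Option.some_inj.mp h2
      · intro t ht
        have := h3 (t+1) (by omega) (by omega)
        rw [extO_cons_succ, extO_some v (by omega)] at this
        exact this
    · rintro ⟨h2, h3⟩
      refine ⟨extO_cons_zero _ _, ?_, ?_⟩
      · rw [extO_cons_succ, extO_some v le_rfl, h2]
      · intro t ht1 ht2
        obtain ⟨t', rfl⟩ : ∃ t', t = t' + 1 := ⟨t - 1, by omega⟩
        rw [extO_cons_succ, extO_some v (by omega)]
        exact h3 t' (by omega)
  rw [if_congr hcond rfl rfl]
  by_cases hC : extN m v m = z ∧ (∀ t < m, ω (extN m v t) = false)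
  · rw [if_pos hC, if_pos hC, pwO_cons, extO_some v (by omega)]
    congr 1
    unfold pwO pw
    apply Finset.prod_congr rfl
    intro t ht
    simp only [Finset.mem_range] at ht
    rw [extO_some v (by omega), extO_some v (by omega)]
  · rw [if_neg hC, if_neg hC]

lemma iget_of_ne_none {o : Option ℕ} (h : o ≠ none) : o = some o.iget := by
  cases o with
  | none => exact absurd rfl h
  | some a => rfl

lemma eoser_succ (ω : ℕ → Bool) (x z : ℕ) (m : ℕ) :
    eoser ω x z (m+1) = ∑' y' : ℕ, wt ω (some x) (some y') * Hsum ω z m y' := by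
  rw [collapse_sum]
  unfold eoser
  set f : (Fin (m+2) → Option ℕ) → ℝ≥0∞ := fun w =>
    if extO (m+1) w 0 = some x ∧ extO (m+1) w (m+1) = some z ∧
        (∀ t, 0 < t → t < m+1 → trapInd ω (extO (m+1) w t) = false)
    then pwO ω (m+1) (extO (m+1) w) else 0 with hf
  set g : (Fin (m+1) → ℕ) → ℝ≥0∞ := fun v =>
    if extN m v m = z ∧ (∀ t < m, ω (extN m v t) = false)
    then wt ω (some x) (some (extN m v 0)) * pw ω m (extN m v) else 0 with hg
  show ∑' w, f w = ∑' v, g v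
  have hfg' : ∀ v : Fin (m+1) → ℕ, f (Fin.cons (some x) (fun t => some (v t))) = g v := by
    intro v
    rw [hf, hg]
    exact fg_eq ω x z m v
  apply tsum_eq_tsum_of_ne_zero_bij
    (i := fun v : Function.support g => Fin.cons (some x) (fun t => some (v.1 t)))
  · intro v v' hvv
    apply Subtype.ext
    funext t
    have h1 := congrFun hvv t.succ
    simp only [Fin.cons_succ] at h1
    exact Option.some_inj.mp h1
  · intro w hw
    simp only [Function.mem_support] at hw
    have hC : extO (m+1) w 0 = some x ∧ extO (m+1) w (m+1) = some z ∧
        (∀ t, 0 < t → t < m+1 → trapInd ω (extO (m+1) w t) = false) := by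
      by_contra h
      rw [hf] at hw
      simp only [if_neg h] at hw
      exact hw rfl
    have hprod : pwO ω (m+1) (extO (m+1) w) ≠ 0 := by
      rw [hf] at hw
      simp only [if_pos hC] at hw
      exact hw
    have hall : ∀ t ≤ m+1, extO (m+1) w t ≠ none :=
      pwO_all_some _ (by rw [hC.2.1]; exact Option.some_ne_none z) hprod
    have hwv : w = Fin.cons (some x) (fun t : Fin (m+1) => some ((extO (m+1) w ((t:ℕ)+1)).iget)) := by
      funext j
      induction j using Fin.cases with
      | zero =>
        rw [Fin.cons_zero, ← hC.1, extO_eq w (by omega : (0:ℕ) < m+2)]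
        congr 1
      | succ t =>
        rw [Fin.cons_succ]
        have h1 : extO (m+1) w ((t:ℕ)+1) = w t.succ := extO_eq w (by omega)
        rw [h1]
        exact iget_of_ne_none (h1 ▸ hall ((t:ℕ)+1) (by omega))
    refine ⟨⟨fun t : Fin (m+1) => (extO (m+1) w ((t:ℕ)+1)).iget, ?_⟩, hwv.symm⟩
    simp only [Function.mem_support]
    rw [← hfg', ← hwv]
    exact hw
  · intro v
    exact hfg' v.1

lemma qser_formula (ω : ℕ → Bool) (x z : ℕ) :
    qser ω x z = ∑' y' : ℕ, wt ω (some x) (some y') * Rhat ω z y' := by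
  unfold qser
  rw [tsum_congr (fun m => eoser_succ ω x z m), ENNReal.tsum_comm]
  apply tsum_congr
  intro y'
  rw [ENNReal.tsum_mul_left, tsum_Hsum]

end Emb
namespace Emb
open scoped Classical
open ENNReal MeasureTheory

section Meas
variable {Ω : Type*} [MeasurableSpace Ω] {ω : ℕ → Bool} {P : Measure Ω} {S : ℕ → Ω → Option ℕ}

def cyl (S : ℕ → Ω → Option ℕ) (n : ℕ) (p : ℕ → Option ℕ) : Set Ω :=
  {a | ∀ i ≤ n, S i a = p i}

lemma meas_cyl (hS : IsTrappedRW ω P S) (n : ℕ) (p : ℕ → Option ℕ) :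
    MeasurableSet (cyl S n p) := by
  have h : cyl S n p = ⋂ (i : ℕ) (_ : i ≤ n), {a | S i a = p i} := by
    ext a; simp [cyl]
  rw [h]
  exact MeasurableSet.iInter fun i => MeasurableSet.iInter fun _ => hS.2.1 i (p i)

lemma P_cyl_zero (hS : IsTrappedRW ω P S) (p : ℕ → Option ℕ) :
    P (cyl S 0 p) = if p 0 = some 0 then 1 else 0 := by
  have h0 : cyl S 0 p = {a | S 0 a = p 0} := by
    ext a; simp [cyl]
  rw [h0]
  split_ifs with h
  · rw [h]; exact hS.2.2.1
  · have hc : P {a | S 0 a = some 0}ᶜ = 0 := by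
      haveI := hS.1
      rw [measure_compl (hS.2.1 0 (some 0)) (measure_ne_top _ _), hS.2.2.1, measure_univ]
      simp
    apply measure_mono_null _ hc
    intro a ha
    simp only [Set.mem_compl_iff, Set.mem_setOf_eq] at *
    rw [ha]
    exact h

lemma P_cyl_succ (hS : IsTrappedRW ω P S) (n : ℕ) (p : ℕ → Option ℕ) :
    P (cyl S (n+1) p) = wt ω (p n) (p (n+1)) * P (cyl S n p) := by
  have h : cyl S (n+1) p = {a | (∀ i ≤ n, S i a = p i) ∧ S (n+1) a = p (n+1)} := by
    ext a
    constructor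
    · intro ha
      exact ⟨fun i hi => ha i (by omega), ha (n+1) le_rfl⟩
    · rintro ⟨h1, h2⟩ i hi
      rcases Nat.lt_or_ge i (n+1) with h' | h'
      · exact h1 i (by omega)
      · have : i = n + 1 := by omega
        rw [this]; exact h2
  rw [h]
  exact hS.2.2.2 n p (p (n+1))

lemma P_cyl (hS : IsTrappedRW ω P S) (n : ℕ) (p : ℕ → Option ℕ) :
    P (cyl S n p) = (if p 0 = some 0 then 1 else 0) * pwO ω n p := by
  induction n with
  | zero => rw [P_cyl_zero hS, pwO, Finset.prod_range_zero, mul_one]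
  | succ n ih =>
    rw [P_cyl_succ hS, ih]
    unfold pwO
    rw [Finset.prod_range_succ]
    ring

variable (S) in
def detSet (Q : (ℕ → Option ℕ) → Prop) : Set Ω := {a | Q (fun n => S n a)}

lemma detSet_decomp (k : ℕ) (x : ℕ) (Q : (ℕ → Option ℕ) → Prop)
    (hQ : ∀ f g : ℕ → Option ℕ, (∀ i ≤ k, f i = g i) → Q f → Q g)
    (hsub : detSet S Q ⊆ {a | S k a = some x}) :
    detSet S Q = ⋃ (w : {w : Fin (k+1) → Option ℕ // Q (extO k w) ∧ extO k w k = some x}),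
      cyl S k (extO k w.1) := by
  ext a
  constructor
  · intro ha
    refine Set.mem_iUnion.2 ⟨⟨fun i => S i a, ?_, ?_⟩, ?_⟩
    · apply hQ (fun n => S n a) _ _ ha
      intro i hi
      rw [extO_eq _ (by omega)]
    · rw [extO_eq _ (by omega)]
      exact hsub ha
    · intro i hi
      rw [extO_eq _ (by omega)]
  · intro ha
    obtain ⟨w, hw⟩ := Set.mem_iUnion.1 ha
    apply hQ (extO k w.1) _ _ w.2.1
    intro i hi
    exact (hw i hi).symm

lemma detSet_pieces_disjoint (k : ℕ) (x : ℕ) (Q : (ℕ → Option ℕ) → Prop) :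
    Pairwise (Function.onFun Disjoint
      (fun w : {w : Fin (k+1) → Option ℕ // Q (extO k w) ∧ extO k w k = some x} =>
        cyl S k (extO k w.1))) := by
  intro w w' hww
  rw [Function.onFun]
  rw [Set.disjoint_left]
  intro a ha ha'
  apply hww
  apply Subtype.ext
  funext i
  have h1 := ha i (by omega)
  have h2 := ha' i (by omega)
  rw [extO_eq _ i.2] at h1 h2
  have : w.1 ⟨(i:ℕ), i.2⟩ = w'.1 ⟨(i:ℕ), i.2⟩ := by rw [← h1, ← h2]
  simpa using this

lemma factor (hS : IsTrappedRW ω P S) (k d : ℕ) (x : ℕ) (Q : (ℕ → Option ℕ) → Prop)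
    (hQ : ∀ f g : ℕ → Option ℕ, (∀ i ≤ k, f i = g i) → Q f → Q g)
    (hsub : detSet S Q ⊆ {a | S k a = some x})
    (wfut : ℕ → Option ℕ) (hw0 : wfut 0 = some x) :
    P (detSet S Q ∩ {a | ∀ t ≤ d, S (k+t) a = wfut t})
      = P (detSet S Q) * pwO ω d wfut := by
  set F : Set Ω := {a | ∀ t ≤ d, S (k+t) a = wfut t} with hF
  have hFmeas : MeasurableSet F := by
    have h : F = ⋂ (t : ℕ) (_ : t ≤ d), {a | S (k+t) a = wfut t} := by
      ext a; simp [hF]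
    rw [h]
    exact MeasurableSet.iInter fun t => MeasurableSet.iInter fun _ => hS.2.1 _ _
  have hdec := detSet_decomp (S := S) k x Q hQ hsub
  have key : ∀ w : {w : Fin (k+1) → Option ℕ // Q (extO k w) ∧ extO k w k = some x},
      P (cyl S k (extO k w.1) ∩ F) = P (cyl S k (extO k w.1)) * pwO ω d wfut := by
    intro w
    set pc : ℕ → Option ℕ := fun n => if n < k then extO k w.1 n else wfut (n - k) with hpc
    have hpck : pc k = extO k w.1 k := by
      rw [hpc]
      simp only [lt_irrefl, if_neg, Nat.sub_self]
      rw [hw0, w.2.2]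
      simp
    have hpclt : ∀ n, n < k → pc n = extO k w.1 n := by
      intro n hn; rw [hpc]; simp [hn]
    have hpcle : ∀ n, n ≤ k → pc n = extO k w.1 n := by
      intro n hn
      rcases Nat.lt_or_ge n k with h | h
      · exact hpclt n h
      · have : n = k := by omega
        rw [this, hpck]
    have hpcfut : ∀ t, pc (k+t) = wfut t := by
      intro t
      rcases Nat.eq_zero_or_pos t with rfl | ht
      · rw [Nat.add_zero, hpck, w.2.2, hw0]
      · rw [hpc]
        simp only [if_neg (by omega : ¬ k + t < k)]
        congr 1
        omega
    have hcylF : cyl S k (extO k w.1) ∩ F = cyl S (k+d) pc := by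
      ext a
      constructor
      · rintro ⟨h1, h2⟩ i hi
        rcases Nat.lt_or_ge i k with h | h
        · rw [hpclt i h]
          exact h1 i (by omega)
        · have hik : i = k + (i - k) := by omega
          rw [hik, hpcfut]
          exact h2 (i-k) (by omega)
      · intro h
        constructor
        · intro i hi
          rw [← hpcle i hi]
          exact h i (by omega)
        · intro t ht
          rw [← hpcfut t]
          exact h (k+t) (by omega)
    rw [hcylF, P_cyl hS, P_cyl hS]
    have hpc0 : pc 0 = extO k w.1 0 := hpcle 0 (by omega)
    rw [hpc0]
    have hsplit : pwO ω (k+d) pc = pwO ω k (extO k w.1) * pwO ω d wfut := by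
      rw [pwO, Finset.prod_range_add]
      congr 1
      · rw [pwO]
        apply Finset.prod_congr rfl
        intro t ht
        simp only [Finset.mem_range] at ht
        rw [hpclt t ht, hpcle (t+1) (by omega)]
      · rw [pwO]
        apply Finset.prod_congr rfl
        intro t _
        rw [hpcfut, show k + t + 1 = k + (t+1) from by omega, hpcfut]
    rw [hsplit]
    ring
  rw [hdec, Set.iUnion_inter]
  rw [measure_iUnion ?hd ?hm]
  case hd =>
    intro w w' hww
    have := detSet_pieces_disjoint (S := S) k x Q hww
    rw [Function.onFun] at this ⊢
    exact Disjoint.mono (Set.inter_subset_left) (Set.inter_subset_left) this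
  case hm =>
    intro w
    exact (meas_cyl hS _ _).inter hFmeas
  rw [tsum_congr key, ENNReal.tsum_mul_right]
  congr 1
  rw [← measure_iUnion (detSet_pieces_disjoint (S := S) k x Q) (fun w => meas_cyl hS _ _)]

end Meas
end Emb
namespace Emb
open scoped Classical
open ENNReal MeasureTheory

section Meas2
variable {Ω : Type*} [MeasurableSpace Ω] {ω : ℕ → Bool} {P : Measure Ω} {S : ℕ → Ω → Option ℕ}

def nextVisit (ω : ℕ → Bool) (S : ℕ → Ω → Option ℕ) (k : ℕ) (z : ℕ) : Set Ω :=
  {a | ∃ m, 0 < m ∧ S (k+m) a = some z ∧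
    ∀ t, 0 < t → t < m → trapInd ω (S (k+t) a) = false}

def nvAt (ω : ℕ → Bool) (S : ℕ → Ω → Option ℕ) (k : ℕ) (z : ℕ) (m : ℕ) : Set Ω :=
  {a | S (k+m) a = some z ∧ ∀ t, 0 < t → t < m → trapInd ω (S (k+t) a) = false}

lemma trapInd_set_meas (hS : IsTrappedRW ω P S) (j : ℕ) :
    MeasurableSet {a | trapInd ω (S j a) = false} := by
  have h : {a | trapInd ω (S j a) = false}
      = ⋃ (o : {o : Option ℕ // trapInd ω o = false}), {a | S j a = o.1} := by
    ext a
    simp only [Set.mem_setOf_eq, Set.mem_iUnion]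
    constructor
    · intro ha; exact ⟨⟨S j a, ha⟩, rfl⟩
    · rintro ⟨o, ho⟩; rw [ho]; exact o.2
  rw [h]
  exact MeasurableSet.iUnion fun o => hS.2.1 j o.1

lemma nvAt_meas (hS : IsTrappedRW ω P S) (k z m : ℕ) :
    MeasurableSet (nvAt ω S k z m) := by
  have h : nvAt ω S k z m = {a | S (k+m) a = some z} ∩
      ⋂ (t : ℕ) (_ : 0 < t) (_ : t < m), {a | trapInd ω (S (k+t) a) = false} := by
    ext a; simp [nvAt]
  rw [h]
  exact (hS.2.1 _ _).inter
    (MeasurableSet.iInter fun t => MeasurableSet.iInter fun _ =>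
      MeasurableSet.iInter fun _ => trapInd_set_meas hS _)

lemma nextVisit_eq_iUnion : nextVisit ω S k z = ⋃ m : ℕ, nvAt ω S k z (m+1) := by
  ext a
  simp only [nextVisit, nvAt, Set.mem_setOf_eq, Set.mem_iUnion]
  constructor
  · rintro ⟨m, hm, h1, h2⟩
    exact ⟨m-1, by rw [show m - 1 + 1 = m from by omega]; exact ⟨h1, h2⟩⟩
  · rintro ⟨m, h1, h2⟩
    exact ⟨m+1, by omega, h1, h2⟩

lemma nvAt_disjoint (hz : ω z = true) :
    Pairwise (Function.onFun Disjoint (fun m => nvAt ω S k z (m+1))) := by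
  have key : ∀ m m' : ℕ, m < m' → Disjoint (nvAt ω S k z (m+1)) (nvAt ω S k z (m'+1)) := by
    intro m m' hmm
    rw [Set.disjoint_left]
    rintro a ⟨h1, _⟩ ⟨_, h2'⟩
    have h3 := h2' (m+1) (by omega) (by omega)
    rw [h1] at h3
    simp [trapInd, hz] at h3
  intro m m' hmm
  rcases Nat.lt_or_ge m m' with h | h
  · exact key m m' h
  · exact (key m' m (by omega)).symm

lemma factor_nvAt (hS : IsTrappedRW ω P S) (k : ℕ) (x z : ℕ)
    (Q : (ℕ → Option ℕ) → Prop)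
    (hQ : ∀ f g : ℕ → Option ℕ, (∀ i ≤ k, f i = g i) → Q f → Q g)
    (hsub : detSet S Q ⊆ {a | S k a = some x}) (m : ℕ) :
    P (detSet S Q ∩ nvAt ω S k z (m+1)) = P (detSet S Q) * eoser ω x z (m+1) := by
  set X := detSet S Q with hX
  have hdec : X ∩ nvAt ω S k z (m+1)
      = ⋃ (w : {w : Fin (m+2) → Option ℕ // extO (m+1) w 0 = some x ∧
          extO (m+1) w (m+1) = some z ∧
          (∀ t, 0 < t → t < m+1 → trapInd ω (extO (m+1) w t) = false)}),
        X ∩ {a | ∀ t ≤ m+1, S (k+t) a = extO (m+1) w.1 t} := by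
    ext a
    constructor
    · rintro ⟨haX, h1, h2⟩
      refine Set.mem_iUnion.2 ⟨⟨fun t => S (k + (t:ℕ)) a, ?_, ?_, ?_⟩, haX, ?_⟩
      · rw [extO_eq _ (by omega)]
        exact hsub haX
      · rw [extO_eq _ (by omega)]
        exact h1
      · intro t ht1 ht2
        rw [extO_eq _ (by omega)]
        exact h2 t ht1 ht2
      · intro t ht
        rw [extO_eq _ (by omega)]
    · intro ha
      obtain ⟨w, haX, hfut⟩ := Set.mem_iUnion.1 ha
      refine ⟨haX, ?_, ?_⟩
      · rw [hfut (m+1) le_rfl]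
        exact w.2.2.1
      · intro t ht1 ht2
        rw [hfut t (by omega)]
        exact w.2.2.2 t ht1 ht2
  rw [hdec, measure_iUnion ?hd ?hm]
  case hd =>
    intro w w' hww
    rw [Function.onFun, Set.disjoint_left]
    rintro a ⟨_, hfa⟩ ⟨_, hfa'⟩
    apply hww
    apply Subtype.ext
    funext t
    have h1 := hfa (t:ℕ) (by omega)
    have h2 := hfa' (t:ℕ) (by omega)
    rw [extO_eq _ (by omega)] at h1 h2
    have h3 : w.1 ⟨(t:ℕ), by omega⟩ = w'.1 ⟨(t:ℕ), by omega⟩ := by rw [← h1, ← h2]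
    simpa using h3
  case hm =>
    intro w
    have hmeas : MeasurableSet {a : Ω | ∀ t ≤ m+1, S (k+t) a = extO (m+1) w.1 t} := by
      have h : {a : Ω | ∀ t ≤ m+1, S (k+t) a = extO (m+1) w.1 t}
          = ⋂ (t : ℕ) (_ : t ≤ m+1), {a | S (k+t) a = extO (m+1) w.1 t} := by
        ext a; simp
      rw [h]
      exact MeasurableSet.iInter fun t => MeasurableSet.iInter fun _ => hS.2.1 _ _
    have hXmeas : MeasurableSet X := by
      rw [hX, detSet_decomp (S := S) k x Q hQ hsub]
      exact MeasurableSet.iUnion fun w => meas_cyl hS _ _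
    exact hXmeas.inter hmeas
  have key : ∀ w : {w : Fin (m+2) → Option ℕ // extO (m+1) w 0 = some x ∧
        extO (m+1) w (m+1) = some z ∧
        (∀ t, 0 < t → t < m+1 → trapInd ω (extO (m+1) w t) = false)},
      P (X ∩ {a | ∀ t ≤ m+1, S (k+t) a = extO (m+1) w.1 t})
        = P X * pwO ω (m+1) (extO (m+1) w.1) :=
    fun w => factor hS k (m+1) x Q hQ hsub (extO (m+1) w.1) w.2.1
  rw [tsum_congr key]
  rw [ENNReal.tsum_mul_left]
  congr 1
  unfold eoser
  have hsupp : Function.support (fun w : Fin (m+2) → Option ℕ =>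
      if extO (m+1) w 0 = some x ∧ extO (m+1) w (m+1) = some z ∧
          (∀ t, 0 < t → t < m+1 → trapInd ω (extO (m+1) w t) = false)
      then pwO ω (m+1) (extO (m+1) w) else 0) ⊆ {w : Fin (m+2) → Option ℕ |
        extO (m+1) w 0 = some x ∧ extO (m+1) w (m+1) = some z ∧
        (∀ t, 0 < t → t < m+1 → trapInd ω (extO (m+1) w t) = false)} := by
    intro w hw
    simp only [Function.mem_support] at hw
    by_contra h
    exact hw (if_neg (fun hc => h hc))
  rw [← tsum_subtype_eq_of_support_subset hsupp]
  apply tsum_congr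
  intro w
  rw [if_pos w.2]

lemma factor_nextVisit (hS : IsTrappedRW ω P S) (k : ℕ) (x z : ℕ) (hz : ω z = true)
    (Q : (ℕ → Option ℕ) → Prop)
    (hQ : ∀ f g : ℕ → Option ℕ, (∀ i ≤ k, f i = g i) → Q f → Q g)
    (hsub : detSet S Q ⊆ {a | S k a = some x}) :
    P (detSet S Q ∩ nextVisit ω S k z) = P (detSet S Q) * qser ω x z := by
  rw [nextVisit_eq_iUnion, Set.inter_iUnion]
  rw [measure_iUnion ?hd ?hm]
  case hd =>
    intro m m' hmm
    have := nvAt_disjoint (S := S) (k := k) hz hmm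
    rw [Function.onFun] at this ⊢
    exact Disjoint.mono Set.inter_subset_right Set.inter_subset_right this
  case hm =>
    intro m
    have hXmeas : MeasurableSet (detSet S Q) := by
      rw [detSet_decomp (S := S) k x Q hQ hsub]
      exact MeasurableSet.iUnion fun w => meas_cyl hS _ _
    exact hXmeas.inter (nvAt_meas hS _ _ _)
  rw [tsum_congr (fun m => factor_nvAt hS k x z Q hQ hsub m), ENNReal.tsum_mul_left]
  rfl

end Meas2
end Emb
namespace Emb
open scoped Classical
open ENNReal MeasureTheory

section Emb2
variable {Ω : Type*} [MeasurableSpace Ω] {ω : ℕ → Bool} {P : Measure Ω} {S : ℕ → Ω → Option ℕ}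

lemma vc_zero (a : Ω) : visitCount ω S a 0 = 0 := by
  simp [visitCount]

lemma vc_succ (a : Ω) (k : ℕ) : visitCount ω S a (k+1)
    = visitCount ω S a k + (if trapInd ω (S (k+1) a) = true then 1 else 0) := by
  unfold visitCount
  have h : Finset.Icc 1 (k+1) = insert (k+1) (Finset.Icc 1 k) := by
    ext j; simp only [Finset.mem_Icc, Finset.mem_insert]; omega
  rw [h, Finset.filter_insert]
  split_ifs with h1
  · rw [Finset.card_insert_of_notMem (by simp)]
  · rw [add_zero]

lemma vc_mono (a : Ω) : Monotone (visitCount ω S a) := by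
  intro k k' hkk
  unfold visitCount
  apply Finset.card_le_card
  apply Finset.filter_subset_filter
  intro j hj
  simp only [Finset.mem_Icc] at *
  omega

lemma numVisits_ge_iff (a : Ω) (l : ℕ) :
    ((l : ℕ∞) ≤ numVisits ω S a) ↔ ∃ k, l ≤ visitCount ω S a k := by
  constructor
  · intro h
    by_contra hc
    push_neg at hc
    rcases Nat.eq_zero_or_pos l with rfl | hl
    · exact Nat.not_lt_zero _ (hc 0)
    have : numVisits ω S a ≤ ((l - 1 : ℕ) : ℕ∞) := by
      apply iSup_le
      intro k
      have hb : visitCount ω S a k ≤ l - 1 := by have := hc k; omega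
      exact_mod_cast hb
    have h2 : (l : ℕ∞) ≤ ((l - 1 : ℕ) : ℕ∞) := le_trans h this
    have : l ≤ l - 1 := by exact_mod_cast h2
    omega
  · rintro ⟨k, hk⟩
    calc (l : ℕ∞) ≤ (visitCount ω S a k : ℕ∞) := by exact_mod_cast hk
      _ ≤ numVisits ω S a := le_iSup (fun k => ((visitCount ω S a k : ℕ∞))) k

lemma first_visit_exists (a : Ω) {l : ℕ} (hl : 1 ≤ l)
    (h : ∃ k, l ≤ visitCount ω S a k) :
    ∃ k, 1 ≤ k ∧ visitCount ω S a k = l ∧ visitCount ω S a (k-1) = l-1 := by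
  classical
  set k := Nat.find h with hk
  have hfind : l ≤ visitCount ω S a k := Nat.find_spec h
  have hk1 : 1 ≤ k := by
    by_contra hc
    have : k = 0 := by omega
    rw [this, vc_zero] at hfind
    omega
  have hprev : ¬ l ≤ visitCount ω S a (k-1) := Nat.find_min h (by omega)
  have hstep : visitCount ω S a k ≤ visitCount ω S a (k-1) + 1 := by
    have := vc_succ (ω := ω) (S := S) a (k-1)
    rw [show k - 1 + 1 = k from by omega] at this
    rw [this]
    split_ifs <;> omega
  exact ⟨k, hk1, by omega, by omega⟩

lemma hitTime_eq (a : Ω) {l k : ℕ} (hl : 1 ≤ l) (hk : 1 ≤ k)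
    (h1 : visitCount ω S a k = l) (h2 : visitCount ω S a (k-1) = l-1) :
    hitTime ω S l a = (k : ℕ∞) := by
  unfold hitTime
  rw [if_neg (by omega)]
  apply le_antisymm
  · exact sInf_le ⟨k, rfl, hk, h1⟩
  · apply le_sInf
    rintro t ⟨k', rfl, hk', h1'⟩
    have : k ≤ k' := by
      by_contra hc
      have hk'le : k' ≤ k - 1 := by omega
      have := vc_mono (ω := ω) (S := S) a hk'le
      omega
    exact_mod_cast this

lemma embWalk_eq (a : Ω) {l k : ℕ} (hl : 1 ≤ l) (hk : 1 ≤ k)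
    (h1 : visitCount ω S a k = l) (h2 : visitCount ω S a (k-1) = l-1) :
    embWalk ω S l a = S k a := by
  unfold embWalk
  rw [if_pos ((numVisits_ge_iff a l).2 ⟨k, h1.ge⟩), hitTime_eq a hl hk h1 h2]
  simp

lemma embWalk_some (a : Ω) {l : ℕ} {y : ℕ} (hl : 1 ≤ l)
    (h : embWalk ω S l a = some y) :
    ∃ k, 1 ≤ k ∧ visitCount ω S a k = l ∧ visitCount ω S a (k-1) = l-1 ∧ S k a = some y := by
  have hcond : (l : ℕ∞) ≤ numVisits ω S a := by
    by_contra hc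
    unfold embWalk at h
    rw [if_neg hc] at h
    exact absurd h (by simp)
  obtain ⟨k, hk1, hvk, hvk'⟩ := first_visit_exists a hl ((numVisits_ge_iff a l).1 hcond)
  refine ⟨k, hk1, hvk, hvk', ?_⟩
  rw [← embWalk_eq a hl hk1 hvk hvk']
  exact h

lemma embWalk_zero (a : Ω) : embWalk ω S 0 a = S 0 a := by
  unfold embWalk hitTime
  simp

def Bk (ω : ℕ → Bool) (S : ℕ → Ω → Option ℕ) (l x k : ℕ) : Set Ω :=
  {a | visitCount ω S a k = l ∧ (l = 0 → k = 0) ∧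
    (1 ≤ l → 1 ≤ k ∧ visitCount ω S a (k-1) = l-1) ∧ S k a = some x}

lemma B_decomp (l x : ℕ) :
    {a : Ω | embWalk ω S l a = some x} = ⋃ k, Bk ω S l x k := by
  ext a
  simp only [Set.mem_setOf_eq, Set.mem_iUnion]
  rcases Nat.eq_zero_or_pos l with rfl | hl
  · constructor
    · intro h
      rw [embWalk_zero] at h
      exact ⟨0, vc_zero a, fun _ => rfl, by omega, h⟩
    · rintro ⟨k, h1, h2, h3, h4⟩
      rw [h2 rfl] at h4
      rw [embWalk_zero]
      exact h4
  · constructor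
    · intro h
      obtain ⟨k, hk1, hvk, hvk', hSk⟩ := embWalk_some a hl h
      exact ⟨k, hvk, by omega, fun _ => ⟨hk1, hvk'⟩, hSk⟩
    · rintro ⟨k, h1, h2, h3, h4⟩
      obtain ⟨hk1, hvk'⟩ := h3 hl
      rw [embWalk_eq a hl hk1 h1 hvk']
      exact h4

lemma Bk_disjoint (l x : ℕ) :
    Pairwise (Function.onFun Disjoint (fun k => Bk ω S l x k)) := by
  have key : ∀ k k' : ℕ, k < k' → Disjoint (Bk ω S l x k) (Bk ω S l x k') := by
    intro k k' hkk
    rw [Set.disjoint_left]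
    rintro a ⟨h1, h2, h3, _⟩ ⟨h1', h2', h3', _⟩
    rcases Nat.eq_zero_or_pos l with rfl | hl
    · omega
    · obtain ⟨hk1, hvk'⟩ := h3 hl
      obtain ⟨hk1', hvk''⟩ := h3' hl
      have : visitCount ω S a k ≤ visitCount ω S a (k'-1) := vc_mono a (by omega)
      omega
  intro k k' hkk
  rcases Nat.lt_or_ge k k' with h | h
  · exact key k k' h
  · exact (key k' k (by omega)).symm

def pvc (ω : ℕ → Bool) (f : ℕ → Option ℕ) (k : ℕ) : ℕ :=
  ((Finset.Icc 1 k).filter fun j => trapInd ω (f j) = true).card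

def Qk (ω : ℕ → Bool) (l x k : ℕ) : (ℕ → Option ℕ) → Prop := fun f =>
  pvc ω f k = l ∧ (l = 0 → k = 0) ∧ (1 ≤ l → 1 ≤ k ∧ pvc ω f (k-1) = l-1) ∧ f k = some x

lemma detSet_Qk (l x k : ℕ) : detSet S (Qk ω l x k) = Bk ω S l x k := rfl

lemma Qk_invariant (l x k : ℕ) :
    ∀ f g : ℕ → Option ℕ, (∀ i ≤ k, f i = g i) → Qk ω l x k f → Qk ω l x k g := by
  intro f g hfg ⟨h1, h2, h3, h4⟩
  have hpvc : ∀ k', k' ≤ k → pvc ω f k' = pvc ω g k' := by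
    intro k' hk'
    unfold pvc
    apply Finset.card_bij (fun j _ => j) <;> intro j hj
    · simp only [Finset.mem_filter, Finset.mem_Icc] at *
      rw [← hfg j (by omega)]
      exact hj
    · intro j' hj' h
      exact h
    · simp only [Finset.mem_filter, Finset.mem_Icc] at *
      refine ⟨j, ?_, rfl⟩
      rw [hfg j (by omega)]
      exact hj
  refine ⟨by rw [← hpvc k le_rfl]; exact h1, h2, ?_, by rw [← hfg k le_rfl]; exact h4⟩
  intro hl
  obtain ⟨hk1, hvk'⟩ := h3 hl
  exact ⟨hk1, by rw [← hpvc (k-1) (by omega)]; exact hvk'⟩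

lemma Bk_sub (l x k : ℕ) : detSet S (Qk ω l x k) ⊆ {a : Ω | S k a = some x} :=
  fun a ha => ha.2.2.2

lemma next_visit_iff (a : Ω) {l k : ℕ} (hvc : visitCount ω S a k = l)
    {z : ℕ} (hz : ω z = true) :
    embWalk ω S (l+1) a = some z ↔ a ∈ nextVisit ω S k z := by
  constructor
  · intro h
    obtain ⟨k', hk1', hvk', hvk'', hSk'⟩ := embWalk_some a (by omega) h
    have hkk' : k < k' := by
      by_contra hc
      have := vc_mono (ω := ω) (S := S) a (by omega : k' ≤ k)
      omega
    refine ⟨k' - k, by omega, ?_, ?_⟩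
    · rw [show k + (k' - k) = k' from by omega]
      exact hSk'
    · intro t ht1 ht2
      by_contra hc
      rw [Bool.not_eq_false] at hc
      have hstep : visitCount ω S a (k+t) = visitCount ω S a (k+t-1) + 1 := by
        have := vc_succ (ω := ω) (S := S) a (k+t-1)
        rw [show k + t - 1 + 1 = k + t from by omega] at this
        rw [this, if_pos hc]
      have hmono1 : visitCount ω S a k ≤ visitCount ω S a (k+t-1) := vc_mono a (by omega)
      have hmono2 : visitCount ω S a (k+t) ≤ visitCount ω S a (k'-1) := vc_mono a (by omega)
      omega
  · rintro ⟨m, hm, hSz, hint⟩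
    have hvct : ∀ t, t < m → visitCount ω S a (k+t) = l := by
      intro t
      induction t with
      | zero => intro _; simpa using hvc
      | succ t ih =>
        intro ht
        show visitCount ω S a ((k+t)+1) = l
        have hf : trapInd ω (S ((k+t)+1) a) = false := by
          rw [show (k+t)+1 = k + (t+1) from by omega]
          exact hint (t+1) (by omega) (by omega)
        rw [vc_succ (ω := ω) (S := S) a (k+t), ih (by omega), hf]
        simp
    have hvcm : visitCount ω S a (k+m) = l + 1 := by
      have := vc_succ (ω := ω) (S := S) a (k+m-1)
      rw [show k + m - 1 + 1 = k + m from by omega] at this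
      have htr : trapInd ω (S (k+m) a) = true := by rw [hSz]; exact hz
      rw [this, htr, show k + m - 1 = k + (m-1) from by omega, hvct (m-1) (by omega)]
      simp
    rw [embWalk_eq a (by omega) (by omega : 1 ≤ k + m) hvcm
      (by rw [show k + m - 1 = k + (m-1) from by omega]; rw [hvct (m-1) (by omega)]; omega)]
    exact hSz

lemma master (hS : IsTrappedRW ω P S) (l : ℕ) (x z : ℕ) (hz : ω z = true) :
    P ({a | embWalk ω S (l+1) a = some z} ∩ {a | embWalk ω S l a = some x})
      = P {a | embWalk ω S l a = some x} * qser ω x z := by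
  have hABk : ∀ k, {a | embWalk ω S (l+1) a = some z} ∩ Bk ω S l x k
      = Bk ω S l x k ∩ nextVisit ω S k z := by
    intro k
    ext a
    constructor
    · rintro ⟨hA, hB⟩
      exact ⟨hB, (next_visit_iff a hB.1 hz).1 hA⟩
    · rintro ⟨hB, hN⟩
      exact ⟨(next_visit_iff a hB.1 hz).2 hN, hB⟩
  have hmeasBk : ∀ k, MeasurableSet (Bk ω S l x k) := by
    intro k
    rw [← detSet_Qk (ω := ω) (S := S) l x k,
      detSet_decomp (S := S) k x (Qk ω l x k) (Qk_invariant l x k) (Bk_sub l x k)]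
    exact MeasurableSet.iUnion fun w => meas_cyl hS _ _
  rw [B_decomp l x, Set.inter_iUnion]
  rw [measure_iUnion ?hd1 ?hm1]
  case hd1 =>
    intro k k' hkk
    have := Bk_disjoint (ω := ω) (S := S) l x hkk
    rw [Function.onFun] at this ⊢
    exact Disjoint.mono Set.inter_subset_right Set.inter_subset_right this
  case hm1 =>
    intro k
    rw [hABk k]
    exact (hmeasBk k).inter (by
      rw [nextVisit_eq_iUnion]
      exact MeasurableSet.iUnion fun m => nvAt_meas hS _ _ _)
  have key : ∀ k, P ({a | embWalk ω S (l+1) a = some z} ∩ Bk ω S l x k)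
      = P (Bk ω S l x k) * qser ω x z := by
    intro k
    rw [hABk k, ← detSet_Qk (ω := ω) (S := S) l x k]
    exact factor_nextVisit hS k x z hz (Qk ω l x k) (Qk_invariant l x k) (Bk_sub l x k)
  rw [tsum_congr key, ENNReal.tsum_mul_right]
  congr 1
  rw [measure_iUnion (Bk_disjoint l x) hmeasBk]

lemma condProb_eq_qser (hS : IsTrappedRW ω P S) (l : ℕ) (x z : ℕ) (hz : ω z = true)
    (hpos : P {a | embWalk ω S l a = some x} ≠ 0) :
    condProb P {a | embWalk ω S (l+1) a = some z} {a | embWalk ω S l a = some x}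
      = qser ω x z := by
  haveI := hS.1
  rw [condProb, master hS l x z hz, mul_comm, mul_div_assoc,
    ENNReal.div_self hpos (measure_ne_top _ _), mul_one]

end Emb2
end Emb
namespace Emb
open scoped Classical
open ENNReal

section Eval
variable {ω : ℕ → Bool}

lemma trap_at (hω : IsTrapConfig ω) (i : ℕ) : ω (trapLoc ω i) = true :=
  Nat.nth_mem_of_infinite hω.2 i

lemma trapLoc_mono (hω : IsTrapConfig ω) : StrictMono (trapLoc ω) :=
  Nat.nth_strictMono hω.2

lemma trapLoc_zero' (hω : IsTrapConfig ω) : trapLoc ω 0 = 0 := by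
  rw [trapLoc, Nat.nth_zero]
  exact Nat.sInf_eq_zero.2 (Or.inl hω.1)

lemma trapLoc_inj (hω : IsTrapConfig ω) {i j : ℕ} (h : i ≠ j) :
    trapLoc ω i ≠ trapLoc ω j := fun he => h ((trapLoc_mono hω).injective he)

lemma trapLoc_between (hω : IsTrapConfig ω) (i : ℕ) :
    ∀ w, trapLoc ω i < w → w < trapLoc ω (i+1) → ω w = false := by
  intro w h1 h2
  by_contra hc
  rw [Bool.not_eq_false] at hc
  have hnth : Nat.nth (fun x => ω x = true) (Nat.count (fun x => ω x = true) w) = w :=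
    Nat.nth_count hc
  set j := Nat.count (fun x => ω x = true) w with hj
  have hij : i < j := by
    rw [← Nat.nth_lt_nth (p := fun x => ω x = true) hω.2]
    rw [hnth]
    exact h1
  have hji : j < i + 1 := by
    rw [← Nat.nth_lt_nth (p := fun x => ω x = true) hω.2]
    rw [hnth]
    exact h2
  omega

lemma gapLen_pos (hω : IsTrapConfig ω) {i : ℕ} (hi : 1 ≤ i) : 1 ≤ gapLen ω i := by
  have := trapLoc_mono hω (show i - 1 < i by omega)
  unfold gapLen
  omega

lemma qser_eval_pos {x z : ℕ} (hx : ω x = true) (hx0 : x ≠ 0) {r1 r2 : ℝ}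
    (h1 : Rhat ω z (x-1) = ENNReal.ofReal r1) (h2 : Rhat ω z (x+1) = ENNReal.ofReal r2)
    (hr1 : 0 ≤ r1) (hr2 : 0 ≤ r2) :
    qser ω x z = ENNReal.ofReal ((1/3)*r1 + (1/3)*r2) := by
  rw [qser_formula, tsum_pair _ (x-1) (x+1) (by omega)
    (fun c hc1 hc2 => by rw [wt_trap ω hx hx0, if_neg (by tauto), zero_mul])]
  rw [wt_trap ω hx hx0, wt_trap ω hx hx0, if_pos (Or.inl rfl), if_pos (Or.inr rfl), h1, h2,
    ← ENNReal.ofReal_mul (by norm_num), ← ENNReal.ofReal_mul (by norm_num),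
    ← ENNReal.ofReal_add (by positivity) (by positivity)]

lemma qser_eval_zero (hω0 : ω 0 = true) {z : ℕ} {r : ℝ}
    (h1 : Rhat ω z 1 = ENNReal.ofReal r) (hr : 0 ≤ r) :
    qser ω 0 z = ENNReal.ofReal ((2/3)*r) := by
  rw [qser_formula, tsum_eq_single 1
    (fun y hy => by rw [wt_zero, if_neg hy, zero_mul])]
  rw [wt_zero, if_pos rfl, h1, ← ENNReal.ofReal_mul (by norm_num)]

lemma Rhat_left_val (hω : IsTrapConfig ω) {i : ℕ} (hi : 1 ≤ i) {z : ℕ} (hz : ω z = true) :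
    Rhat ω z (trapLoc ω i - 1) = ENNReal.ofReal
      ((if trapLoc ω (i-1) = z then (1:ℝ) else 0)
        + (((gapLen ω i : ℕ) : ℝ) - 1) / ((gapLen ω i : ℕ) : ℝ)
          * ((if trapLoc ω i = z then (1:ℝ) else 0)
            - (if trapLoc ω (i-1) = z then (1:ℝ) else 0))) := by
  have hlt : trapLoc ω (i-1) < trapLoc ω i := trapLoc_mono hω (by omega)
  have hL : gapLen ω i = trapLoc ω i - trapLoc ω (i-1) := rfl
  have hmid : ∀ w, trapLoc ω (i-1) < w → w < trapLoc ω i → ω w = false := by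
    have := trapLoc_between hω (i-1)
    rw [show i - 1 + 1 = i from by omega] at this
    exact this
  have hx1 : trapLoc ω i - 1 = trapLoc ω (i-1) + (gapLen ω i - 1) := by rw [hL]; omega
  rw [hx1]
  have hval := interval_value hω.1 (trap_at hω (i-1)) (trap_at hω i) hlt hmid hz
    (gapLen ω i - 1) (by rw [hL]; omega)
  rw [hval]
  congr 1
  have hvu : trapLoc ω i - trapLoc ω (i-1) = gapLen ω i := rfl
  rw [hvu, Nat.cast_sub (gapLen_pos hω hi)]
  norm_num

lemma Rhat_right_val (hω : IsTrapConfig ω) (i : ℕ) {z : ℕ} (hz : ω z = true) :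
    Rhat ω z (trapLoc ω i + 1) = ENNReal.ofReal
      ((if trapLoc ω i = z then (1:ℝ) else 0)
        + 1 / ((gapLen ω (i+1) : ℕ) : ℝ)
          * ((if trapLoc ω (i+1) = z then (1:ℝ) else 0)
            - (if trapLoc ω i = z then (1:ℝ) else 0))) := by
  have hlt : trapLoc ω i < trapLoc ω (i+1) := trapLoc_mono hω (by omega)
  have hL : gapLen ω (i+1) = trapLoc ω (i+1) - trapLoc ω i := rfl
  have hval := interval_value hω.1 (trap_at hω i) (trap_at hω (i+1)) hlt
    (trapLoc_between hω i) hz 1 (by omega)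
  rw [hval]
  congr 1
  have hvu : trapLoc ω (i+1) - trapLoc ω i = gapLen ω (i+1) := rfl
  rw [hvu]
  norm_num

lemma aux_nonneg {e0 e1 q : ℝ} (h0 : e0 = 0 ∨ e0 = 1) (h1 : e1 = 0 ∨ e1 = 1)
    (hq0 : 0 ≤ q) (hq1 : q ≤ 1) : 0 ≤ e0 + q*(e1-e0) := by
  rcases h0 with rfl | rfl <;> rcases h1 with rfl | rfl <;> nlinarith

end Eval
end Emb
namespace Emb
open scoped Classical
open ENNReal

section Claims
variable {ω : ℕ → Bool}

lemma trapLoc_ne_zero (hω : IsTrapConfig ω) {i : ℕ} (hi : 1 ≤ i) : trapLoc ω i ≠ 0 := by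
  have h := trapLoc_mono hω (show 0 < i by omega)
  rw [trapLoc_zero' hω] at h
  omega

lemma gap_facts (hω : IsTrapConfig ω) {i : ℕ} (hi : 1 ≤ i) :
    (1:ℝ) ≤ ((gapLen ω i : ℕ) : ℝ) := by exact_mod_cast gapLen_pos hω hi

lemma q_left (hω : IsTrapConfig ω) {i : ℕ} (hi : 1 ≤ i) :
    qser ω (trapLoc ω i) (trapLoc ω (i-1))
      = ENNReal.ofReal ((2/3) * (1 / (2 * (gapLen ω i : ℝ)))) := by
  have hL := gap_facts hω hi
  have hL1 := gap_facts hω (show 1 ≤ i+1 by omega)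
  have h1 := Rhat_left_val hω hi (trap_at hω (i-1))
  rw [if_pos rfl, if_neg (trapLoc_inj hω (by omega))] at h1
  have h2 := Rhat_right_val hω i (trap_at hω (i-1))
  rw [if_neg (trapLoc_inj hω (by omega)), if_neg (trapLoc_inj hω (by omega))] at h2
  rw [qser_eval_pos (trap_at hω i) (trapLoc_ne_zero hω hi) h1 h2
    (aux_nonneg (Or.inr rfl) (Or.inl rfl) (div_nonneg (by linarith) (by linarith))
      ((div_le_one (by linarith)).2 (by linarith)))
    (aux_nonneg (Or.inl rfl) (Or.inl rfl) (div_nonneg (by linarith) (by linarith))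
      ((div_le_one (by linarith)).2 (by linarith)))]
  congr 1
  field_simp
  ring

lemma q_right_pos (hω : IsTrapConfig ω) {i : ℕ} (hi : 1 ≤ i) :
    qser ω (trapLoc ω i) (trapLoc ω (i+1))
      = ENNReal.ofReal ((2/3) * (1 / (2 * (gapLen ω (i+1) : ℝ)))) := by
  have hL := gap_facts hω hi
  have hL1 := gap_facts hω (show 1 ≤ i+1 by omega)
  have h1 := Rhat_left_val hω hi (trap_at hω (i+1))
  rw [if_neg (trapLoc_inj hω (by omega)), if_neg (trapLoc_inj hω (by omega))] at h1
  have h2 := Rhat_right_val hω i (trap_at hω (i+1))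
  rw [if_neg (trapLoc_inj hω (by omega)), if_pos rfl] at h2
  rw [qser_eval_pos (trap_at hω i) (trapLoc_ne_zero hω hi) h1 h2
    (aux_nonneg (Or.inl rfl) (Or.inl rfl) (div_nonneg (by linarith) (by linarith))
      ((div_le_one (by linarith)).2 (by linarith)))
    (aux_nonneg (Or.inl rfl) (Or.inr rfl) (div_nonneg (by linarith) (by linarith))
      ((div_le_one (by linarith)).2 (by linarith)))]
  congr 1
  field_simp
  ring

lemma q_self_pos (hω : IsTrapConfig ω) {i : ℕ} (hi : 1 ≤ i) :
    qser ω (trapLoc ω i) (trapLoc ω i)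
      = ENNReal.ofReal ((2/3) * (1 - 1 / (2 * (gapLen ω i : ℝ))
          - 1 / (2 * (gapLen ω (i+1) : ℝ)))) := by
  have hL := gap_facts hω hi
  have hL1 := gap_facts hω (show 1 ≤ i+1 by omega)
  have h1 := Rhat_left_val hω hi (trap_at hω i)
  rw [if_neg (trapLoc_inj hω (by omega)), if_pos rfl] at h1
  have h2 := Rhat_right_val hω i (trap_at hω i)
  rw [if_pos rfl, if_neg (trapLoc_inj hω (by omega))] at h2
  rw [qser_eval_pos (trap_at hω i) (trapLoc_ne_zero hω hi) h1 h2
    (aux_nonneg (Or.inl rfl) (Or.inr rfl) (div_nonneg (by linarith) (by linarith))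
      ((div_le_one (by linarith)).2 (by linarith)))
    (aux_nonneg (Or.inr rfl) (Or.inl rfl) (div_nonneg (by linarith) (by linarith))
      ((div_le_one (by linarith)).2 (by linarith)))]
  congr 1
  field_simp
  ring

lemma q_right_zero (hω : IsTrapConfig ω) :
    qser ω (trapLoc ω 0) (trapLoc ω 1)
      = ENNReal.ofReal ((2/3) * (2 / (2 * (gapLen ω 1 : ℝ)))) := by
  have hL1 := gap_facts hω le_rfl
  have h2 := Rhat_right_val hω 0 (trap_at hω 1)
  rw [if_neg (trapLoc_inj hω (by omega)), if_pos rfl, trapLoc_zero' hω, zero_add] at h2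
  rw [trapLoc_zero' hω]
  rw [qser_eval_zero hω.1 h2
    (aux_nonneg (Or.inl rfl) (Or.inr rfl) (div_nonneg (by linarith) (by linarith))
      ((div_le_one (by linarith)).2 (by linarith)))]
  congr 1
  field_simp
  ring

lemma q_self_zero (hω : IsTrapConfig ω) :
    qser ω (trapLoc ω 0) (trapLoc ω 0)
      = ENNReal.ofReal ((2/3) * (1 - 1 / (2 * (gapLen ω 1 : ℝ))
          - 1 / (2 * (gapLen ω 1 : ℝ)))) := by
  have hL1 := gap_facts hω le_rfl
  have h2 := Rhat_right_val hω 0 (trap_at hω 0)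
  rw [if_pos rfl, if_neg (trapLoc_inj hω (by omega)), trapLoc_zero' hω, zero_add] at h2
  conv_lhs => rw [trapLoc_zero' hω]
  rw [qser_eval_zero hω.1 h2
    (aux_nonneg (Or.inr rfl) (Or.inl rfl) (div_nonneg (by linarith) (by linarith))
      ((div_le_one (by linarith)).2 (by linarith)))]
  congr 1
  field_simp
  ring

lemma q_far (hω : IsTrapConfig ω) (i j : ℕ)
    (hj1 : j ≠ i - 1) (hj2 : j ≠ i) (hj3 : j ≠ i + 1) :
    qser ω (trapLoc ω i) (trapLoc ω j) = 0 := by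
  rcases Nat.eq_zero_or_pos i with rfl | hi
  · have hL1 := gap_facts hω le_rfl
    have h2 := Rhat_right_val hω 0 (trap_at hω j)
    rw [if_neg (trapLoc_inj hω (fun h => hj2 h.symm)),
      if_neg (trapLoc_inj hω (fun h => hj3 h.symm)), trapLoc_zero' hω, zero_add] at h2
    rw [trapLoc_zero' hω]
    rw [qser_eval_zero hω.1 h2 (by norm_num)]
    rw [show (2/3 : ℝ) * (0 + 1 / ((gapLen ω 1 : ℕ) : ℝ) * (0 - 0)) = 0 from by ring]
    exact ENNReal.ofReal_zero
  · have hL := gap_facts hω hi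
    have hL1 := gap_facts hω (show 1 ≤ i+1 by omega)
    have h1 := Rhat_left_val hω hi (trap_at hω j)
    rw [if_neg (trapLoc_inj hω (fun h => hj1 h.symm)),
      if_neg (trapLoc_inj hω (fun h => hj2 h.symm))] at h1
    have h2 := Rhat_right_val hω i (trap_at hω j)
    rw [if_neg (trapLoc_inj hω (fun h => hj2 h.symm)),
      if_neg (trapLoc_inj hω (fun h => hj3 h.symm))] at h2
    rw [qser_eval_pos (trap_at hω i) (trapLoc_ne_zero hω hi) h1 h2 (by
        apply aux_nonneg (Or.inl rfl) (Or.inl rfl) (div_nonneg (by linarith) (by linarith))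
          ((div_le_one (by linarith)).2 (by linarith)))
      (by
        apply aux_nonneg (Or.inl rfl) (Or.inl rfl) (div_nonneg (by linarith) (by linarith))
          ((div_le_one (by linarith)).2 (by linarith)))]
    rw [show (1/3 : ℝ) * (0 + (((gapLen ω i : ℕ) : ℝ) - 1) / ((gapLen ω i : ℕ) : ℝ) * (0 - 0))
        + (1/3) * (0 + 1 / ((gapLen ω (i+1) : ℕ) : ℝ) * (0 - 0)) = 0 from by ring]
    exact ENNReal.ofReal_zero

end Claims
end Emb
namespace Emb
lemma ofReal_two_thirds : ENNReal.ofReal ((2:ℝ)/3) = 2/3 := by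
  rw [ENNReal.ofReal_div_of_pos (by norm_num)]
  norm_num

lemma half_bound {L : ℝ} (hL : 1 ≤ L) : 1/(2*L) ≤ 1/2 := by
  rw [div_le_div_iff₀ (by linarith) (by norm_num)]
  linarith
end Emb


/-- transition probabilities of the embedded walk on the trap locations. -/
theorem embedded_walk_transition_probabilities
    (ω : ℕ → Bool) (hω : IsTrapConfig ω)
    {Ω : Type*} [MeasurableSpace Ω] (P : MeasureTheory.Measure Ω)
    (S : ℕ → Ω → Option ℕ) (hS : IsTrappedRW ω P S)
    (l i : ℕ) (hpos : 0 < P {a | embWalk ω S l a = some (trapLoc ω i)}) :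
    (1 ≤ i →
      condProb P {a | embWalk ω S (l + 1) a = some (trapLoc ω (i - 1))}
          {a | embWalk ω S l a = some (trapLoc ω i)}
        = ENNReal.ofReal ((2 / 3) * (1 / (2 * (gapLen ω i : ℝ))))) ∧
    (condProb P {a | embWalk ω S (l + 1) a = some (trapLoc ω (i + 1))}
        {a | embWalk ω S l a = some (trapLoc ω i)}
      = ENNReal.ofReal ((2 / 3) *
          ((if i = 0 then 2 else 1) / (2 * (gapLen ω (i + 1) : ℝ))))) ∧
    (condProb P {a | embWalk ω S (l + 1) a = some (trapLoc ω i)}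
        {a | embWalk ω S l a = some (trapLoc ω i)}
      = ENNReal.ofReal ((2 / 3) *
          (1 - 1 / (2 * (gapLen ω (if i = 0 then 1 else i) : ℝ))
            - 1 / (2 * (gapLen ω (i + 1) : ℝ))))) ∧
    (∀ j : ℕ, j ≠ i - 1 → j ≠ i → j ≠ i + 1 →
      condProb P {a | embWalk ω S (l + 1) a = some (trapLoc ω j)}
          {a | embWalk ω S l a = some (trapLoc ω i)} = 0) ∧
    (∑' j : ℕ, condProb P {a | embWalk ω S (l + 1) a = some (trapLoc ω j)}
        {a | embWalk ω S l a = some (trapLoc ω i)}) = 2 / 3 := by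
  classical
  have hpos' : P {a | embWalk ω S l a = some (trapLoc ω i)} ≠ 0 := hpos.ne'
  have hcond : ∀ j : ℕ,
      condProb P {a | embWalk ω S (l + 1) a = some (trapLoc ω j)}
        {a | embWalk ω S l a = some (trapLoc ω i)}
      = Emb.qser ω (trapLoc ω i) (trapLoc ω j) :=
    fun j => Emb.condProb_eq_qser hS l (trapLoc ω i) (trapLoc ω j) (Emb.trap_at hω j) hpos'
  refine ⟨?_, ?_, ?_, ?_, ?_⟩
  · intro hi
    rw [hcond (i-1), Emb.q_left hω hi]
  · rcases Nat.eq_zero_or_pos i with rfl | hi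
    · rw [hcond 1, if_pos rfl]
      exact Emb.q_right_zero hω
    · rw [hcond (i+1), if_neg (by omega), Emb.q_right_pos hω hi]
  · rcases Nat.eq_zero_or_pos i with rfl | hi
    · rw [hcond 0, if_pos rfl]
      exact Emb.q_self_zero hω
    · rw [hcond i, if_neg (by omega), Emb.q_self_pos hω hi]
  · intro j hj1 hj2 hj3
    rw [hcond j, Emb.q_far hω i j hj1 hj2 hj3]
  · rw [tsum_congr hcond]
    rcases Nat.eq_zero_or_pos i with rfl | hi
    · have hL1 := Emb.gap_facts hω le_rfl
      rw [tsum_eq_sum (s := {0, 1}) (fun j hj => by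
        simp only [Finset.mem_insert, Finset.mem_singleton] at hj
        push_neg at hj
        exact Emb.q_far hω 0 j (by omega) (by omega) (by omega))]
      rw [Finset.sum_insert (by simp), Finset.sum_singleton]
      rw [Emb.q_self_zero hω, Emb.q_right_zero hω]
      have hb := Emb.half_bound hL1
      rw [← ENNReal.ofReal_add (by nlinarith) (by positivity)]
      rw [show (2/3 : ℝ) * (1 - 1 / (2 * (gapLen ω 1 : ℝ)) - 1 / (2 * (gapLen ω 1 : ℝ)))
          + (2/3) * (2 / (2 * (gapLen ω 1 : ℝ))) = 2/3 from by field_simp; ring]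
      exact Emb.ofReal_two_thirds
    · have hL := Emb.gap_facts hω hi
      have hL1 := Emb.gap_facts hω (show 1 ≤ i+1 by omega)
      rw [tsum_eq_sum (s := {i-1, i, i+1}) (fun j hj => by
        simp only [Finset.mem_insert, Finset.mem_singleton] at hj
        push_neg at hj
        exact Emb.q_far hω i j hj.1 hj.2.1 hj.2.2)]
      rw [Finset.sum_insert (by simp only [Finset.mem_insert, Finset.mem_singleton]; omega),
        Finset.sum_insert (by simp only [Finset.mem_singleton]; omega),
        Finset.sum_singleton]
      rw [Emb.q_left hω hi, Emb.q_self_pos hω hi, Emb.q_right_pos hω hi]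
      have hb := Emb.half_bound hL
      have hb1 := Emb.half_bound hL1
      rw [← ENNReal.ofReal_add (by nlinarith) (by positivity),
        ← ENNReal.ofReal_add (by positivity) (by nlinarith)]
      rw [show (2/3 : ℝ) * (1 / (2 * (gapLen ω i : ℝ)))
          + ((2/3) * (1 - 1 / (2 * (gapLen ω i : ℝ)) - 1 / (2 * (gapLen ω (i+1) : ℝ)))
            + (2/3) * (1 / (2 * (gapLen ω (i+1) : ℝ)))) = 2/3 from by field_simp; ring]
      exact Emb.ofReal_two_thirds
end

section
/- Let the trap configuration satisfy the quadratic recursion with constant c ≥ |I_1|^{-1}, and set ρ = (c/3)·(1 + 2/c + 2/(c²|I_1|²)). Then the expected survival time satisfies 𝔼(τ) ≤ 2|I_1| Σ_{i=1}^∞ ρ^{i−1}. In particular, if ρ < 1 then 𝔼(τ) ≤ 2|I_1|/(1 − ρ) < ∞. -/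
open MeasureTheory ENNReal Set

noncomputable section PartA

namespace TrapAux

variable {Ω : Type*} [MeasurableSpace Ω]

/-- extend a finite path by `none`s -/
def extPath (n : ℕ) (p : Fin (n+1) → Option ℕ) : ℕ → Option ℕ :=
  fun i => if h : i < n + 1 then p ⟨i, h⟩ else none

def cyl (S : ℕ → Ω → Option ℕ) (n : ℕ) (p : Fin (n+1) → Option ℕ) : Set Ω :=
  {a | ∀ i ≤ n, S i a = extPath n p i}

lemma extPath_apply (n : ℕ) (p : Fin (n+1) → Option ℕ) (i : ℕ) (h : i < n + 1) :
    extPath n p i = p ⟨i, h⟩ := dif_pos h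

lemma measurable_cyl {S : ℕ → Ω → Option ℕ}
    (hm : ∀ (n : ℕ) (y : Option ℕ), MeasurableSet {a | S n a = y})
    (n : ℕ) (p : Fin (n+1) → Option ℕ) : MeasurableSet (cyl S n p) := by
  have : cyl S n p = ⋂ i, ⋂ (_ : i ≤ n), {a | S i a = extPath n p i} := by
    ext a; simp [cyl]
  rw [this]
  exact MeasurableSet.iInter fun i => MeasurableSet.iInter fun _ => hm i _

lemma disjoint_cyl (S : ℕ → Ω → Option ℕ) (n : ℕ) :
    Pairwise (Function.onFun Disjoint (cyl S n)) := by
  intro p q hpq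
  rw [Function.onFun, Set.disjoint_left]
  intro a hap haq
  apply hpq
  funext i
  have h1 := hap i.1 (Nat.lt_succ_iff.mp i.2)
  have h2 := haq i.1 (Nat.lt_succ_iff.mp i.2)
  rw [extPath_apply n p i.1 i.2] at h1
  rw [extPath_apply n q i.1 i.2] at h2
  rw [← Fin.eta i i.2, ← h1, h2]

lemma iUnion_cyl (S : ℕ → Ω → Option ℕ) (n : ℕ) :
    (⋃ p, cyl S n p) = Set.univ := by
  ext a
  simp only [Set.mem_iUnion, Set.mem_univ, iff_true]
  refine ⟨fun i => S i.1 a, fun i hi => ?_⟩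
  rw [extPath_apply n _ i (Nat.lt_succ_iff.mpr hi)]

lemma partition_meas {S : ℕ → Ω → Option ℕ} (P : Measure Ω)
    (hm : ∀ (n : ℕ) (y : Option ℕ), MeasurableSet {a | S n a = y})
    (n : ℕ) {A : Set Ω} (hA : MeasurableSet A) :
    P A = ∑' p : Fin (n+1) → Option ℕ, P (A ∩ cyl S n p) := by
  conv_lhs => rw [show A = ⋃ p, A ∩ cyl S n p by
    rw [← Set.inter_iUnion, iUnion_cyl, Set.inter_univ]]
  exact measure_iUnion
    (fun p q hpq => ((disjoint_cyl S n hpq).inter_left' A).inter_right' A)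
    (fun p => hA.inter (measurable_cyl hm n p))

def snocEquiv (n : ℕ) : ((Fin (n+1) → Option ℕ) × Option ℕ) ≃ (Fin (n+2) → Option ℕ) where
  toFun := fun x => Fin.snoc x.1 x.2
  invFun := fun q => (fun i => q i.castSucc, q (Fin.last (n+1)))
  left_inv := by
    rintro ⟨p, y⟩
    simp [Fin.snoc_castSucc, Fin.snoc_last]
  right_inv := by
    intro q
    funext i
    induction i using Fin.lastCases with
    | last => simp
    | cast i => simp

lemma extPath_snoc_of_le {n i : ℕ} (p : Fin (n+1) → Option ℕ) (y : Option ℕ) (h : i ≤ n) :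
    extPath (n+1) (Fin.snoc p y) i = extPath n p i := by
  unfold extPath
  rw [dif_pos (by omega : i < n + 2), dif_pos (by omega : i < n + 1)]
  have : (⟨i, by omega⟩ : Fin (n+2)) = Fin.castSucc ⟨i, by omega⟩ := rfl
  rw [this, Fin.snoc_castSucc]

lemma extPath_snoc_last {n : ℕ} (p : Fin (n+1) → Option ℕ) (y : Option ℕ) :
    extPath (n+1) (Fin.snoc p y) (n+1) = y := by
  unfold extPath
  rw [dif_pos (by omega : n + 1 < n + 2)]
  have : (⟨n+1, by omega⟩ : Fin (n+2)) = Fin.last (n+1) := rfl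
  rw [this, Fin.snoc_last]

/-- main drift lemma -/
theorem expSurvival_le_of_drift (ω : ℕ → Bool) (P : Measure Ω)
    (S : ℕ → Ω → Option ℕ) (hS : IsTrappedRW ω P S)
    (f : Option ℕ → ℝ≥0∞) (hf0 : f none = 0)
    (hdrift : ∀ x : ℕ,
      (∑' y : Option ℕ, ENNReal.ofReal (transProb ω (some x) y) * f y) + 1 ≤ f (some x)) :
    expSurvival P S ≤ f (some 0) := by
  obtain ⟨hP, hm, h0, hstep⟩ := hS
  -- indicator of non-cemetery
  set indZ : Option ℕ → ℝ≥0∞ := fun x => if x = none then 0 else 1 with hindZ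
  have hdrift' : ∀ x : Option ℕ,
      (∑' y : Option ℕ, ENNReal.ofReal (transProb ω x y) * f y) + indZ x ≤ f x := by
    intro x
    match x with
    | none =>
      have : ∀ y : Option ℕ, ENNReal.ofReal (transProb ω none y) * f y = 0 := by
        intro y
        match y with
        | none => simp [transProb, hf0]
        | some z => simp [transProb]
      simp [ENNReal.tsum_eq_zero.mpr this, hf0, hindZ]
    | some x => simpa [hindZ] using hdrift x
  set F : ℕ → ℝ≥0∞ :=
    fun n => ∑' p : Fin (n+1) → Option ℕ, f (extPath n p n) * P (cyl S n p) with hF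
  set Pn : ℕ → ℝ≥0∞ := fun n => P {a | ¬ S n a = none} with hPn
  -- F 0 = f (some 0)
  have hF0 : F 0 = f (some 0) := by
    simp only [hF]
    have he := Equiv.tsum_eq (Equiv.funUnique (Fin 1) (Option ℕ)).symm
      (fun p : Fin 1 → Option ℕ => f (extPath 0 p 0) * P (cyl S 0 p))
    rw [← he]
    have hterm : ∀ y : Option ℕ,
        f (extPath 0 ((Equiv.funUnique (Fin 1) (Option ℕ)).symm y) 0)
          * P (cyl S 0 ((Equiv.funUnique (Fin 1) (Option ℕ)).symm y))
        = f y * P {a | S 0 a = y} := by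
      intro y
      have h1 : extPath 0 ((Equiv.funUnique (Fin 1) (Option ℕ)).symm y) 0 = y := by
        rw [extPath_apply 0 _ 0 (by omega)]; rfl
      have h2 : cyl S 0 ((Equiv.funUnique (Fin 1) (Option ℕ)).symm y) = {a | S 0 a = y} := by
        ext a
        simp only [cyl, Set.mem_setOf_eq]
        constructor
        · intro h; have := h 0 le_rfl; rwa [h1] at this
        · intro h i hi
          interval_cases i
          rwa [h1]
      rw [h1, h2]
    rw [tsum_congr hterm]
    rw [tsum_eq_single (some 0) ?_]
    · rw [h0, mul_one]
    · intro y hy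
      have hsub : {a | S 0 a = y} ⊆ {a | S 0 a = some 0}ᶜ := by
        intro a ha hb
        simp only [Set.mem_setOf_eq] at ha
        simp only [Set.mem_compl_iff, Set.mem_setOf_eq, not_not] at hb
        exact hy (by rw [← ha, hb])
      have hc : P {a | S 0 a = some 0}ᶜ = 0 := by
        rw [measure_compl (hm 0 (some 0)) (measure_ne_top P _), h0, measure_univ, tsub_self]
      rw [measure_mono_null hsub hc, mul_zero]
  -- key transition identity
  have key : ∀ (n : ℕ) (p : Fin (n+1) → Option ℕ) (y : Option ℕ),
      P (cyl S (n+1) (Fin.snoc p y))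
        = ENNReal.ofReal (transProb ω (extPath n p n) y) * P (cyl S n p) := by
    intro n p y
    have hset : cyl S (n+1) (Fin.snoc p y)
        = {a | (∀ i ≤ n, S i a = extPath n p i) ∧ S (n + 1) a = y} := by
      ext a
      simp only [cyl, Set.mem_setOf_eq]
      constructor
      · intro h
        refine ⟨fun i hi => ?_, ?_⟩
        · rw [← extPath_snoc_of_le p y hi]; exact h i (by omega)
        · rw [← extPath_snoc_last p y]; exact h (n+1) le_rfl
      · rintro ⟨h1, h2⟩ i hi
        by_cases hi' : i ≤ n
        · rw [extPath_snoc_of_le p y hi']; exact h1 i hi'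
        · have : i = n + 1 := by omega
          subst this
          rw [extPath_snoc_last p y]; exact h2
    rw [hset, hstep n (extPath n p) y]
    rfl
  -- step inequality
  have hPn_eq : ∀ n : ℕ,
      Pn n = ∑' p : Fin (n+1) → Option ℕ, indZ (extPath n p n) * P (cyl S n p) := by
    intro n
    have hA : MeasurableSet {a | ¬ S n a = none} := (hm n none).compl
    simp only [hPn]
    rw [partition_meas P hm n hA]
    refine tsum_congr fun p => ?_
    by_cases hx : extPath n p n = none
    · have : {a | ¬ S n a = none} ∩ cyl S n p = ∅ := by
        ext a
        simp only [Set.mem_inter_iff, Set.mem_setOf_eq, Set.mem_empty_iff_false, iff_false,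
          not_and]
        intro ha hb
        exact ha (by rw [hb n le_rfl, hx])
      rw [this]
      simp [hindZ, hx]
    · have : {a | ¬ S n a = none} ∩ cyl S n p = cyl S n p := by
        apply Set.inter_eq_self_of_subset_right
        intro a ha
        simp only [Set.mem_setOf_eq]
        rw [ha n le_rfl]
        exact hx
      rw [this]
      simp [hindZ, hx]
  have hstep' : ∀ n : ℕ, F (n+1) + Pn n ≤ F n := by
    intro n
    have h1 : F (n+1)
        = ∑' p : Fin (n+1) → Option ℕ,
            (∑' y : Option ℕ, ENNReal.ofReal (transProb ω (extPath n p n) y) * f y)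
              * P (cyl S n p) := by
      simp only [hF]
      rw [← Equiv.tsum_eq (snocEquiv n)
        (fun q : Fin (n+2) → Option ℕ => f (extPath (n+1) q (n+1)) * P (cyl S (n+1) q))]
      rw [ENNReal.tsum_prod']
      refine tsum_congr fun p => ?_
      rw [← ENNReal.tsum_mul_right]
      refine tsum_congr fun y => ?_
      show f (extPath (n+1) (Fin.snoc p y) (n+1)) * P (cyl S (n+1) (Fin.snoc p y)) = _
      rw [extPath_snoc_last, key n p y]
      ring
    rw [h1, hPn_eq n, ← ENNReal.tsum_add]
    refine Summable.tsum_le_tsum (fun p => ?_) ENNReal.summable ENNReal.summable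
    rw [← add_mul]
    exact mul_le_mul_left (hdrift' (extPath n p n)) _
  -- telescoping
  have htel : ∀ n : ℕ, (∑ k ∈ Finset.range n, Pn k) + F n ≤ F 0 := by
    intro n
    induction n with
    | zero => simp
    | succ n ih =>
      calc (∑ k ∈ Finset.range (n+1), Pn k) + F (n+1)
          = (∑ k ∈ Finset.range n, Pn k) + (F (n+1) + Pn n) := by
            rw [Finset.sum_range_succ]; ring
        _ ≤ (∑ k ∈ Finset.range n, Pn k) + F n := add_le_add_right (hstep' n) _
        _ ≤ F 0 := ih
  have htsum : ∑' n, Pn n ≤ f (some 0) := by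
    rw [← hF0]
    rw [ENNReal.tsum_eq_iSup_sum]
    refine iSup_le fun s => ?_
    obtain ⟨n, hn⟩ : ∃ n, s ⊆ Finset.range n := ⟨(s.sup id) + 1, fun x hx =>
      Finset.mem_range.mpr (Nat.lt_succ_of_le (Finset.le_sup (f := id) hx))⟩
    calc ∑ k ∈ s, Pn k ≤ ∑ k ∈ Finset.range n, Pn k :=
          Finset.sum_le_sum_of_subset hn
      _ ≤ F 0 := le_trans (le_add_right le_rfl) (htel n)
  -- pointwise bound on the survival time
  have hpt : ∀ a : Ω, ((survivalTime S a : ℕ∞) : ℝ≥0∞)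
      ≤ ∑' n : ℕ, ({a | ¬ S n a = none} : Set Ω).indicator (fun _ => (1 : ℝ≥0∞)) a := by
    intro a
    by_cases hex : ∃ k : ℕ, S k a = none
    · set m := Nat.find hex with hm'
      have hst : survivalTime S a ≤ (m : ℕ∞) :=
        sInf_le ⟨m, rfl, Nat.find_spec hex⟩
      have h1 : ((survivalTime S a : ℕ∞) : ℝ≥0∞) ≤ (m : ℝ≥0∞) := by
        calc ((survivalTime S a : ℕ∞) : ℝ≥0∞) ≤ ((m : ℕ∞) : ℝ≥0∞) := by
              exact_mod_cast hst
          _ = (m : ℝ≥0∞) := by simp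
      refine le_trans h1 ?_
      have h2 : ∀ k < m, (({a | ¬ S k a = none} : Set Ω).indicator
          (fun _ => (1 : ℝ≥0∞)) a) = 1 := by
        intro k hk
        rw [Set.indicator_of_mem]
        exact Nat.find_min hex hk
      calc (m : ℝ≥0∞) = ∑ k ∈ Finset.range m,
            ({a | ¬ S k a = none} : Set Ω).indicator (fun _ => (1 : ℝ≥0∞)) a := by
            rw [Finset.sum_congr rfl (fun k hk => h2 k (Finset.mem_range.mp hk))]
            simp
        _ ≤ _ := ENNReal.sum_le_tsum _
    · push_neg at hex
      have : ∀ n : ℕ, ({a | ¬ S n a = none} : Set Ω).indicator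
          (fun _ => (1 : ℝ≥0∞)) a = 1 := by
        intro n
        rw [Set.indicator_of_mem]
        exact hex n
      rw [tsum_congr this]
      have : ∑' _ : ℕ, (1 : ℝ≥0∞) = ⊤ := by
        simp [ENNReal.tsum_const_eq_top_of_ne_zero]
      rw [this]
      exact le_top
  calc expSurvival P S
      ≤ ∫⁻ a, ∑' n : ℕ, ({a | ¬ S n a = none} : Set Ω).indicator (fun _ => (1 : ℝ≥0∞)) a ∂P :=
        lintegral_mono hpt
    _ = ∑' n : ℕ, ∫⁻ a, ({a | ¬ S n a = none} : Set Ω).indicator (fun _ => (1 : ℝ≥0∞)) a ∂P :=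
        lintegral_tsum fun n =>
          ((measurable_const.indicator (hm n none).compl)).aemeasurable
    _ = ∑' n : ℕ, Pn n := by
        refine tsum_congr fun n => ?_
        have hcm : MeasurableSet ({a | ¬ S n a = none} : Set Ω) := by
          simpa [Set.compl_setOf] using (hm n none).compl
        rw [lintegral_indicator_const hcm, one_mul]
    _ ≤ f (some 0) := htsum

end TrapAux
end PartA

noncomputable section PartB

namespace TrapAux

def pD (ω : ℕ → Bool) : ℕ → Prop := fun x => ω x = true

instance (ω : ℕ → Bool) : DecidablePred (pD ω) := fun _ => instDecidableEqBool _ _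

def xloc (ω : ℕ → Bool) : ℕ → ℕ := Nat.nth (pD ω)

def idx (ω : ℕ → Bool) (x : ℕ) : ℕ := Nat.findGreatest (fun j => xloc ω j ≤ x) x

def Lr (ω : ℕ → Bool) (i : ℕ) : ℝ := (gapLen ω i : ℝ)

def qc (c : ℝ) : ℝ := 3 * c / (2 * (1 - c))

def VJ (ω : ℕ → Bool) (c : ℝ) (j : ℕ) : ℝ :=
  if j = 0 then
    2 * ((qc c + 3/2) * Lr ω 2 + (1 - qc c) * Lr ω 1 + (2 + qc c)) / Lr ω 1 + 1 + 2 * Lr ω 1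
  else (qc c + 3/2) * Lr ω (j+1) + (1 - qc c) * Lr ω j + (2 + qc c)

def βJ (ω : ℕ → Bool) (c : ℝ) (i : ℕ) : ℝ :=
  (VJ ω c i - VJ ω c (i-1)) / Lr ω i + Lr ω i

def hfun (ω : ℕ → Bool) (c : ℝ) (x : ℕ) : ℝ :=
  VJ ω c (idx ω x) + βJ ω c (idx ω x + 1) * ((x - xloc ω (idx ω x) : ℕ) : ℝ)
    - ((x - xloc ω (idx ω x) : ℕ) : ℝ)^2

section Land

variable {ω : ℕ → Bool} {c : ℝ}

lemma hinf (hω : IsTrapConfig ω) : (setOf (pD ω)).Infinite := hω.2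

lemma xloc_zero (hω : IsTrapConfig ω) : xloc ω 0 = 0 := by
  rw [xloc, Nat.nth_zero]
  exact Nat.sInf_eq_zero.mpr (Or.inl hω.1)

lemma xloc_smono (hω : IsTrapConfig ω) : StrictMono (xloc ω) :=
  Nat.nth_strictMono (hinf hω)

lemma xloc_trap (hω : IsTrapConfig ω) (i : ℕ) : ω (xloc ω i) = true :=
  Nat.nth_mem_of_infinite (hinf hω) i

lemma gapLen_succ (j : ℕ) : gapLen ω (j+1) = xloc ω (j+1) - xloc ω j := rfl

lemma gap_pos (hω : IsTrapConfig ω) (j : ℕ) : 1 ≤ gapLen ω (j+1) := by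
  rw [gapLen_succ]
  have := xloc_smono hω (lt_add_one j)
  omega

lemma Lr_ge_one (hω : IsTrapConfig ω) (i : ℕ) (hi : 1 ≤ i) : (1:ℝ) ≤ Lr ω i := by
  obtain ⟨j, rfl⟩ : ∃ j, i = j + 1 := ⟨i - 1, by omega⟩
  rw [Lr]
  exact_mod_cast gap_pos hω j

lemma Lr_pos (hω : IsTrapConfig ω) (i : ℕ) (hi : 1 ≤ i) : (0:ℝ) < Lr ω i :=
  lt_of_lt_of_le one_pos (Lr_ge_one hω i hi)

lemma Lr_cast (hω : IsTrapConfig ω) (j : ℕ) :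
    (xloc ω j : ℝ) + Lr ω (j+1) = (xloc ω (j+1) : ℝ) := by
  rw [Lr, gapLen_succ]
  have h := (xloc_smono hω (lt_add_one j)).le
  push_cast [Nat.cast_sub h]
  ring

lemma idx_spec1 (hω : IsTrapConfig ω) (x : ℕ) : xloc ω (idx ω x) ≤ x :=
  Nat.findGreatest_spec (P := fun j => xloc ω j ≤ x) (Nat.zero_le x)
    (by show xloc ω 0 ≤ x; rw [xloc_zero hω]; exact Nat.zero_le x)

lemma idx_spec2 (hω : IsTrapConfig ω) (x : ℕ) : x < xloc ω (idx ω x + 1) := by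
  by_contra h
  push_neg at h
  have hle : idx ω x + 1 ≤ x := le_trans (xloc_smono hω).le_apply h
  exact Nat.findGreatest_is_greatest (Nat.lt_succ_self _) hle h

lemma idx_unique (hω : IsTrapConfig ω) {j x : ℕ}
    (h1 : xloc ω j ≤ x) (h2 : x < xloc ω (j+1)) : idx ω x = j := by
  rcases lt_trichotomy (idx ω x) j with h | h | h
  · have hm : xloc ω (idx ω x + 1) ≤ xloc ω j := (xloc_smono hω).monotone (by omega)
    have := idx_spec2 hω x
    omega
  · exact h
  · have hm : xloc ω (j + 1) ≤ xloc ω (idx ω x) := (xloc_smono hω).monotone (by omega)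
    have := idx_spec1 hω x
    omega

lemma trap_idx (hω : IsTrapConfig ω) {x : ℕ} (ht : ω x = true) :
    xloc ω (idx ω x) = x := by
  have h1 : xloc ω (Nat.count (pD ω) x) = x := Nat.nth_count ht
  have h2 : idx ω x = Nat.count (pD ω) x := by
    apply idx_unique hω
    · rw [h1]
    · calc x = xloc ω (Nat.count (pD ω) x) := h1.symm
        _ < _ := xloc_smono hω (lt_add_one _)
  rw [h2, h1]

lemma idx_pos_of_trap (hω : IsTrapConfig ω) {x : ℕ} (ht : ω x = true) (hx : 1 ≤ x) :
    1 ≤ idx ω x := by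
  by_contra h
  push_neg at h
  have h0 : idx ω x = 0 := by omega
  have := trap_idx hω ht
  rw [h0, xloc_zero hω] at this
  omega

/-- interval formula for the Lyapunov function -/
lemma hfun_eq (hω : IsTrapConfig ω) {j x : ℕ}
    (h1 : xloc ω j ≤ x) (h2 : x ≤ xloc ω (j+1)) :
    hfun ω c x = VJ ω c j + βJ ω c (j+1) * ((x:ℝ) - (xloc ω j : ℝ))
      - ((x:ℝ) - (xloc ω j : ℝ))^2 := by
  rcases lt_or_eq_of_le h2 with hlt | heq
  · have hidx := idx_unique hω h1 hlt
    rw [hfun, hidx, Nat.cast_sub h1]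
  · have hidx : idx ω x = j + 1 := by
      apply idx_unique hω
      · omega
      · rw [heq]
        exact xloc_smono hω (lt_add_one _)
    have hz : x - xloc ω (idx ω x) = 0 := by rw [hidx, ← heq]; omega
    rw [hfun, hz, hidx]
    have ht : (x:ℝ) - (xloc ω j : ℝ) = Lr ω (j+1) := by
      rw [heq, ← Lr_cast hω j]; ring
    rw [ht]
    have hL0 : Lr ω (j+1) ≠ 0 := ne_of_gt (Lr_pos hω (j+1) (by omega))
    have hβ : βJ ω c (j+1) * Lr ω (j+1) - Lr ω (j+1)^2 = VJ ω c (j+1) - VJ ω c j := by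
      rw [βJ]
      simp only [Nat.add_sub_cancel]
      field_simp
      ring
    push_cast
    linarith [hβ]

end Land


section MIlemmas

/-- Master inequality, generic interval case, with A = q + 3/2, B = 1 - q, D = 2 + q. -/
lemma MI_generic {c x y z w q : ℝ}
    (hc0 : 0 < c) (hc1 : c < 1) (hq0 : 0 ≤ q)
    (hx : 1 ≤ x) (hy : 1 ≤ y) (hz : 1 ≤ z)
    (hxy : x ≤ y) (hyz : y ≤ z)
    (hzrec : z = c * y ^ 2) (hwrec : w = c * z ^ 2)
    (hqc : (q + 3/2) * c = q) :
    (((q+3/2) * w + (1-q) * z + (2+q)) - ((q+3/2) * z + (1-q) * y + (2+q))) / z + z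
      ≤ ((q+3/2) * z + (1-q) * y + (2+q))
        + ((((q+3/2) * z + (1-q) * y + (2+q)) - ((q+3/2) * y + (1-q) * x + (2+q))) / y + y)
        - 2 * y - 1 := by
  have hy0 : (0:ℝ) < y := by linarith
  have hz0 : (0:ℝ) < z := by linarith
  set r1 : ℝ := y / z with hr1
  set r2 : ℝ := x / y with hr2
  have hr1a : 0 < r1 := by positivity
  have hr1b : r1 ≤ 1 := by rw [hr1, div_le_one hz0]; exact hyz
  have hr2a : 0 < r2 := by positivity
  have hr2b : r2 ≤ 1 := by rw [hr2, div_le_one hy0]; exact hxy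
  have e1 : (((q+3/2) * w + (1-q) * z + (2+q)) - ((q+3/2) * z + (1-q) * y + (2+q))) / z + z
      = q * z - (q+3/2) + (1-q) - (1-q) * r1 + z := by
    rw [hwrec, hr1]
    field_simp
    nlinarith [hqc, sq_nonneg z]
  have e2 : (((q+3/2) * z + (1-q) * y + (2+q)) - ((q+3/2) * y + (1-q) * x + (2+q))) / y + y
      = q * y - (q+3/2) + (1-q) - (1-q) * r2 + y := by
    rw [hzrec, hr2]
    field_simp
    nlinarith [hqc, sq_nonneg y]
  rw [e1, e2]
  rcases le_or_gt q 1 with hql | hqg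
  · nlinarith [mul_nonneg (sub_nonneg.mpr hql) (sub_nonneg.mpr hr2b),
      mul_nonneg (sub_nonneg.mpr hql) hr1a.le]
  · nlinarith [mul_nonneg (sub_nonneg.mpr hqg.le) (sub_nonneg.mpr hr1b),
      mul_nonneg (sub_nonneg.mpr hqg.le) hr2a.le]

set_option maxHeartbeats 2000000 in
/-- Junction inequality at the first trap. u = L₁, y = L₂, z = L₃. -/
lemma MI_one {c u y z q : ℝ}
    (hc0 : 0 < c) (hc1 : c < 1) (hq0 : 0 ≤ q)
    (hu3 : 3 ≤ u) (hcu : 1 ≤ c * u)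
    (hy : y = c * u ^ 2) (hz : z = c * y ^ 2)
    (hqc : (q + 3/2) * c = q)
    (hδ : c + 2 / (c * u ^ 2) < 1) :
    ((((q+3/2) * z + (1-q) * y + (2+q)) - ((q+3/2) * y + (1-q) * u + (2+q))) / y + y)
      ≤ ((q+3/2) * y + (1-q) * u + (2+q))
        + ((((q+3/2) * y + (1-q) * u + (2+q))
            - (2 * ((q+3/2) * y + (1-q) * u + (2+q)) / u + 1 + 2 * u)) / u + u)
        - 2 * u - 1 := by
  have hu0 : (0:ℝ) < u := by linarith
  have hyu : u ≤ y := by nlinarith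
  have hy0 : (0:ℝ) < y := by linarith
  have hq32 : (0:ℝ) < q + 3/2 := by linarith
  have hcq : c = q / (q + 3/2) := by
    field_simp
    linarith [hqc]
  have h1c : (0:ℝ) < 1 - c := by linarith
  have hq1c : q * (1 - c) = 3/2 * c := by nlinarith [hqc]
  have h5 : 2 < (1 - c) * c * u ^ 2 := by
    have hcu2 : (0:ℝ) < c * u ^ 2 := by positivity
    have h2cu : 2 / (c * u ^ 2) < 1 - c := by linarith
    rw [div_lt_iff₀ hcu2] at h2cu
    nlinarith [h2cu]
  have key : ((q+3/2) * y + (1-q) * u + (2+q))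
        + ((((q+3/2) * y + (1-q) * u + (2+q))
            - (2 * ((q+3/2) * y + (1-q) * u + (2+q)) / u + 1 + 2 * u)) / u + u)
        - 2 * u - 1
      - ((((q+3/2) * z + (1-q) * y + (2+q)) - ((q+3/2) * y + (1-q) * u + (2+q))) / y + y)
      = y / 2 + 1/2 + (3*q - 1) * (1/u) - (4 + 2*q) * (1/u)^2 + (1-q) * (u/y) := by
    have hqpos : (0:ℝ) < q := by nlinarith [hqc]
    rw [hz, hy, hcq]
    have hu' : u ≠ 0 := ne_of_gt hu0
    have hq32' : q + 3/2 ≠ 0 := ne_of_gt hq32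
    have hq' : q ≠ 0 := ne_of_gt hqpos
    field_simp
    ring
  rw [← sub_nonneg, key]
  have htuy0 : 0 < u / y := by positivity
  have htuy1 : u / y ≤ 1 := by rw [div_le_one hy0]; exact hyu
  have hs0 : 0 < 1/u := by positivity
  have hs3 : 1/u ≤ 1/3 := by
    rw [div_le_div_iff₀ hu0 (by norm_num : (0:ℝ) < 3)]; linarith
  have hy3 : 3 ≤ y := le_trans hu3 hyu
  rcases le_or_gt q 1 with hql | hqg
  · have h1 : -(1:ℝ)/3 ≤ (3*q - 1) * (1/u) := by nlinarith
    have h2 : (4 + 2*q) * (1/u)^2 ≤ 2/3 := by nlinarith [sq_nonneg (1/u)]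
    have h3 : 0 ≤ (1-q) * (u/y) := mul_nonneg (by linarith) htuy0.le
    linarith
  · have huy : u / y = 1 / (c * u) := by
      rw [hy]; field_simp
    have hcu0 : (0:ℝ) < c * u := by positivity
    have h1 : 0 ≤ (3*q - 1) * (1/u) + (1-q) * (u/y) := by
      rw [huy]
      have expand : (3*q - 1) * (1/u) + (1-q) * (1/(c*u)) = ((3*q-1)*c + (1-q)) / (c*u) := by
        field_simp
      rw [expand]
      apply div_nonneg _ hcu0.le
      nlinarith [hqc, sq_nonneg (2*q - 1)]
    have h2 : (4 + 2*q) * (1/u)^2 ≤ 2 := by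
      have hus : u * (1/u) = 1 := by field_simp
      have h4s : (4:ℝ) * (1/u)^2 ≤ 4/9 := by nlinarith [sq_nonneg (1/u), hs3, hs0]
      have h2q : 2*q * (1/u)^2 ≤ 3/2 := by
        have h6 : 2 * (1/u)^2 < (1-c)*c := by
          calc 2 * (1/u)^2 < ((1-c)*c*u^2) * (1/u)^2 := by
                apply mul_lt_mul_of_pos_right h5 (by positivity)
            _ = (1-c)*c := by field_simp
        nlinarith [h6, hq1c, mul_pos hs0 hs0, sq_nonneg c, mul_nonneg hq0 (sq_nonneg (1/u))]
      linarith
    linarith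

end MIlemmas

section Drift

variable {ω : ℕ → Bool} {c : ℝ}

/-- bundle of scalar hypotheses -/
structure Hyp (ω : ℕ → Bool) (c : ℝ) : Prop where
  hω : IsTrapConfig ω
  hrec : QuadRec ω c
  hc0 : 0 < c
  hc1 : c < 1
  hcu : 1 ≤ c * Lr ω 1
  hu3 : (3:ℝ) ≤ Lr ω 1
  hδ : c + 2 / (c * Lr ω 1 ^ 2) < 1

namespace Hyp

variable (H : Hyp ω c)

include H

lemma hrecL : ∀ j, 1 ≤ j → Lr ω (j+1) = c * Lr ω j ^ 2 := fun j hj => H.hrec j hj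

lemma hq0 : 0 ≤ qc c := by
  have := H.hc0; have := H.hc1
  rw [qc]
  apply div_nonneg <;> linarith

lemma hqc : (qc c + 3/2) * c = qc c := by
  have h1c : (1:ℝ) - c ≠ 0 := by have := H.hc1; intro h; linarith
  rw [qc]
  field_simp
  ring

lemma hcL : ∀ j, 1 ≤ j → 1 ≤ c * Lr ω j := by
  intro j hj
  induction j with
  | zero => omega
  | succ n ih =>
    rcases eq_or_lt_of_le hj with h1 | h2
    · rw [← h1] at *
      simpa using H.hcu
    · have hn : 1 ≤ n := by omega
      have h := ih hn
      rw [H.hrecL n hn]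
      nlinarith [h]

lemma hmono : ∀ j, 1 ≤ j → Lr ω j ≤ Lr ω (j+1) := by
  intro j hj
  rw [H.hrecL j hj]
  nlinarith [H.hcL j hj, Lr_ge_one H.hω j hj]

lemma hLcast (j : ℕ) (hj : 1 ≤ j) : (1:ℝ) ≤ Lr ω j := Lr_ge_one H.hω j hj

lemma hMI : ∀ j, 1 ≤ j → βJ ω c (j+1) ≤ VJ ω c j + βJ ω c j - 2 * Lr ω j - 1 := by
  intro j hj
  have hv : ∀ i, 1 ≤ i → VJ ω c i
      = (qc c + 3/2) * Lr ω (i+1) + (1 - qc c) * Lr ω i + (2 + qc c) := by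
    intro i hi
    rw [VJ, if_neg (by omega)]
  rcases eq_or_lt_of_le hj with h1 | h2
  · -- j = 1
    subst h1
    have hv0 : VJ ω c 0 = 2 * ((qc c + 3/2) * Lr ω 2 + (1 - qc c) * Lr ω 1 + (2 + qc c))
        / Lr ω 1 + 1 + 2 * Lr ω 1 := by rw [VJ, if_pos rfl]
    have hv1 := hv 1 le_rfl
    have hv2 := hv 2 (by omega)
    have hb2 : βJ ω c 2 = (VJ ω c 2 - VJ ω c 1) / Lr ω 2 + Lr ω 2 := by
      rw [βJ]
    have hb1 : βJ ω c 1 = (VJ ω c 1 - VJ ω c 0) / Lr ω 1 + Lr ω 1 := by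
      rw [βJ]
    rw [hb2, hb1, hv2, hv1, hv0]
    have := MI_one H.hc0 H.hc1 H.hq0 H.hu3 H.hcu (H.hrecL 1 le_rfl)
      (H.hrecL 2 (by omega)) H.hqc H.hδ
    linarith [this]
  · -- j ≥ 2
    obtain ⟨m, rfl⟩ : ∃ m, j = m + 2 := ⟨j - 2, by omega⟩
    have hv1 := hv (m+1) (by omega)
    have hv2 := hv (m+2) (by omega)
    have hv3 := hv (m+3) (by omega)
    have hb3 : βJ ω c (m+3) = (VJ ω c (m+3) - VJ ω c (m+2)) / Lr ω (m+3) + Lr ω (m+3) := by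
      rw [βJ]
      congr 2
    have hb2 : βJ ω c (m+2) = (VJ ω c (m+2) - VJ ω c (m+1)) / Lr ω (m+2) + Lr ω (m+2) := by
      rw [βJ]
      congr 2
    rw [hb3, hb2, hv3, hv2, hv1]
    have := MI_generic H.hc0 H.hc1 H.hq0 (H.hLcast (m+1) (by omega))
      (H.hLcast (m+2) (by omega)) (H.hLcast (m+3) (by omega))
      (H.hmono (m+1) (by omega)) (H.hmono (m+2) (by omega))
      (H.hrecL (m+2) (by omega)) (H.hrecL (m+3) (by omega)) H.hqc
    linarith [this]

lemma hVpos1 : ∀ j, 1 ≤ j → 0 ≤ VJ ω c j := by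
  intro j hj
  rw [VJ, if_neg (by omega)]
  have hL := H.hLcast j hj
  have hq := H.hq0
  have key : (qc c + 3/2) * Lr ω (j+1) = qc c * Lr ω j ^ 2 := by
    rw [H.hrecL j hj]
    linear_combination (Lr ω j ^ 2) * H.hqc
  rw [key]
  nlinarith [mul_nonneg hq (mul_nonneg (by linarith : (0:ℝ) ≤ Lr ω j)
    (by linarith : (0:ℝ) ≤ Lr ω j - 1)), sq_nonneg (Lr ω j)]

lemma hV0eq : VJ ω c 0 = 2 * VJ ω c 1 / Lr ω 1 + 1 + 2 * Lr ω 1 := by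
  have hv1 : VJ ω c 1
      = (qc c + 3/2) * Lr ω 2 + (1 - qc c) * Lr ω 1 + (2 + qc c) := by
    rw [VJ, if_neg (by omega)]
  rw [VJ, if_pos rfl, ← hv1]

lemma hVpos : ∀ j, 0 ≤ VJ ω c j := by
  intro j
  rcases Nat.eq_zero_or_pos j with h0 | h1
  · subst h0
    rw [H.hV0eq]
    have h1 := H.hVpos1 1 le_rfl
    have hu := H.hu3
    have := div_nonneg (by linarith : (0:ℝ) ≤ 2 * VJ ω c 1) (by linarith : (0:ℝ) ≤ Lr ω 1)
    linarith
  · exact H.hVpos1 j h1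

/-- values of hfun are nonnegative -/
lemma hfun_pos (x : ℕ) : 0 ≤ hfun ω c x := by
  set j := idx ω x with hj
  have h1 : xloc ω j ≤ x := idx_spec1 H.hω x
  have h2 : x < xloc ω (j+1) := idx_spec2 H.hω x
  have heq := hfun_eq (c := c) H.hω h1 h2.le
  set t : ℝ := (x:ℝ) - (xloc ω j : ℝ) with hT
  set L : ℝ := Lr ω (j+1) with hL
  have hL1 : (1:ℝ) ≤ L := H.hLcast (j+1) (by omega)
  have hL0 : L ≠ 0 := by linarith
  have ht0 : 0 ≤ t := by
    rw [hT]
    have : (xloc ω j : ℝ) ≤ (x:ℝ) := by exact_mod_cast h1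
    linarith
  have htL : t ≤ L := by
    have hc2 : (x:ℝ) ≤ (xloc ω (j+1) : ℝ) := by exact_mod_cast h2.le
    have := Lr_cast H.hω j
    rw [hT, hL]
    linarith [this]
  have hid : VJ ω c j + βJ ω c (j+1) * t - t^2
      = (1 - t/L) * VJ ω c j + (t/L) * VJ ω c (j+1) + t * (L - t) := by
    rw [βJ]
    simp only [Nat.add_sub_cancel]
    rw [← hL]
    field_simp
    ring
  rw [heq, hid]
  have e1 : 0 ≤ 1 - t/L := by
    rw [sub_nonneg, div_le_one (by linarith : (0:ℝ) < L)]
    exact htL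
  have e2 : 0 ≤ t/L := div_nonneg ht0 (by linarith)
  have e3 := H.hVpos j
  have e4 := H.hVpos (j+1)
  have e5 : 0 ≤ t * (L - t) := mul_nonneg ht0 (by linarith)
  exact add_nonneg (add_nonneg (mul_nonneg e1 e3) (mul_nonneg e2 e4)) e5

lemma drift_zero : 2 * hfun ω c 1 + 3 ≤ 3 * hfun ω c 0 := by
  have hx0 : xloc ω 0 = 0 := xloc_zero H.hω
  have hx1 : 1 ≤ xloc ω (0+1) := by
    have := xloc_smono H.hω (lt_add_one 0)
    omega
  have h0 : hfun ω c 0 = VJ ω c 0 := by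
    have he := hfun_eq (c := c) H.hω (j := 0) (x := 0) (by omega) (Nat.zero_le _)
    rw [he, hx0]
    norm_num
  have h1 : hfun ω c 1 = VJ ω c 0 + βJ ω c 1 - 1 := by
    have he := hfun_eq (c := c) H.hω (j := 0) (x := 1) (by omega) hx1
    rw [he, hx0]
    norm_num
  rw [h0, h1]
  have hb1 : βJ ω c 1 = (VJ ω c 1 - VJ ω c 0) / Lr ω 1 + Lr ω 1 := by
    rw [βJ]
  have hu := H.hu3
  have hV0p := H.hVpos 0
  have hu0 : (0:ℝ) < Lr ω 1 := by linarith
  have key : VJ ω c 0 - (2 * βJ ω c 1 + 1) = 2 * VJ ω c 0 / Lr ω 1 := by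
    rw [hb1, H.hV0eq]
    field_simp
    ring
  have hpos : 0 ≤ 2 * VJ ω c 0 / Lr ω 1 := div_nonneg (by linarith) (by linarith)
  linarith [key]

lemma drift_mid {x : ℕ} (hnt : ω x = false) :
    hfun ω c (x-1) + hfun ω c (x+1) + 2 ≤ 2 * hfun ω c x := by
  have hx1 : 1 ≤ x := by
    rcases Nat.eq_zero_or_pos x with h | h
    · exfalso; rw [h] at hnt; rw [H.hω.1] at hnt; simp at hnt
    · exact h
  set j := idx ω x with hjdef
  have h1 : xloc ω j ≤ x := idx_spec1 H.hω x
  have h2 : x < xloc ω (j+1) := idx_spec2 H.hω x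
  have hne : xloc ω j ≠ x := by
    intro h
    have := xloc_trap H.hω j
    rw [h, hnt] at this
    simp at this
  have h1' : xloc ω j ≤ x - 1 := by omega
  have h2' : x - 1 ≤ xloc ω (j+1) := by omega
  have h1'' : xloc ω j ≤ x + 1 := by omega
  have h2'' : x + 1 ≤ xloc ω (j+1) := by omega
  have e0 := hfun_eq (c := c) H.hω h1 h2.le
  have e1 := hfun_eq (c := c) H.hω h1' h2'
  have e2 := hfun_eq (c := c) H.hω h1'' h2''
  rw [e0, e1, e2]
  have hc1 : ((x - 1 : ℕ) : ℝ) = (x:ℝ) - 1 := by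
    push_cast [Nat.cast_sub hx1]
    ring
  push_cast [hc1]
  apply le_of_eq
  ring

lemma drift_trap {x : ℕ} (ht : ω x = true) (hx : 1 ≤ x) :
    hfun ω c (x-1) + hfun ω c (x+1) + 3 ≤ 3 * hfun ω c x := by
  obtain ⟨k, hk⟩ : ∃ k, idx ω x = k + 1 :=
    ⟨idx ω x - 1, by have := idx_pos_of_trap H.hω ht hx; omega⟩
  have hjx := trap_idx H.hω ht
  have hxk : xloc ω (k+1) = x := by rw [← hk, hjx]
  have hkx : xloc ω k < x := by
    rw [← hxk]; exact xloc_smono H.hω (lt_add_one k)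
  have hk2 : x < xloc ω (k+1+1) := by
    have := xloc_smono H.hω (lt_add_one (k+1))
    omega
  have hxr : ((xloc ω (k+1) : ℕ) : ℝ) = (x:ℝ) := by exact_mod_cast hxk
  have hgap := Lr_cast H.hω k
  have hL1 : (1:ℝ) ≤ Lr ω (k+1) := H.hLcast (k+1) (by omega)
  have e0 : hfun ω c x = VJ ω c (k+1) := by
    have he := hfun_eq (c := c) H.hω (j := k+1) (x := x) (by omega) (by omega)
    rw [he]
    rw [hxr]
    ring
  have e1 : hfun ω c (x-1)
      = VJ ω c k + βJ ω c (k+1) * (Lr ω (k+1) - 1) - (Lr ω (k+1) - 1)^2 := by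
    have h1' : xloc ω k ≤ x - 1 := by omega
    have h2' : x - 1 ≤ xloc ω (k+1) := by omega
    have he := hfun_eq (c := c) H.hω h1' h2'
    rw [he]
    have hcast : ((x-1:ℕ):ℝ) - (xloc ω k:ℝ) = Lr ω (k+1) - 1 := by
      have hc2 : ((x-1:ℕ):ℝ) = (x:ℝ) - 1 := by
        push_cast [Nat.cast_sub hx]; ring
      rw [hc2]
      linarith [hgap, hxr]
    rw [hcast]
  have e2 : hfun ω c (x+1) = VJ ω c (k+1) + βJ ω c (k+1+1) - 1 := by
    have h1' : xloc ω (k+1) ≤ x + 1 := by omega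
    have h2' : x + 1 ≤ xloc ω (k+1+1) := by omega
    have he := hfun_eq (c := c) H.hω h1' h2'
    rw [he]
    have hcast : ((x+1:ℕ):ℝ) - (xloc ω (k+1):ℝ) = 1 := by
      push_cast
      linarith [hxr]
    rw [hcast]
    ring
  rw [e0, e1, e2]
  have hVrel : VJ ω c k + βJ ω c (k+1) * Lr ω (k+1) - Lr ω (k+1)^2 = VJ ω c (k+1) := by
    rw [βJ]
    simp only [Nat.add_sub_cancel]
    field_simp
    ring
  have hmi := H.hMI (k+1) (by omega)
  nlinarith [hVrel, hmi]

lemma hV0bound : VJ ω c 0 * (1 - c - 2/(c * Lr ω 1^2)) ≤ 6 * Lr ω 1 := by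
  have hu := H.hu3
  have hc0 := H.hc0
  have hc1 := H.hc1
  have hq0 := H.hq0
  have hu0 : (0:ℝ) < Lr ω 1 := by linarith
  have hδ1 : 1 - c - 2/(c * Lr ω 1^2) ≤ 1 - c := by
    have : 0 < 2/(c * Lr ω 1^2) := by positivity
    linarith
  have hV0p := H.hVpos 0
  have step1 : VJ ω c 0 * (1 - c - 2/(c * Lr ω 1^2)) ≤ VJ ω c 0 * (1-c) :=
    mul_le_mul_of_nonneg_left hδ1 hV0p
  have hV0u : VJ ω c 0 * Lr ω 1 = 2 * VJ ω c 1 + Lr ω 1 + 2 * Lr ω 1^2 := by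
    rw [H.hV0eq]
    field_simp
  have hv1 : VJ ω c 1 = (qc c + 3/2) * Lr ω 2 + (1 - qc c) * Lr ω 1 + (2 + qc c) := by
    rw [VJ, if_neg (by omega)]
  have hy : Lr ω 2 = c * Lr ω 1^2 := H.hrecL 1 le_rfl
  have hq1c : qc c * (1-c) = 3/2 * c := by nlinarith [H.hqc]
  have main : VJ ω c 0 * (1-c) * Lr ω 1 ≤ (6 * Lr ω 1) * Lr ω 1 := by
    have expand : VJ ω c 0 * (1-c) * Lr ω 1
        = (2 * VJ ω c 1 + Lr ω 1 + 2 * Lr ω 1^2) * (1-c) := by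
      rw [← hV0u]; ring
    rw [expand, hv1, hy]
    have hqu : (qc c + 3/2) * c * Lr ω 1^2 = qc c * Lr ω 1^2 := by
      linear_combination (Lr ω 1^2) * H.hqc
    have hq1cu : qc c * (1-c) * Lr ω 1^2 = 3/2 * c * Lr ω 1^2 := by
      linear_combination (Lr ω 1^2) * hq1c
    have hq1cu1 : qc c * (1-c) * Lr ω 1 = 3/2 * c * Lr ω 1 := by
      linear_combination (Lr ω 1) * hq1c
    nlinarith [hqu, hq1cu, hq1cu1, hq1c, hq0, hc0, hc1, hu, sq_nonneg (Lr ω 1),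
      mul_nonneg hq0 (by linarith : (0:ℝ) ≤ 1 - c), hu0]
  have hfin : VJ ω c 0 * (1-c) ≤ 6 * Lr ω 1 :=
    le_of_mul_le_mul_right (by linarith [main]) hu0
  linarith [step1, hfin]

lemma hfun_zero : hfun ω c 0 = VJ ω c 0 := by
  have hx0 : xloc ω 0 = 0 := xloc_zero H.hω
  have he := hfun_eq (c := c) H.hω (j := 0) (x := 0) (by omega) (Nat.zero_le _)
  rw [he, hx0]
  norm_num

open ENNReal in
lemma drift_ennreal (x : ℕ) :
    (∑' y : Option ℕ, ENNReal.ofReal (transProb ω (some x) y)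
        * (y.elim 0 (fun z => ENNReal.ofReal (hfun ω c z)))) + 1
      ≤ ENNReal.ofReal (hfun ω c x) := by
  set f : Option ℕ → ℝ≥0∞ := fun y => y.elim 0 (fun z => ENNReal.ofReal (hfun ω c z)) with hf
  have p0 : ∀ z : ℕ, 0 ≤ hfun ω c z := fun z => H.hfun_pos z
  by_cases hx0 : x = 0
  · subst hx0
    have hsum : (∑' y : Option ℕ, ENNReal.ofReal (transProb ω (some 0) y) * f y)
        = ENNReal.ofReal (2/3) * ENNReal.ofReal (hfun ω c 1) := by
      rw [tsum_eq_single (some 1) ?_]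
      · have h23 : transProb ω (some 0) (some 1) = 2/3 := by simp [transProb]
        rw [h23]
        rfl
      · intro y hy
        match y with
        | none => simp [hf]
        | some m =>
          have hm : m ≠ 1 := by intro h; exact hy (by rw [h])
          have h0 : transProb ω (some 0) (some m) = 0 := by simp [transProb, hm]
          rw [h0]
          simp
    rw [hsum]
    have hd := H.drift_zero
    calc ENNReal.ofReal (2/3) * ENNReal.ofReal (hfun ω c 1) + 1
        = ENNReal.ofReal (2/3 * hfun ω c 1 + 1) := by
          rw [← ENNReal.ofReal_mul (by norm_num : (0:ℝ) ≤ 2/3), ← ENNReal.ofReal_one,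
            ← ENNReal.ofReal_add (mul_nonneg (by norm_num) (p0 1)) (by norm_num)]
      _ ≤ ENNReal.ofReal (hfun ω c 0) := ENNReal.ofReal_le_ofReal (by linarith)
  · have hx : 1 ≤ x := by omega
    have hne : (some (x-1) : Option ℕ) ≠ some (x+1) := by
      intro h
      have : x - 1 = x + 1 := Option.some_injective _ h
      omega
    have hpair : ({some (x-1), some (x+1)} : Finset (Option ℕ)).sum
          (fun y => ENNReal.ofReal (transProb ω (some x) y) * f y)
        = ENNReal.ofReal (transProb ω (some x) (some (x-1))) * f (some (x-1))
          + ENNReal.ofReal (transProb ω (some x) (some (x+1))) * f (some (x+1)) :=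
      Finset.sum_pair hne
    by_cases ht : ω x = true
    · have hsum : (∑' y : Option ℕ, ENNReal.ofReal (transProb ω (some x) y) * f y)
          = ENNReal.ofReal (1/3) * ENNReal.ofReal (hfun ω c (x-1))
            + ENNReal.ofReal (1/3) * ENNReal.ofReal (hfun ω c (x+1)) := by
        rw [tsum_eq_sum (s := {some (x-1), some (x+1)}) ?_]
        · rw [hpair]
          have tl : transProb ω (some x) (some (x-1)) = 1/3 := by
            simp [transProb, hx0, ht]
          have tr : transProb ω (some x) (some (x+1)) = 1/3 := by
            simp [transProb, hx0, ht]
          rw [tl, tr]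
          rfl
        · intro y hy
          match y with
          | none => simp [hf]
          | some m =>
            simp only [Finset.mem_insert, Finset.mem_singleton] at hy
            push_neg at hy
            have hm1 : m ≠ x - 1 := by intro h; exact hy.1 (by rw [h])
            have hm2 : m ≠ x + 1 := by intro h; exact hy.2 (by rw [h])
            have h0 : transProb ω (some x) (some m) = 0 := by
              simp [transProb, hx0, ht, hm1, hm2]
            rw [h0]
            simp
      rw [hsum]
      have hd := H.drift_trap ht hx
      calc ENNReal.ofReal (1/3) * ENNReal.ofReal (hfun ω c (x-1))
            + ENNReal.ofReal (1/3) * ENNReal.ofReal (hfun ω c (x+1)) + 1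
          = ENNReal.ofReal (1/3 * hfun ω c (x-1) + 1/3 * hfun ω c (x+1) + 1) := by
            rw [← ENNReal.ofReal_mul (by norm_num : (0:ℝ) ≤ 1/3),
              ← ENNReal.ofReal_mul (by norm_num : (0:ℝ) ≤ 1/3),
              ← ENNReal.ofReal_add (mul_nonneg (by norm_num) (p0 (x-1)))
                (mul_nonneg (by norm_num) (p0 (x+1))),
              ← ENNReal.ofReal_one,
              ← ENNReal.ofReal_add
                (add_nonneg (mul_nonneg (by norm_num) (p0 (x-1)))
                  (mul_nonneg (by norm_num) (p0 (x+1)))) (by norm_num)]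
        _ ≤ ENNReal.ofReal (hfun ω c x) := ENNReal.ofReal_le_ofReal (by linarith)
    · have hsum : (∑' y : Option ℕ, ENNReal.ofReal (transProb ω (some x) y) * f y)
          = ENNReal.ofReal (1/2) * ENNReal.ofReal (hfun ω c (x-1))
            + ENNReal.ofReal (1/2) * ENNReal.ofReal (hfun ω c (x+1)) := by
        rw [tsum_eq_sum (s := {some (x-1), some (x+1)}) ?_]
        · rw [hpair]
          have tl : transProb ω (some x) (some (x-1)) = 1/2 := by
            simp [transProb, hx0, ht]
          have tr : transProb ω (some x) (some (x+1)) = 1/2 := by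
            simp [transProb, hx0, ht]
          rw [tl, tr]
          rfl
        · intro y hy
          match y with
          | none => simp [hf]
          | some m =>
            simp only [Finset.mem_insert, Finset.mem_singleton] at hy
            push_neg at hy
            have hm1 : m ≠ x - 1 := by intro h; exact hy.1 (by rw [h])
            have hm2 : m ≠ x + 1 := by intro h; exact hy.2 (by rw [h])
            have h0 : transProb ω (some x) (some m) = 0 := by
              simp [transProb, hx0, ht, hm1, hm2]
            rw [h0]
            simp
      rw [hsum]
      have hnt : ω x = false := by
        rcases Bool.eq_false_or_eq_true (ω x) with h | h
        · exact absurd h ht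
        · exact h
      have hd := H.drift_mid hnt
      calc ENNReal.ofReal (1/2) * ENNReal.ofReal (hfun ω c (x-1))
            + ENNReal.ofReal (1/2) * ENNReal.ofReal (hfun ω c (x+1)) + 1
          = ENNReal.ofReal (1/2 * hfun ω c (x-1) + 1/2 * hfun ω c (x+1) + 1) := by
            rw [← ENNReal.ofReal_mul (by norm_num : (0:ℝ) ≤ 1/2),
              ← ENNReal.ofReal_mul (by norm_num : (0:ℝ) ≤ 1/2),
              ← ENNReal.ofReal_add (mul_nonneg (by norm_num) (p0 (x-1)))
                (mul_nonneg (by norm_num) (p0 (x+1))),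
              ← ENNReal.ofReal_one,
              ← ENNReal.ofReal_add
                (add_nonneg (mul_nonneg (by norm_num) (p0 (x-1)))
                  (mul_nonneg (by norm_num) (p0 (x+1)))) (by norm_num)]
        _ ≤ ENNReal.ofReal (hfun ω c x) := ENNReal.ofReal_le_ofReal (by linarith)

end Hyp

end Drift

end TrapAux
end PartB

set_option maxHeartbeats 2000000 in
/-- geometric upper bound for the expected survival time. -/
theorem expSurvival_upper_bound
    (ω : ℕ → Bool) (hω : IsTrapConfig ω) (c : ℝ) (hrec : QuadRec ω c)
    (hc : ((gapLen ω 1 : ℝ))⁻¹ ≤ c)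
    {Ω : Type*} [MeasurableSpace Ω] (P : MeasureTheory.Measure Ω)
    (S : ℕ → Ω → Option ℕ) (hS : IsTrappedRW ω P S)
    (ρ : ℝ)
    (hρ : ρ = (c / 3) * (1 + 2 / c + 2 / (c ^ 2 * (gapLen ω 1 : ℝ) ^ 2))) :
    expSurvival P S
        ≤ ENNReal.ofReal (2 * (gapLen ω 1 : ℝ)) * ∑' i : ℕ, ENNReal.ofReal ρ ^ i ∧
    (ρ < 1 →
      expSurvival P S ≤ ENNReal.ofReal (2 * (gapLen ω 1 : ℝ) / (1 - ρ)) ∧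
      expSurvival P S < ⊤) := by
  classical
  have hu1nat : 1 ≤ gapLen ω 1 := TrapAux.gap_pos hω 0
  have hu1 : (1:ℝ) ≤ (gapLen ω 1 : ℝ) := by exact_mod_cast hu1nat
  have hu0 : (0:ℝ) < (gapLen ω 1 : ℝ) := by linarith
  have hc0 : 0 < c := lt_of_lt_of_le (inv_pos.mpr hu0) hc
  rcases lt_or_ge ρ 1 with hρlt | hρge
  · -- ρ < 1 : the real case
    have hcu : 1 ≤ c * TrapAux.Lr ω 1 := by
      have h2 : (gapLen ω 1:ℝ)⁻¹ * (gapLen ω 1:ℝ) = 1 := inv_mul_cancel₀ (ne_of_gt hu0)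
      have h3 : (gapLen ω 1:ℝ)⁻¹ * (gapLen ω 1:ℝ) ≤ c * (gapLen ω 1:ℝ) :=
        mul_le_mul_of_nonneg_right hc (le_of_lt hu0)
      rw [h2] at h3
      exact h3
    have hρ' : ρ = c/3 + 2/3 + 2/(3*c*(gapLen ω 1:ℝ)^2) := by
      rw [hρ]
      field_simp
    have hδ3 : 1 - c - 2/(c*(gapLen ω 1:ℝ)^2) = 3*(1-ρ) := by
      rw [hρ']
      field_simp
      ring
    have hδpos : 0 < 1 - c - 2/(c*(gapLen ω 1:ℝ)^2) := by rw [hδ3]; linarith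
    have h2pos : 0 < 2/(c*(gapLen ω 1:ℝ)^2) := by
      apply div_pos (by norm_num)
      nlinarith [mul_pos hc0 (mul_pos hu0 hu0)]
    have hc1 : c < 1 := by linarith
    have hδ : c + 2/(c*(gapLen ω 1:ℝ)^2) < 1 := by linarith
    have hu3 : (3:ℝ) ≤ (gapLen ω 1:ℝ) := by
      by_contra hcon
      push_neg at hcon
      have hn : gapLen ω 1 ≤ 2 := by
        have h4 : gapLen ω 1 < 3 := by exact_mod_cast hcon
        omega
      have hu2 : (gapLen ω 1:ℝ) ≤ 2 := by exact_mod_cast hn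
      have hcu2 : c * (gapLen ω 1:ℝ)^2 ≤ 4*c := by
        nlinarith [mul_nonneg hc0.le (mul_nonneg
          (by linarith : (0:ℝ) ≤ 2 - (gapLen ω 1:ℝ))
          (by linarith : (0:ℝ) ≤ 2 + (gapLen ω 1:ℝ)))]
      have hcu2p : 0 < c * (gapLen ω 1:ℝ)^2 := by
        nlinarith [mul_pos hc0 (mul_pos hu0 hu0)]
      have hge : (2:ℝ)/(4*c) ≤ 2/(c*(gapLen ω 1:ℝ)^2) := by
        rw [div_le_div_iff₀ (by linarith) hcu2p]
        nlinarith
      have hlt : (2:ℝ)/(4*c) < 1 - c := by linarith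
      have h12 : (2:ℝ)/(4*c)*(4*c) = 2 := by field_simp
      have h13 := mul_lt_mul_of_pos_right hlt (by linarith : (0:ℝ) < 4*c)
      rw [h12] at h13
      nlinarith [sq_nonneg (2*c - 1)]
    have H : TrapAux.Hyp ω c := ⟨hω, hrec, hc0, hc1, hcu, hu3, hδ⟩
    have hb : expSurvival P S ≤ ENNReal.ofReal (TrapAux.hfun ω c 0) :=
      TrapAux.expSurvival_le_of_drift ω P S hS
        (fun y => y.elim 0 (fun z => ENNReal.ofReal (TrapAux.hfun ω c z))) rfl
        (fun x => H.drift_ennreal x)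
    rw [show TrapAux.hfun ω c 0 = TrapAux.VJ ω c 0 from H.hfun_zero] at hb
    have hVb : TrapAux.VJ ω c 0 ≤ 2*(gapLen ω 1:ℝ)/(1-ρ) := by
      have h6 := H.hV0bound
      have hLr : TrapAux.Lr ω 1 = (gapLen ω 1:ℝ) := rfl
      rw [hLr] at h6
      rw [le_div_iff₀ (by linarith : (0:ℝ) < 1 - ρ)]
      have h7 : TrapAux.VJ ω c 0 * (3*(1-ρ)) ≤ 6 * (gapLen ω 1:ℝ) := by
        rw [← hδ3]
        exact h6
      linarith
    have hmain : expSurvival P S ≤ ENNReal.ofReal (2*(gapLen ω 1:ℝ)/(1-ρ)) :=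
      le_trans hb (ENNReal.ofReal_le_ofReal hVb)
    have hρ0 : 0 ≤ ρ := by
      rw [hρ']
      have h8 : 0 < 2/(3*c*(gapLen ω 1:ℝ)^2) := by
        apply div_pos (by norm_num)
        nlinarith [mul_pos hc0 (mul_pos hu0 hu0)]
      linarith
    have hgeom : ENNReal.ofReal (2*(gapLen ω 1:ℝ)) * ∑' i:ℕ, ENNReal.ofReal ρ ^ i
        = ENNReal.ofReal (2*(gapLen ω 1:ℝ)/(1-ρ)) := by
      rw [ENNReal.tsum_geometric]
      have h1 : (1:ℝ≥0∞) - ENNReal.ofReal ρ = ENNReal.ofReal (1-ρ) := by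
        rw [← ENNReal.ofReal_one]
        exact (ENNReal.ofReal_sub 1 hρ0).symm
      rw [h1, ← ENNReal.ofReal_inv_of_pos (by linarith : (0:ℝ) < 1-ρ),
        ← ENNReal.ofReal_mul (by linarith : (0:ℝ) ≤ 2*(gapLen ω 1:ℝ))]
      rw [div_eq_mul_inv]
    refine ⟨?_, fun _ => ⟨hmain, lt_of_le_of_lt hmain ENNReal.ofReal_lt_top⟩⟩
    rw [hgeom]
    exact hmain
  · -- ρ ≥ 1 : right-hand side is ⊤
    refine ⟨?_, fun hlt => absurd hlt (not_lt.mpr hρge)⟩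
    have h1 : (1:ℝ≥0∞) ≤ ENNReal.ofReal ρ := by
      rw [← ENNReal.ofReal_one]
      exact ENNReal.ofReal_le_ofReal hρge
    have htop : (∑' _ : ℕ, (1:ℝ≥0∞)) = ⊤ :=
      ENNReal.tsum_const_eq_top_of_ne_zero (by norm_num)
    have htop2 : (∑' i:ℕ, ENNReal.ofReal ρ ^ i) = ⊤ := by
      rw [← top_le_iff, ← htop]
      exact ENNReal.tsum_le_tsum (fun i => one_le_pow_of_one_le' h1 i)
    rw [htop2, ENNReal.mul_top ?_]
    · exact le_top
    · intro h
      rw [ENNReal.ofReal_eq_zero] at h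
      linarith
end

section
/- The expected survival time is not monotone in the interval lengths: there exist a trap configuration ω^{(1)} and an index k ≥ 1 such that, if ω^{(2)} denotes the trap configuration obtained from ω^{(1)} by lengthening the k-th interval by one site (all other interval lengths unchanged), then 𝔼[τ^{(2)}] < 𝔼[τ^{(1)}]. -/
open MeasureTheory ENNReal Set

noncomputable section NMall
set_option linter.unusedSectionVars false

namespace NM

/-- live-to-live transition kernel -/
def TT (ω : ℕ → Bool) (x y : ℕ) : ℝ≥0∞ := ENNReal.ofReal (transProb ω (some x) (some y))

def vv (ω : ℕ → Bool) : ℕ → ℕ → ℝ≥0∞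
  | 0 => fun _ => 1
  | n + 1 => fun x => ∑' y, TT ω x y * vv ω n y

def nn (ω : ℕ → Bool) : ℕ → ℕ → ℝ≥0∞
  | 0 => fun x => if x = 0 then 1 else 0
  | k + 1 => fun y => ∑' x, nn ω k x * TT ω x y

def FF (ω : ℕ → Bool) : ℝ≥0∞ := ∑' k, vv ω k 0

lemma vv_zero (ω : ℕ → Bool) (x : ℕ) : vv ω 0 x = 1 := rfl

lemma vv_succ (ω : ℕ → Bool) (n x : ℕ) : vv ω (n + 1) x = ∑' y, TT ω x y * vv ω n y := rfl

lemma nn_succ (ω : ℕ → Bool) (k y : ℕ) : nn ω (k + 1) y = ∑' x, nn ω k x * TT ω x y := rfl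

lemma nn_zero (ω : ℕ → Bool) (x : ℕ) : nn ω 0 x = if x = 0 then 1 else 0 := rfl

lemma TT_eq_zero {ω : ℕ → Bool} {x y : ℕ} (h1 : y ≠ x - 1) (h2 : y ≠ x + 1) :
    TT ω x y = 0 := by
  rcases eq_or_ne x 0 with rfl | hx
  · have hy : y ≠ 1 := h2
    simp [TT, transProb, hy]
  · have : ¬ (y = x - 1 ∨ y = x + 1) := by tauto
    rcases hb : ω x with _ | _ <;> simp [TT, transProb, hx, hb, this]

lemma tsum_TT (ω : ℕ → Bool) (x : ℕ) (f : ℕ → ℝ≥0∞) :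
    ∑' y, TT ω x y * f y = TT ω x (x - 1) * f (x - 1) + TT ω x (x + 1) * f (x + 1) := by
  rw [tsum_eq_sum (s := {x - 1, x + 1}) ?_]
  · rw [Finset.sum_insert (by simp only [Finset.mem_singleton]; omega), Finset.sum_singleton]
  · intro b hb
    simp only [Finset.mem_insert, Finset.mem_singleton] at hb
    push_neg at hb
    rw [TT_eq_zero hb.1 hb.2, zero_mul]

lemma TT_zero_zero (ω : ℕ → Bool) : TT ω 0 0 = 0 := by norm_num [TT, transProb]

lemma TT_zero_one (ω : ℕ → Bool) : TT ω 0 1 = ENNReal.ofReal (2 / 3) := by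
  norm_num [TT, transProb]

lemma TT_trap_left {ω : ℕ → Bool} {x : ℕ} (hx : x ≠ 0) (h : ω x = true) :
    TT ω x (x - 1) = ENNReal.ofReal (1 / 3) := by simp [TT, transProb, hx, h]

lemma TT_trap_right {ω : ℕ → Bool} {x : ℕ} (hx : x ≠ 0) (h : ω x = true) :
    TT ω x (x + 1) = ENNReal.ofReal (1 / 3) := by simp [TT, transProb, hx, h]

lemma TT_free_left {ω : ℕ → Bool} {x : ℕ} (hx : x ≠ 0) (h : ω x = false) :
    TT ω x (x - 1) = ENNReal.ofReal (1 / 2) := by simp [TT, transProb, hx, h]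

lemma TT_free_right {ω : ℕ → Bool} {x : ℕ} (hx : x ≠ 0) (h : ω x = false) :
    TT ω x (x + 1) = ENNReal.ofReal (1 / 2) := by simp [TT, transProb, hx, h]

/-- discretized one-step operator on rational profiles -/
def PhiQ (ω : ℕ → Bool) (w : ℕ → ℚ) (x : ℕ) : ℚ :=
  if x = 0 then 1 + 2/3 * w 1
  else if ω x = true then 1 + 1/3 * (w (x - 1) + w (x + 1))
  else 1 + 1/2 * (w (x - 1) + w (x + 1))

lemma bridge (ω : ℕ → Bool) (w : ℕ → ℚ) (hw : ∀ x, 0 ≤ w x) (x : ℕ) :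
    1 + ∑' y, TT ω x y * ENNReal.ofReal (w y) = ENNReal.ofReal (PhiQ ω w x) := by
  have hw' : ∀ y : ℕ, (0 : ℝ) ≤ (w y : ℝ) := fun y => by exact_mod_cast hw y
  rw [tsum_TT]
  rcases eq_or_ne x 0 with rfl | hx
  · rw [TT_zero_zero, TT_zero_one, zero_mul, zero_add, PhiQ, if_pos rfl,
      ← ENNReal.ofReal_mul (by norm_num), ← ENNReal.ofReal_one,
      ← ENNReal.ofReal_add (by norm_num) (by
        have := hw' 1; positivity)]
    congr 1; push_cast; ring
  · rcases hb : ω x with _ | _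
    · rw [TT_free_left hx hb, TT_free_right hx hb, PhiQ, if_neg hx, hb,
        ← ENNReal.ofReal_mul (by norm_num), ← ENNReal.ofReal_mul (by norm_num),
        ← ENNReal.ofReal_add (by have := hw' (x-1); positivity) (by have := hw' (x+1); positivity),
        ← ENNReal.ofReal_one,
        ← ENNReal.ofReal_add (by norm_num) (by have := hw' (x-1); have := hw' (x+1); positivity)]
      · congr 1; push_cast; ring
    · rw [TT_trap_left hx hb, TT_trap_right hx hb, PhiQ, if_neg hx, hb, if_pos rfl,
        ← ENNReal.ofReal_mul (by norm_num), ← ENNReal.ofReal_mul (by norm_num),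
        ← ENNReal.ofReal_add (by have := hw' (x-1); positivity) (by have := hw' (x+1); positivity),
        ← ENNReal.ofReal_one,
        ← ENNReal.ofReal_add (by norm_num) (by have := hw' (x-1); have := hw' (x+1); positivity)]
      congr 1; push_cast; ring

lemma u_succ (ω : ℕ → Bool) (n x : ℕ) :
    ∑ k ∈ Finset.range (n + 1), vv ω k x
      = 1 + ∑' y, TT ω x y * ∑ k ∈ Finset.range n, vv ω k y := by
  rw [Finset.sum_range_succ']
  simp only [vv_succ, vv_zero]
  rw [add_comm, ← Summable.tsum_finsetSum (fun i _ => ENNReal.summable)]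
  congr 1
  refine tsum_congr fun y => ?_
  rw [Finset.mul_sum]

lemma partial_le (ω : ℕ → Bool) (h : ℕ → ℝ≥0∞)
    (hh : ∀ x, 1 + ∑' y, TT ω x y * h y ≤ h x) :
    ∀ n x, ∑ k ∈ Finset.range n, vv ω k x ≤ h x := by
  intro n
  induction n with
  | zero => intro x; simp
  | succ n ih =>
    intro x
    rw [u_succ]
    refine le_trans ?_ (hh x)
    exact add_le_add_right (ENNReal.tsum_le_tsum fun y => mul_le_mul_right (ih y) _) 1

lemma FF_le (ω : ℕ → Bool) (h : ℕ → ℝ≥0∞)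
    (hh : ∀ x, 1 + ∑' y, TT ω x y * h y ≤ h x) : FF ω ≤ h 0 := by
  rw [FF, ENNReal.tsum_eq_iSup_sum]
  refine iSup_le fun s => ?_
  obtain ⟨n, hn⟩ := s.exists_nat_subset_range
  calc ∑ k ∈ s, vv ω k 0 ≤ ∑ k ∈ Finset.range n, vv ω k 0 :=
        Finset.sum_le_sum_of_subset hn
    _ ≤ h 0 := partial_le ω h hh n 0

lemma le_FF (ω : ℕ → Bool) (g : ℕ → ℝ≥0∞) (C : ℝ≥0∞) (hC : C ≠ ⊤)
    (hgC : ∀ x, g x ≤ C) (hg : ∀ x, g x ≤ 1 + ∑' y, TT ω x y * g y)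
    (hfin : FF ω ≠ ⊤) : g 0 ≤ FF ω := by
  have key : ∀ n x, g x ≤ (∑ k ∈ Finset.range n, vv ω k x) + C * vv ω n x := by
    intro n
    induction n with
    | zero => intro x; simpa [vv_zero] using hgC x
    | succ n ih =>
      intro x
      calc g x ≤ 1 + ∑' y, TT ω x y * g y := hg x
        _ ≤ 1 + ∑' y, TT ω x y * ((∑ k ∈ Finset.range n, vv ω k y) + C * vv ω n y) := by
            exact add_le_add_right (ENNReal.tsum_le_tsum fun y => mul_le_mul_right (ih y) _) 1
        _ = (1 + ∑' y, TT ω x y * ∑ k ∈ Finset.range n, vv ω k y)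
              + C * ∑' y, TT ω x y * vv ω n y := by
            have : ∀ y, TT ω x y * ((∑ k ∈ Finset.range n, vv ω k y) + C * vv ω n y)
                = TT ω x y * (∑ k ∈ Finset.range n, vv ω k y) + C * (TT ω x y * vv ω n y) := by
              intro y; rw [mul_add]; ring
            simp only [this]
            rw [ENNReal.tsum_add, ENNReal.tsum_mul_left, add_assoc]
        _ = (∑ k ∈ Finset.range (n + 1), vv ω k x) + C * vv ω (n + 1) x := by
            rw [u_succ, vv_succ]
  refine ENNReal.le_of_forall_pos_le_add fun ε hε hlt => ?_
  have hv0 : Filter.Tendsto (fun n => vv ω n 0) Filter.atTop (nhds 0) :=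
    ENNReal.tendsto_atTop_zero_of_tsum_ne_top hfin
  have hv1 : Filter.Tendsto (fun n => C * vv ω n 0) Filter.atTop (nhds 0) := by
    have := ENNReal.Tendsto.const_mul hv0 (Or.inr hC)
    simpa using this
  have hev : ∀ᶠ n in Filter.atTop, C * vv ω n 0 < (ε : ℝ≥0∞) :=
    hv1.eventually_lt_const (by exact_mod_cast hε)
  obtain ⟨n, hn⟩ := hev.exists
  calc g 0 ≤ (∑ k ∈ Finset.range n, vv ω k 0) + C * vv ω n 0 := key n 0
    _ ≤ FF ω + ε := add_le_add (ENNReal.sum_le_tsum _) hn.le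

end NM
section PartA
namespace NM

lemma nn_mul_vv (ω : ℕ → Bool) : ∀ k m : ℕ, ∑' x, nn ω k x * vv ω m x = vv ω (k + m) 0 := by
  intro k
  induction k with
  | zero =>
    intro m
    rw [zero_add, tsum_eq_single 0 (by intro b hb; rw [nn_zero, if_neg hb, zero_mul])]
    rw [nn_zero, if_pos rfl, one_mul]
  | succ k ih =>
    intro m
    have h1 : ∑' x, nn ω (k + 1) x * vv ω m x
        = ∑' (x : ℕ) (z : ℕ), nn ω k z * TT ω z x * vv ω m x := by
      refine tsum_congr fun x => ?_
      rw [nn_succ, ENNReal.tsum_mul_right]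
    rw [h1, ENNReal.tsum_comm]
    have h2 : ∀ z : ℕ, ∑' (x : ℕ), nn ω k z * TT ω z x * vv ω m x
        = nn ω k z * vv ω (m + 1) z := by
      intro z
      rw [vv_succ, ← ENNReal.tsum_mul_left]
      exact tsum_congr fun x => by ring
    calc ∑' (z : ℕ) (x : ℕ), nn ω k z * TT ω z x * vv ω m x
        = ∑' z, nn ω k z * vv ω (m + 1) z := tsum_congr h2
      _ = vv ω (k + (m + 1)) 0 := ih (m + 1)
      _ = vv ω (k + 1 + m) 0 := by ring_nf
    
lemma nn_sum (ω : ℕ → Bool) (k : ℕ) : ∑' x, nn ω k x = vv ω k 0 := by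
  have := nn_mul_vv ω k 0
  simpa [vv_zero] using this

section Walk

variable {Ω : Type*} [MeasurableSpace Ω] (S : ℕ → Ω → Option ℕ)

def EkS (k x : ℕ) : Set Ω := {a | (∀ j ≤ k, S j a ≠ none) ∧ S k a = some x}

def AkS (k : ℕ) : Set Ω := {a | ∀ j ≤ k, S j a ≠ none}

def CylS (k : ℕ) (q : ℕ → ℕ) : Set Ω := {a | ∀ i ≤ k, S i a = some (q i)}

def extF (k : ℕ) (p : Fin k → ℕ) (x : ℕ) : ℕ → ℕ := fun i => if h : i < k then p ⟨i, h⟩ else x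

variable (hm : ∀ (n : ℕ) (y : Option ℕ), MeasurableSet {a | S n a = y})

include hm in
lemma meas_Cyl (k : ℕ) (q : ℕ → ℕ) : MeasurableSet (CylS S k q) := by
  have : CylS S k q = ⋂ (i : ℕ) (_ : i ≤ k), {a | S i a = some (q i)} := by
    ext a; simp [CylS]
  rw [this]
  exact MeasurableSet.iInter fun i => MeasurableSet.iInter fun _ => hm i _

include hm in
lemma meas_Ek (k x : ℕ) : MeasurableSet (EkS S k x) := by
  have : EkS S k x
      = (⋂ (j : ℕ) (_ : j ≤ k), {a | S j a = none}ᶜ) ∩ {a | S k a = some x} := by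
    ext a; simp [EkS]
  rw [this]
  exact ((MeasurableSet.iInter fun j => MeasurableSet.iInter
    fun _ => (hm j none).compl).inter (hm k (some x)))

include hm in
lemma meas_Ak (k : ℕ) : MeasurableSet (AkS S k) := by
  have : AkS S k = ⋂ (j : ℕ) (_ : j ≤ k), {a | S j a = none}ᶜ := by
    ext a; simp [AkS]
  rw [this]
  exact MeasurableSet.iInter fun j => MeasurableSet.iInter fun _ => (hm j none).compl

lemma extF_self (k : ℕ) (p : Fin k → ℕ) (x : ℕ) : extF k p x k = x := by
  simp [extF]

lemma Ek_eq_iUnion (k x : ℕ) : EkS S k x = ⋃ p : Fin k → ℕ, CylS S k (extF k p x) := by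
  ext a
  constructor
  · rintro ⟨halive, hend⟩
    refine Set.mem_iUnion.mpr ⟨fun i => (S i a).getD 0, fun i hi => ?_⟩
    rcases lt_or_eq_of_le hi with h | h
    · obtain ⟨z, hz⟩ := Option.ne_none_iff_exists'.mp (halive i hi)
      simp [extF, h, hz]
    · subst h
      rw [extF_self, hend]
  · intro hmem
    obtain ⟨p, hp⟩ := Set.mem_iUnion.mp hmem
    refine ⟨fun j hj => by rw [hp j hj]; simp, ?_⟩
    have := hp k le_rfl
    rwa [extF_self] at this

lemma Cyl_disj (k x : ℕ) :
    Pairwise (Function.onFun Disjoint fun p : Fin k → ℕ => CylS S k (extF k p x)) := by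
  intro p q hpq
  refine Set.disjoint_left.mpr fun a hp hq => hpq ?_
  funext i
  have h1 := hp i (le_of_lt i.isLt)
  have h2 := hq i (le_of_lt i.isLt)
  rw [h1] at h2
  have h3 : extF k p x i = extF k q x i := by injection h2
  simpa [extF, i.isLt] using h3

include hm in
lemma P_Ek_decomp (P : MeasureTheory.Measure Ω) (k x : ℕ) :
    P (EkS S k x) = ∑' p : Fin k → ℕ, P (CylS S k (extF k p x)) := by
  rw [Ek_eq_iUnion, measure_iUnion (Cyl_disj S k x) fun p => meas_Cyl S hm k _]

end Walk

end NM
end PartA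
section PartA2
namespace NM

section Walk2

variable {Ω : Type*} [MeasurableSpace Ω] (P : MeasureTheory.Measure Ω)
  (S : ℕ → Ω → Option ℕ) (ω : ℕ → Bool)

lemma P_Ek_step (hTR : IsTrappedRW ω P S) (k x y : ℕ) :
    P (EkS S k x ∩ {a | S (k + 1) a = some y}) = TT ω x y * P (EkS S k x) := by
  obtain ⟨hP, hm, hinit, hMarkov⟩ := hTR
  have disj2 : Pairwise (Function.onFun Disjoint fun p : Fin k → ℕ =>
      CylS S k (extF k p x) ∩ {a | S (k + 1) a = some y}) :=
    fun p q h => ((Cyl_disj S k x) h).mono Set.inter_subset_left Set.inter_subset_left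
  calc P (EkS S k x ∩ {a | S (k + 1) a = some y})
      = P (⋃ p : Fin k → ℕ, CylS S k (extF k p x) ∩ {a | S (k + 1) a = some y}) := by
        rw [Ek_eq_iUnion, Set.iUnion_inter]
    _ = ∑' p : Fin k → ℕ, P (CylS S k (extF k p x) ∩ {a | S (k + 1) a = some y}) :=
        measure_iUnion disj2 fun p => (meas_Cyl S hm k _).inter (hm (k + 1) (some y))
    _ = ∑' p : Fin k → ℕ, TT ω x y * P (CylS S k (extF k p x)) := by
        refine tsum_congr fun p => ?_
        have hM := hMarkov k (fun i => some (extF k p x i)) (some y)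
        have e2 : extF k p x k = x := extF_self k p x
        rw [e2] at hM
        exact hM
    _ = TT ω x y * ∑' p : Fin k → ℕ, P (CylS S k (extF k p x)) := ENNReal.tsum_mul_left
    _ = TT ω x y * P (EkS S k x) := by rw [← P_Ek_decomp S hm P]

lemma Ek_succ_eq (k y : ℕ) :
    EkS S (k + 1) y = ⋃ x : ℕ, (EkS S k x ∩ {a | S (k + 1) a = some y}) := by
  ext a
  constructor
  · rintro ⟨hal, hend⟩
    obtain ⟨x, hx⟩ := Option.ne_none_iff_exists'.mp (hal k (Nat.le_succ k))
    exact Set.mem_iUnion.mpr ⟨x, ⟨⟨fun j hj => hal j (le_trans hj (Nat.le_succ k)), hx⟩, hend⟩⟩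
  · intro h
    obtain ⟨x, ⟨⟨hal, _⟩, hnext⟩⟩ := Set.mem_iUnion.mp h
    refine ⟨fun j hj => ?_, hnext⟩
    rcases eq_or_lt_of_le hj with h' | h'
    · subst h'; rw [hnext]; simp
    · exact hal j (Nat.lt_succ_iff.mp h')
  
lemma Ek_inter_disj (k y : ℕ) :
    Pairwise (Function.onFun Disjoint fun x : ℕ => EkS S k x ∩ {a | S (k + 1) a = some y}) := by
  intro x x' hxx
  refine Set.disjoint_left.mpr fun a ha ha' => hxx ?_
  obtain ⟨⟨_, hx⟩, _⟩ := ha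
  obtain ⟨⟨_, hx'⟩, _⟩ := ha'
  rw [hx] at hx'
  injection hx'

lemma P_Ek_eq_nn (hTR : IsTrappedRW ω P S) (k x : ℕ) : P (EkS S k x) = nn ω k x := by
  obtain ⟨hP, hm, hinit, hMarkov⟩ := hTR
  induction k generalizing x with
  | zero =>
    have hE : EkS S 0 x = {a | S 0 a = some x} := by
      ext a
      constructor
      · exact fun h => h.2
      · intro h
        exact ⟨fun j hj => by rw [Nat.le_zero.mp hj, h]; simp, h⟩
    rw [hE]
    rcases eq_or_ne x 0 with rfl | hx
    · rw [hinit, nn_zero, if_pos rfl]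
    · have hsub : {a | S 0 a = some x} ⊆ {a | S 0 a = some 0}ᶜ := by
        intro a ha h0
        simp only [Set.mem_setOf_eq] at ha h0
        rw [ha] at h0
        exact hx (by injection h0)
      have h0 : P {a | S 0 a = some 0}ᶜ = 0 := by
        haveI := hP
        rw [measure_compl (hm 0 (some 0)) (MeasureTheory.measure_ne_top P _), hinit,
          MeasureTheory.measure_univ, tsub_self]
      have : P {a | S 0 a = some x} = 0 := MeasureTheory.measure_mono_null hsub h0
      rw [this, nn_zero, if_neg hx]
  | succ k ih =>
    rw [Ek_succ_eq, measure_iUnion (Ek_inter_disj S k x)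
      (fun z => (meas_Ek S hm k z).inter (hm (k + 1) (some x))), nn_succ]
    refine tsum_congr fun z => ?_
    rw [P_Ek_step P S ω ⟨hP, hm, hinit, hMarkov⟩ k z x, ih, mul_comm]

lemma P_Ak_eq_vv (hTR : IsTrappedRW ω P S) (k : ℕ) : P (AkS S k) = vv ω k 0 := by
  obtain ⟨hP, hm, hinit, hMarkov⟩ := hTR
  have hA : AkS S k = ⋃ x : ℕ, EkS S k x := by
    ext a
    constructor
    · intro hal
      obtain ⟨x, hx⟩ := Option.ne_none_iff_exists'.mp (hal k le_rfl)
      exact Set.mem_iUnion.mpr ⟨x, hal, hx⟩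
    · intro h
      obtain ⟨x, hx⟩ := Set.mem_iUnion.mp h
      exact hx.1
  have disj : Pairwise (Function.onFun Disjoint fun x : ℕ => EkS S k x) := by
    intro x x' hxx
    refine Set.disjoint_left.mpr fun a ha ha' => hxx ?_
    obtain ⟨_, hx⟩ := ha
    obtain ⟨_, hx'⟩ := ha'
    rw [hx] at hx'
    injection hx'
  rw [hA, measure_iUnion disj fun x => meas_Ek S hm k x, ← nn_sum ω k]
  exact tsum_congr fun x => P_Ek_eq_nn P S ω ⟨hP, hm, hinit, hMarkov⟩ k x

lemma mem_Ak_iff (k : ℕ) (a : Ω) : a ∈ AkS S k ↔ (k : ℕ∞) < survivalTime S a := by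
  constructor
  · intro hal
    have h1 : ((k : ℕ) + 1 : ℕ∞) ≤ survivalTime S a := by
      refine le_sInf fun t ht => ?_
      obtain ⟨k', rfl, hk'⟩ := ht
      have hlt : k < k' := by
        by_contra hcon
        push_neg at hcon
        exact hal k' hcon hk'
      exact_mod_cast hlt
    refine lt_of_lt_of_le ?_ h1
    exact_mod_cast Nat.lt_succ_self k
  · intro hlt j hj hnone
    have h1 : survivalTime S a ≤ (j : ℕ∞) := sInf_le ⟨j, rfl, hnone⟩
    have h2 : survivalTime S a ≤ (k : ℕ∞) := h1.trans (by exact_mod_cast hj)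
    exact absurd hlt (not_lt.mpr h2)

lemma enat_coe_eq (t : ℕ∞) :
    (t : ℝ≥0∞) = ∑' k : ℕ, if (k : ℕ∞) < t then (1 : ℝ≥0∞) else 0 := by
  induction t using ENat.recTopCoe with
  | top =>
    have h1 : ∀ k : ℕ, (if (k : ℕ∞) < (⊤ : ℕ∞) then (1 : ℝ≥0∞) else 0) = 1 :=
      fun k => if_pos (WithTop.coe_lt_top k)
    rw [tsum_congr h1, ENNReal.tsum_const_eq_top_of_ne_zero one_ne_zero]
    exact ENat.toENNReal_top
  | coe n =>
    have h1 : ∀ b : ℕ, b ∉ Finset.range n → (if (b : ℕ∞) < (n : ℕ∞) then (1 : ℝ≥0∞) else 0) = 0 := by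
      intro b hb
      rw [if_neg]
      intro h
      exact hb (Finset.mem_range.mpr (by exact_mod_cast h))
    rw [tsum_eq_sum h1]
    have h2 : ∀ b ∈ Finset.range n, (if (b : ℕ∞) < (n : ℕ∞) then (1 : ℝ≥0∞) else 0) = 1 := by
      intro b hb
      rw [if_pos (by exact_mod_cast Finset.mem_range.mp hb)]
    rw [Finset.sum_congr rfl h2, Finset.sum_const, Finset.card_range]
    simp

theorem expSurvival_eq (hTR : IsTrappedRW ω P S) : expSurvival P S = FF ω := by
  obtain ⟨hP, hm, hinit, hMarkov⟩ := hTR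
  rw [expSurvival]
  have step1 : ∀ a : Ω, ((survivalTime S a : ℕ∞) : ℝ≥0∞)
      = ∑' k : ℕ, Set.indicator (AkS S k) (fun _ => (1 : ℝ≥0∞)) a := by
    intro a
    classical
    rw [enat_coe_eq]
    refine tsum_congr fun k => ?_
    rw [Set.indicator_apply]
    by_cases h : a ∈ AkS S k
    · rw [if_pos h, if_pos ((mem_Ak_iff S k a).mp h)]
    · rw [if_neg h, if_neg (fun hc => h ((mem_Ak_iff S k a).mpr hc))]
  calc ∫⁻ a, ((survivalTime S a : ℕ∞) : ℝ≥0∞) ∂P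
      = ∫⁻ a, ∑' k : ℕ, Set.indicator (AkS S k) (fun _ => (1 : ℝ≥0∞)) a ∂P :=
        MeasureTheory.lintegral_congr step1
    _ = ∑' k : ℕ, ∫⁻ a, Set.indicator (AkS S k) (fun _ => (1 : ℝ≥0∞)) a ∂P :=
        MeasureTheory.lintegral_tsum fun k =>
          ((measurable_const.indicator (meas_Ak S hm k)).aemeasurable)
    _ = ∑' k : ℕ, P (AkS S k) := by
        refine tsum_congr fun k => ?_
        rw [MeasureTheory.lintegral_indicator_const (meas_Ak S hm k), one_mul]
    _ = ∑' k : ℕ, vv ω k 0 :=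
        tsum_congr fun k => P_Ak_eq_vv P S ω ⟨hP, hm, hinit, hMarkov⟩ k
    _ = FF ω := rfl

end Walk2
end NM
end PartA2
end NMall
section PartC
namespace NM

def om1 : ℕ → Bool := fun x => decide (x ≤ 1 ∨ 27 ≤ x)

def om2 : ℕ → Bool := fun x => decide (x = 0 ∨ x = 2 ∨ 28 ≤ x)

def gQ : ℕ → ℚ := fun x =>
  if x = 0 then 28733/1861 else
  if x = 1 then 40308/1861 else
  if x = 2 then 86608/1861 else
  if x = 3 then 129186/1861 else
  if x = 4 then 168042/1861 else
  if x = 5 then 203176/1861 else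
  if x = 6 then 234588/1861 else
  if x = 7 then 262278/1861 else
  if x = 8 then 286246/1861 else
  if x = 9 then 306492/1861 else
  if x = 10 then 323016/1861 else
  if x = 11 then 335818/1861 else
  if x = 12 then 344898/1861 else
  if x = 13 then 350256/1861 else
  if x = 14 then 351892/1861 else
  if x = 15 then 349806/1861 else
  if x = 16 then 343998/1861 else
  if x = 17 then 334468/1861 else
  if x = 18 then 321216/1861 else
  if x = 19 then 304242/1861 else
  if x = 20 then 283546/1861 else
  if x = 21 then 259128/1861 else
  if x = 22 then 230988/1861 else
  if x = 23 then 199126/1861 else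
  if x = 24 then 163542/1861 else
  if x = 25 then 124236/1861 else
  if x = 26 then 81208/1861 else
  if x = 27 then 34458/1861 else
  if x = 28 then 16583/1861 else
  if x = 29 then 9708/1861 else
  if x = 30 then 6958/1861 else
  3

def h2Q : ℕ → ℚ := fun x =>
  if x = 0 then 67660/4661 else
  if x = 1 then 188997/9322 else
  if x = 2 then 112015/4661 else
  if x = 3 then 455127/9322 else
  if x = 4 then 333790/4661 else
  if x = 5 then 861389/9322 else
  if x = 6 then 518277/4661 else
  if x = 7 then 1193075/9322 else
  if x = 8 then 665476/4661 else
  if x = 9 then 1450185/9322 else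
  if x = 10 then 775387/4661 else
  if x = 11 then 1632719/9322 else
  if x = 12 then 848010/4661 else
  if x = 13 then 29503/158 else
  if x = 14 then 883345/4661 else
  if x = 15 then 1774059/9322 else
  if x = 16 then 881392/4661 else
  if x = 17 then 21935/118 else
  if x = 18 then 842151/4661 else
  if x = 19 then 1617095/9322 else
  if x = 20 then 765622/4661 else
  if x = 21 then 1426749/9322 else
  if x = 22 then 651805/4661 else
  if x = 23 then 1161827/9322 else
  if x = 24 then 500700/4661 else
  if x = 25 then 822329/9322 else
  if x = 26 then 312307/4661 else
  if x = 27 then 408255/9322 else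
  if x = 28 then 86626/4661 else
  if x = 29 then 83535/9322 else
  if x = 30 then 49387/9322 else
  if x = 31 then 18330/4661 else
  3 + (1/2 : ℚ) ^ (x - 31)

def h1Q : ℕ → ℚ := fun x =>
  if x = 0 then 57467/3722 else
  if x = 1 then 161235/7444 else
  if x = 2 then 346439/7444 else
  if x = 3 then 516755/7444 else
  if x = 4 then 672183/7444 else
  if x = 5 then 812723/7444 else
  if x = 6 then 938375/7444 else
  if x = 7 then 1049139/7444 else
  if x = 8 then 1145015/7444 else
  if x = 9 then 1226003/7444 else
  if x = 10 then 1292103/7444 else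
  if x = 11 then 1343315/7444 else
  if x = 12 then 1379639/7444 else
  if x = 13 then 1401075/7444 else
  if x = 14 then 1407623/7444 else
  if x = 15 then 1399283/7444 else
  if x = 16 then 1376055/7444 else
  if x = 17 then 1337939/7444 else
  if x = 18 then 1284935/7444 else
  if x = 19 then 1217043/7444 else
  if x = 20 then 1134263/7444 else
  if x = 21 then 1036595/7444 else
  if x = 22 then 924039/7444 else
  if x = 23 then 796595/7444 else
  if x = 24 then 654263/7444 else
  if x = 25 then 497043/7444 else
  if x = 26 then 324935/7444 else
  if x = 27 then 137939/7444 else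
  if x = 28 then 33275/3722 else
  if x = 29 then 39379/7444 else
  if x = 30 then 29255/7444 else
  3 + (1/2 : ℚ) ^ (x - 30)

lemma gQ_tail (x : ℕ) (h : 31 ≤ x) : gQ x = 3 := by
  simp only [gQ]
  repeat rw [if_neg (by omega)]

lemma h2Q_tail (x : ℕ) (h : 32 ≤ x) : h2Q x = 3 + (1/2 : ℚ) ^ (x - 31) := by
  simp only [h2Q]
  repeat rw [if_neg (by omega)]

lemma h1Q_tail (x : ℕ) (h : 31 ≤ x) : h1Q x = 3 + (1/2 : ℚ) ^ (x - 30) := by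
  simp only [h1Q]
  repeat rw [if_neg (by omega)]

lemma om1_tail (x : ℕ) (h : 27 ≤ x) : om1 x = true := by
  simp only [om1, decide_eq_true_eq]
  omega

lemma om2_tail (x : ℕ) (h : 28 ≤ x) : om2 x = true := by
  simp only [om2, decide_eq_true_eq]
  omega

lemma gQ_nonneg : ∀ x, 0 ≤ gQ x := by
  intro x
  rcases lt_or_ge x 31 with h | h
  · interval_cases x <;> norm_num [gQ]
  · rw [gQ_tail x h]; norm_num

lemma h2Q_nonneg : ∀ x, 0 ≤ h2Q x := by
  intro x
  rcases lt_or_ge x 32 with h | h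
  · interval_cases x <;> norm_num [h2Q]
  · rw [h2Q_tail x h]; positivity

lemma h1Q_nonneg : ∀ x, 0 ≤ h1Q x := by
  intro x
  rcases lt_or_ge x 31 with h | h
  · interval_cases x <;> norm_num [h1Q]
  · rw [h1Q_tail x h]; positivity

lemma gQ_bound : ∀ x, gQ x ≤ 200 := by
  intro x
  rcases lt_or_ge x 31 with h | h
  · interval_cases x <;> norm_num [gQ]
  · rw [gQ_tail x h]; norm_num

lemma gQ_sub : ∀ x, gQ x ≤ PhiQ om1 gQ x := by
  intro x
  rcases lt_or_ge x 32 with h | h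
  · interval_cases x <;> norm_num [gQ, PhiQ, om1]
  · have e0 : gQ (x - 1) = 3 := gQ_tail _ (by omega)
    have e1 : gQ x = 3 := gQ_tail _ (by omega)
    have e2 : gQ (x + 1) = 3 := gQ_tail _ (by omega)
    rw [PhiQ, if_neg (by omega), if_pos (om1_tail x (by omega)), e0, e1, e2]
    norm_num

lemma h2Q_sup : ∀ x, PhiQ om2 h2Q x ≤ h2Q x := by
  intro x
  rcases lt_or_ge x 32 with h | h
  · interval_cases x <;> norm_num [h2Q, PhiQ, om2]
  · rcases eq_or_lt_of_le h with h' | h'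
    · subst h'
      norm_num [h2Q, PhiQ, om2]
    · -- x ≥ 33
      obtain ⟨n, rfl⟩ : ∃ n, x = n + 33 := ⟨x - 33, by omega⟩
      have e0 : h2Q (n + 33 - 1) = 3 + (1/2 : ℚ) ^ (n + 1) := by
        rw [h2Q_tail _ (by omega)]
        congr 2
      have e1 : h2Q (n + 33) = 3 + (1/2 : ℚ) ^ (n + 2) := by
        rw [h2Q_tail _ (by omega)]
        congr 2
      have e2 : h2Q (n + 33 + 1) = 3 + (1/2 : ℚ) ^ (n + 3) := by
        rw [h2Q_tail _ (by omega)]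
        congr 2
      rw [PhiQ, if_neg (by omega), if_pos (om2_tail _ (by omega)), e0, e1, e2,
        pow_add, pow_add, pow_add]
      have hp : (0:ℚ) ≤ (1/2 : ℚ) ^ n := by positivity
      nlinarith [hp]

lemma h1Q_sup : ∀ x, PhiQ om1 h1Q x ≤ h1Q x := by
  intro x
  rcases lt_or_ge x 31 with h | h
  · interval_cases x <;> norm_num [h1Q, PhiQ, om1]
  · rcases eq_or_lt_of_le h with h' | h'
    · subst h'
      norm_num [h1Q, PhiQ, om1]
    · obtain ⟨n, rfl⟩ : ∃ n, x = n + 32 := ⟨x - 32, by omega⟩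
      have e0 : h1Q (n + 32 - 1) = 3 + (1/2 : ℚ) ^ (n + 1) := by
        rw [h1Q_tail _ (by omega)]
        congr 2
      have e1 : h1Q (n + 32) = 3 + (1/2 : ℚ) ^ (n + 2) := by
        rw [h1Q_tail _ (by omega)]
        congr 2
      have e2 : h1Q (n + 32 + 1) = 3 + (1/2 : ℚ) ^ (n + 3) := by
        rw [h1Q_tail _ (by omega)]
        congr 2
      rw [PhiQ, if_neg (by omega), if_pos (om1_tail _ (by omega)), e0, e1, e2,
        pow_add, pow_add, pow_add]
      have hp : (0:ℚ) ≤ (1/2 : ℚ) ^ n := by positivity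
      nlinarith [hp]

end NM
end PartC
section PartD
namespace NM

lemma FF_om1_ne_top : FF om1 ≠ ⊤ := by
  have hle : FF om1 ≤ ENNReal.ofReal ((h1Q 0 : ℝ)) := by
    refine FF_le om1 (fun x => ENNReal.ofReal ((h1Q x : ℝ))) fun x => ?_
    rw [bridge om1 h1Q h1Q_nonneg x]
    exact ENNReal.ofReal_le_ofReal (by exact_mod_cast h1Q_sup x)
  exact ne_top_of_le_ne_top ENNReal.ofReal_ne_top hle

lemma FF_om2_le : FF om2 ≤ ENNReal.ofReal ((h2Q 0 : ℝ)) := by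
  refine FF_le om2 (fun x => ENNReal.ofReal ((h2Q x : ℝ))) fun x => ?_
  rw [bridge om2 h2Q h2Q_nonneg x]
  exact ENNReal.ofReal_le_ofReal (by exact_mod_cast h2Q_sup x)

lemma le_FF_om1 : ENNReal.ofReal ((gQ 0 : ℝ)) ≤ FF om1 := by
  refine le_FF om1 (fun x => ENNReal.ofReal ((gQ x : ℝ))) (ENNReal.ofReal 200)
    ENNReal.ofReal_ne_top (fun x => ENNReal.ofReal_le_ofReal (by exact_mod_cast gQ_bound x))
    (fun x => ?_) FF_om1_ne_top
  rw [bridge om1 gQ gQ_nonneg x]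
  exact ENNReal.ofReal_le_ofReal (by exact_mod_cast gQ_sub x)

lemma FF_lt : FF om2 < FF om1 := by
  refine lt_of_le_of_lt FF_om2_le (lt_of_lt_of_le ?_ le_FF_om1)
  rw [ENNReal.ofReal_lt_ofReal_iff (by norm_num [gQ])]
  norm_num [gQ, h2Q]

lemma om1_trap : IsTrapConfig om1 := by
  constructor
  · decide
  · refine (Set.Ici_infinite 27).mono fun x hx => ?_
    simp only [Set.mem_setOf_eq, om1, decide_eq_true_eq]
    right
    exact hx

lemma om2_trap : IsTrapConfig om2 := by
  constructor
  · decide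
  · refine (Set.Ici_infinite 28).mono fun x hx => ?_
    simp only [Set.mem_setOf_eq, om2, decide_eq_true_eq]
    right; right
    exact hx

lemma om_len : IsLengthened om1 om2 1 := by
  have hloc : trapLoc om1 0 = 0 := by
    rw [trapLoc, Nat.nth_zero]
    refine Nat.sInf_eq_zero.mpr (Or.inl ?_)
    simp only [Set.mem_setOf_eq]
    decide
  refine ⟨?_, ?_, ?_⟩
  · intro x hx
    rw [show (1 : ℕ) - 1 = 0 from rfl, hloc] at hx
    have : x = 0 := Nat.le_zero.mp hx
    subst this
    decide
  · rw [show (1 : ℕ) - 1 = 0 from rfl, hloc]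
    decide
  · intro x hx
    rw [show (1 : ℕ) - 1 = 0 from rfl, hloc] at hx
    simp only [om1, om2]
    rw [decide_eq_decide]
    omega

end NM
end PartD


/-- non-monotonicity — lengthening a single interval by one site can strictly
decrease the expected survival time. -/
theorem expSurvival_not_monotone :
    ∃ (ω₁ ω₂ : ℕ → Bool) (k : ℕ), IsTrapConfig ω₁ ∧ IsTrapConfig ω₂ ∧ 1 ≤ k ∧
      IsLengthened ω₁ ω₂ k ∧
      ∀ (Ω₁ : Type) (_ : MeasurableSpace Ω₁) (P₁ : MeasureTheory.Measure Ω₁)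
        (S₁ : ℕ → Ω₁ → Option ℕ), IsTrappedRW ω₁ P₁ S₁ →
      ∀ (Ω₂ : Type) (_ : MeasurableSpace Ω₂) (P₂ : MeasureTheory.Measure Ω₂)
        (S₂ : ℕ → Ω₂ → Option ℕ), IsTrappedRW ω₂ P₂ S₂ →
        expSurvival P₂ S₂ < expSurvival P₁ S₁ := by
  refine ⟨NM.om1, NM.om2, 1, NM.om1_trap, NM.om2_trap, le_rfl, NM.om_len, ?_⟩
  intro Ω₁ m₁ P₁ S₁ h₁ Ω₂ m₂ P₂ S₂ h₂
  rw [@NM.expSurvival_eq Ω₂ m₂ P₂ S₂ NM.om2 h₂, @NM.expSurvival_eq Ω₁ m₁ P₁ S₁ NM.om1 h₁]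
  exact NM.FF_lt
end

section
/- Let m be a positive integer and let c be a positive real number such that (c·m)^{2^n − 1}·m is a positive integer for every n ≥ 1. Then c·m is a positive integer; equivalently, c = γ/m for some positive integer γ. -/
/-- if `(c m)^(2^n - 1) m` is a positive integer for every `n ≥ 1`, then
`c m` is a positive integer, i.e. `c = γ / m` for a positive integer `γ`. -/
theorem c_mul_eq_nat_of_forall_pow_int (m : ℕ) (hm : 0 < m) (c : ℝ) (hc : 0 < c)
    (h : ∀ n : ℕ, 1 ≤ n → ∃ N : ℕ, 0 < N ∧ (N : ℝ) = (c * m) ^ (2 ^ n - 1) * m) :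
    ∃ γ : ℕ, 0 < γ ∧ c * m = γ ∧ c = γ / m := by
  obtain ⟨N1, hN1pos, hN1⟩ := h 1 le_rfl
  have hN1' : (N1 : ℝ) = c * m * m := by rw [hN1]; norm_num
  -- key: for each n ≥ 1, with k = 2^n - 1, N1^k = Nn * m^(k-1)
  have key : ∀ n : ℕ, 1 ≤ n → ∃ Nn : ℕ, 0 < Nn ∧
      N1 ^ (2 ^ n - 1) = Nn * m ^ (2 ^ n - 1 - 1) := by
    intro n hn
    obtain ⟨Nn, hNnpos, hNn⟩ := h n hn
    refine ⟨Nn, hNnpos, ?_⟩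
    have hk : 1 ≤ 2 ^ n - 1 := by
      have h2 : 2 ≤ 2 ^ n := by
        calc 2 = 2 ^ 1 := by norm_num
        _ ≤ 2 ^ n := Nat.pow_le_pow_right (by norm_num) hn
      omega
    have hmk : (m : ℝ) ^ (2 ^ n - 1) = (m : ℝ) ^ (2 ^ n - 1 - 1) * m := by
      rw [← pow_succ]
      congr 1
      omega
    have hcast : ((N1 ^ (2 ^ n - 1) : ℕ) : ℝ) = ((Nn * m ^ (2 ^ n - 1 - 1) : ℕ) : ℝ) := by
      push_cast
      rw [hN1', hNn, mul_pow, hmk]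
      ring
    exact_mod_cast hcast
  have hdvd : m ∣ N1 := by
    rw [← Nat.factorization_le_iff_dvd hm.ne' hN1pos.ne']
    rw [Finsupp.le_def]
    intro p
    set a := m.factorization p with ha
    set b := N1.factorization p with hb
    obtain ⟨Nn, hNnpos, heq⟩ := key (a + 1) (by omega)
    set k := 2 ^ (a + 1) - 1 with hkdef
    have hka : a + 1 ≤ k := by
      have := Nat.lt_two_pow_self (n := a + 1)
      omega
    have hfact := congrArg (fun f => f p) (congrArg Nat.factorization heq)
    simp only [Nat.factorization_mul hNnpos.ne' (pow_ne_zero _ hm.ne'),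
      Nat.factorization_pow, Finsupp.add_apply, Finsupp.smul_apply, smul_eq_mul,
      ← ha, ← hb] at hfact
    -- hfact : k * b = Nn.factorization p + (k - 1) * a
    by_contra hba
    push_neg at hba
    have hk1 : k - 1 + 1 = k := by omega
    have h1 : (k - 1) * a + a = k * a := by
      rw [Nat.sub_one_mul, Nat.sub_add_cancel (Nat.le_mul_of_pos_left a (by omega))]
    have h2 : k * b + k ≤ k * a := by
      have := Nat.mul_le_mul_left k (show b + 1 ≤ a by omega)
      calc k * b + k = k * (b + 1) := by ring
        _ ≤ k * a := this
    have h3 : (k - 1) * a ≤ k * b := hfact ▸ Nat.le_add_left _ _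
    linarith
  obtain ⟨γ, hγ⟩ := hdvd
  have hγpos : 0 < γ := Nat.pos_of_ne_zero (by rintro rfl; simp at hγ; omega)
  have hmR : (0 : ℝ) < m := by exact_mod_cast hm
  have hγR : c * m = γ := by
    have hcast : (m : ℝ) * γ = c * m * m := by
      rw [← hN1']
      exact_mod_cast hγ.symm
    have := mul_left_cancel₀ hmR.ne' (by linarith [hcast] : (m : ℝ) * γ = m * (c * m))
    linarith [this]
  exact ⟨γ, hγpos, hγR, by rw [eq_div_iff hmR.ne']; exact hγR⟩
end
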